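/- arXiv:1102.5183 — 11 statements merged into one kernel-verified Lean document; each statement's English description precedes it below -/
import Mathlib

section
/- For every positive integer q, the bilinear bracket on the free complex vector space with basis {L_{α,i} : α ∈ ℤ, i ∈ ℤ_{≥0}} determined by [L_{α,i}, L_{β,j}] = (β(i+q) − α(j+q)) L_{α+β, i+j} is alternating and satisfies the Jacobi identity, hence endows this space with the structure of a complex Lie algebra B(q). -/
/-- The bilinear bracket on the free complex vector space with basis
`{L_{α,i} : α ∈ ℤ, i ∈ ℤ_{≥0}}` (realized as finitely supported functions `(ℤ × ℕ) →₀ ℂ`,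
where `L_{α,i}` is `Finsupp.single (α, i) 1`), determined on basis elements by
`[L_{α,i}, L_{β,j}] = (β(i+q) − α(j+q)) L_{α+β, i+j}`. -/
noncomputable def blockBracket (q : ℕ) (x y : (ℤ × ℕ) →₀ ℂ) : (ℤ × ℕ) →₀ ℂ :=
  x.sum fun p a => y.sum fun r b =>
    (a * b * (((r.1 * ((p.2 : ℤ) + q) - p.1 * ((r.2 : ℤ) + q)) : ℤ) : ℂ)) •
      Finsupp.single (p.1 + r.1, p.2 + r.2) (1 : ℂ)

private lemma bb_zero_left (q : ℕ) (y : (ℤ × ℕ) →₀ ℂ) : blockBracket q 0 y = 0 :=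
  Finsupp.sum_zero_index

private lemma bb_zero_right (q : ℕ) (x : (ℤ × ℕ) →₀ ℂ) : blockBracket q x 0 = 0 := by
  unfold blockBracket
  simp [Finsupp.sum_zero_index]

private lemma bb_smul_left (q : ℕ) (a : ℂ) (x y : (ℤ × ℕ) →₀ ℂ) :
    blockBracket q (a • x) y = a • blockBracket q x y := by
  unfold blockBracket
  rw [Finsupp.sum_smul_index' (by intro p; simp), Finsupp.smul_sum]
  refine Finsupp.sum_congr fun p hp => ?_
  rw [Finsupp.smul_sum]
  refine Finsupp.sum_congr fun r hr => ?_
  rw [smul_smul]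
  congr 1
  simp [smul_eq_mul]; ring

private lemma bb_smul_right (q : ℕ) (a : ℂ) (x y : (ℤ × ℕ) →₀ ℂ) :
    blockBracket q x (a • y) = a • blockBracket q x y := by
  unfold blockBracket
  rw [Finsupp.smul_sum]
  refine Finsupp.sum_congr fun p hp => ?_
  rw [Finsupp.sum_smul_index' (by intro r; simp), Finsupp.smul_sum]
  refine Finsupp.sum_congr fun r hr => ?_
  rw [smul_smul]
  congr 1
  simp [smul_eq_mul]; ring

private lemma bb_add_left (q : ℕ) (x₁ x₂ y : (ℤ × ℕ) →₀ ℂ) :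
    blockBracket q (x₁ + x₂) y = blockBracket q x₁ y + blockBracket q x₂ y := by
  unfold blockBracket
  rw [Finsupp.sum_add_index' (by intro p; simp) ?_]
  intro p c₁ c₂
  simp only [add_mul, add_smul, Finsupp.sum_add]

private lemma bb_add_right (q : ℕ) (x y₁ y₂ : (ℤ × ℕ) →₀ ℂ) :
    blockBracket q x (y₁ + y₂) = blockBracket q x y₁ + blockBracket q x y₂ := by
  unfold blockBracket
  rw [← Finsupp.sum_add]
  refine Finsupp.sum_congr fun p hp => ?_
  rw [Finsupp.sum_add_index' (by intro r; simp) ?_]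
  intro r c₁ c₂
  simp only [mul_add, add_mul, add_smul]

private lemma bb_single (q : ℕ) (p r : ℤ × ℕ) (a b : ℂ) :
    blockBracket q (Finsupp.single p a) (Finsupp.single r b) =
      (a * b * (((r.1 * ((p.2 : ℤ) + q) - p.1 * ((r.2 : ℤ) + q)) : ℤ) : ℂ)) •
        Finsupp.single (p.1 + r.1, p.2 + r.2) (1 : ℂ) := by
  unfold blockBracket
  rw [Finsupp.sum_single_index (by simp), Finsupp.sum_single_index (by simp)]

private lemma bb_skew (q : ℕ) (x y : (ℤ × ℕ) →₀ ℂ) :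
    blockBracket q x y = - blockBracket q y x := by
  induction x using Finsupp.induction_linear with
  | zero => simp [bb_zero_left, bb_zero_right]
  | add f g hf hg => simp [bb_add_left, bb_add_right, hf, hg]; abel
  | single p a =>
    induction y using Finsupp.induction_linear with
    | zero => simp [bb_zero_left, bb_zero_right]
    | add f g hf hg => simp [bb_add_left, bb_add_right, hf, hg]; abel
    | single r b =>
      rw [bb_single, bb_single, ← neg_smul]
      have hpt : (r.1 + p.1, r.2 + p.2) = (p.1 + r.1, p.2 + r.2) := by
        simp [add_comm]
      rw [hpt]
      congr 1
      push_cast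
      ring

private lemma bb_alt (q : ℕ) (x : (ℤ × ℕ) →₀ ℂ) : blockBracket q x x = 0 := by
  have h := bb_skew q x x
  have h2 : blockBracket q x x + blockBracket q x x = 0 := eq_neg_iff_add_eq_zero.mp h
  have h3 : (2 : ℂ) • blockBracket q x x = 0 := by rw [two_smul]; exact h2
  rcases smul_eq_zero.mp h3 with h | h
  · norm_num at h
  · exact h

private lemma bb_jacobi (q : ℕ) (x y z : (ℤ × ℕ) →₀ ℂ) :
    blockBracket q (blockBracket q x y) z + blockBracket q (blockBracket q y z) x +
      blockBracket q (blockBracket q z x) y = 0 := by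
  induction x using Finsupp.induction_linear with
  | zero => simp [bb_zero_left, bb_zero_right]
  | add f g hf hg =>
    simp only [bb_add_left, bb_add_right]
    calc blockBracket q (blockBracket q f y) z + blockBracket q (blockBracket q g y) z +
          (blockBracket q (blockBracket q y z) f + blockBracket q (blockBracket q y z) g) +
          (blockBracket q (blockBracket q z f) y + blockBracket q (blockBracket q z g) y)
        = (blockBracket q (blockBracket q f y) z + blockBracket q (blockBracket q y z) f +
            blockBracket q (blockBracket q z f) y) +
          (blockBracket q (blockBracket q g y) z + blockBracket q (blockBracket q y z) g +
            blockBracket q (blockBracket q z g) y) := by abel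
      _ = 0 := by rw [hf, hg, add_zero]
  | single p a =>
    induction y using Finsupp.induction_linear with
    | zero => simp [bb_zero_left, bb_zero_right]
    | add f g hf hg =>
      simp only [bb_add_left, bb_add_right]
      calc blockBracket q (blockBracket q (Finsupp.single p a) f) z +
            blockBracket q (blockBracket q (Finsupp.single p a) g) z +
            (blockBracket q (blockBracket q f z) (Finsupp.single p a) +
              blockBracket q (blockBracket q g z) (Finsupp.single p a)) +
            (blockBracket q (blockBracket q z (Finsupp.single p a)) f +
              blockBracket q (blockBracket q z (Finsupp.single p a)) g)
          = (blockBracket q (blockBracket q (Finsupp.single p a) f) z +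
              blockBracket q (blockBracket q f z) (Finsupp.single p a) +
              blockBracket q (blockBracket q z (Finsupp.single p a)) f) +
            (blockBracket q (blockBracket q (Finsupp.single p a) g) z +
              blockBracket q (blockBracket q g z) (Finsupp.single p a) +
              blockBracket q (blockBracket q z (Finsupp.single p a)) g) := by abel
        _ = 0 := by rw [hf, hg, add_zero]
    | single r b =>
      induction z using Finsupp.induction_linear with
      | zero => simp [bb_zero_left, bb_zero_right]
      | add f g hf hg =>
        simp only [bb_add_left, bb_add_right]
        calc blockBracket q (blockBracket q (Finsupp.single p a) (Finsupp.single r b)) f +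
              blockBracket q (blockBracket q (Finsupp.single p a) (Finsupp.single r b)) g +
              (blockBracket q (blockBracket q (Finsupp.single r b) f)
                  (Finsupp.single p a) +
                blockBracket q (blockBracket q (Finsupp.single r b) g)
                  (Finsupp.single p a)) +
              (blockBracket q (blockBracket q f (Finsupp.single p a))
                  (Finsupp.single r b) +
                blockBracket q (blockBracket q g (Finsupp.single p a))
                  (Finsupp.single r b))
            = (blockBracket q (blockBracket q (Finsupp.single p a) (Finsupp.single r b)) f +
                blockBracket q (blockBracket q (Finsupp.single r b) f)
                  (Finsupp.single p a) +
                blockBracket q (blockBracket q f (Finsupp.single p a))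
                  (Finsupp.single r b)) +
              (blockBracket q (blockBracket q (Finsupp.single p a) (Finsupp.single r b)) g +
                blockBracket q (blockBracket q (Finsupp.single r b) g)
                  (Finsupp.single p a) +
                blockBracket q (blockBracket q g (Finsupp.single p a))
                  (Finsupp.single r b)) := by abel
          _ = 0 := by rw [hf, hg, add_zero]
      | single t d =>
        rw [bb_single, bb_single, bb_single, bb_smul_left, bb_smul_left, bb_smul_left,
          bb_single, bb_single, bb_single, smul_smul, smul_smul, smul_smul]
        have h2 : ((r.1 + t.1 + p.1, r.2 + t.2 + p.2) : ℤ × ℕ) =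
            (p.1 + r.1 + t.1, p.2 + r.2 + t.2) := by
          simp only [Prod.mk.injEq]; constructor <;> ring
        have h3 : ((t.1 + p.1 + r.1, t.2 + p.2 + r.2) : ℤ × ℕ) =
            (p.1 + r.1 + t.1, p.2 + r.2 + t.2) := by
          simp only [Prod.mk.injEq]; constructor <;> ring
        rw [h2, h3, ← add_smul, ← add_smul]
        convert zero_smul ℂ _ using 2
        push_cast
        ring

/-- For every positive integer `q`, the bracket `blockBracket q` is bilinear, takes the
prescribed values on basis elements, is alternating, and satisfies the Jacobi identity;
hence it endows the free complex vector space on `{L_{α,i}}` with the structure of a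
complex Lie algebra `B(q)`. -/
theorem blockBracket_isLieBracket (q : ℕ) (hq : 0 < q) :
    (∀ (a : ℂ) (x y : (ℤ × ℕ) →₀ ℂ), blockBracket q (a • x) y = a • blockBracket q x y) ∧
    (∀ (a : ℂ) (x y : (ℤ × ℕ) →₀ ℂ), blockBracket q x (a • y) = a • blockBracket q x y) ∧
    (∀ x₁ x₂ y : (ℤ × ℕ) →₀ ℂ,
      blockBracket q (x₁ + x₂) y = blockBracket q x₁ y + blockBracket q x₂ y) ∧
    (∀ x y₁ y₂ : (ℤ × ℕ) →₀ ℂ,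
      blockBracket q x (y₁ + y₂) = blockBracket q x y₁ + blockBracket q x y₂) ∧
    (∀ (α β : ℤ) (i j : ℕ),
      blockBracket q (Finsupp.single (α, i) 1) (Finsupp.single (β, j) 1) =
        (((β * ((i : ℤ) + q) - α * ((j : ℤ) + q)) : ℤ) : ℂ) •
          Finsupp.single (α + β, i + j) (1 : ℂ)) ∧
    (∀ x : (ℤ × ℕ) →₀ ℂ, blockBracket q x x = 0) ∧
    (∀ x y z : (ℤ × ℕ) →₀ ℂ,
      blockBracket q (blockBracket q x y) z + blockBracket q (blockBracket q y z) x +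
        blockBracket q (blockBracket q z x) y = 0) := by
  refine ⟨bb_smul_left q, bb_smul_right q, bb_add_left q, bb_add_right q, ?_, bb_alt q,
    bb_jacobi q⟩
  intro α β i j
  have h := bb_single q (α, i) (β, j) 1 1
  simpa using h
end

section
/- An element F ∈ B(q) is ad-locally finite if and only if F is a scalar multiple of L_{0,0}; that is, up to scalars L_{0,0} is the unique ad-locally finite element of B(q). -/
open Finsupp

private lemma blk_sum_lie {ι : Type*} (s : Finset ι) {B : Type} [LieRing B] [LieAlgebra ℂ B]
    (f : ι → B) (y : B) : ⁅∑ x ∈ s, f x, y⁆ = ∑ x ∈ s, ⁅f x, y⁆ := by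
  induction s using Finset.cons_induction with
  | empty => simp
  | cons a s ha ih => simp [Finset.sum_cons, add_lie, ih]

private lemma blk_lie_sum {ι : Type*} (s : Finset ι) {B : Type} [LieRing B] [LieAlgebra ℂ B]
    (f : ι → B) (x : B) : ⁅x, ∑ i ∈ s, f i⁆ = ∑ i ∈ s, ⁅x, f i⁆ := by
  induction s using Finset.cons_induction with
  | empty => simp
  | cons a s ha ih => simp [Finset.sum_cons, lie_add, ih]

private lemma blk_repr_bracket (q : ℕ) {B : Type} [LieRing B] [LieAlgebra ℂ B]
    (L : Module.Basis (ℤ × ℕ) ℂ B)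
    (hL : ∀ (α β : ℤ) (i j : ℕ),
      ⁅L (α, i), L (β, j)⁆ =
        (((β * ((i : ℤ) + q) - α * ((j : ℤ) + q)) : ℤ) : ℂ) • L (α + β, i + j))
    (x y : B) (σ : ℤ × ℕ) :
    L.repr ⁅x, y⁆ σ =
      ∑ ν ∈ (L.repr x).support, ∑ τ ∈ (L.repr y).support,
        if (ν.1 + τ.1, ν.2 + τ.2) = σ then
          L.repr x ν * (L.repr y τ *
            (((τ.1 * ((ν.2 : ℤ) + q) - ν.1 * ((τ.2 : ℤ) + q)) : ℤ) : ℂ))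
        else 0 := by
  have hLν : ∀ ν τ : ℤ × ℕ, ⁅L ν, L τ⁆ =
      (((τ.1 * ((ν.2 : ℤ) + q) - ν.1 * ((τ.2 : ℤ) + q)) : ℤ) : ℂ) •
        L (ν.1 + τ.1, ν.2 + τ.2) := by
    intro ν τ
    have := hL ν.1 τ.1 ν.2 τ.2
    simpa using this
  have key : ⁅x, y⁆ =
      ∑ ν ∈ (L.repr x).support, ∑ τ ∈ (L.repr y).support,
        (L.repr x ν * (L.repr y τ *
          (((τ.1 * ((ν.2 : ℤ) + q) - ν.1 * ((τ.2 : ℤ) + q)) : ℤ) : ℂ))) •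
          L (ν.1 + τ.1, ν.2 + τ.2) := by
    conv_lhs => rw [← L.linearCombination_repr x, ← L.linearCombination_repr y]
    rw [Finsupp.linearCombination_apply, Finsupp.linearCombination_apply,
      Finsupp.sum, Finsupp.sum, blk_sum_lie]
    refine Finset.sum_congr rfl fun ν _ => ?_
    rw [smul_lie, blk_lie_sum, Finset.smul_sum]
    refine Finset.sum_congr rfl fun τ _ => ?_
    rw [lie_smul, hLν, smul_smul, smul_smul, mul_assoc]
  rw [key, map_sum, Finsupp.finset_sum_apply]
  refine Finset.sum_congr rfl fun ν _ => ?_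
  rw [map_sum, Finsupp.finset_sum_apply]
  refine Finset.sum_congr rfl fun τ _ => ?_
  rw [map_smul, Module.Basis.repr_self, Finsupp.smul_apply, Finsupp.single_apply, smul_eq_mul,
    mul_ite, mul_one, mul_zero]

private lemma blk_li {M : Type*} [AddCommGroup M] [Module ℂ M]
    (w : ℕ → M) (f : ℕ → M →ₗ[ℂ] ℂ)
    (hne : ∀ m, f m (w m) ≠ 0) (hz : ∀ m' m : ℕ, m' < m → f m (w m') = 0) :
    LinearIndependent ℂ w := by
  rw [linearIndependent_iff']
  intro s
  induction s using Finset.induction_on_max with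
  | empty => simp
  | insert a s hlt ih =>
    intro g hsum
    have has : a ∉ s := fun h => lt_irrefl a (hlt a h)
    have hga : g a = 0 := by
      have h1 := congrArg (f a) hsum
      rw [map_sum, map_zero, Finset.sum_insert has,
        Finset.sum_eq_zero (fun i hi => by rw [map_smul, hz i a (hlt i hi), smul_zero]),
        add_zero, map_smul, smul_eq_mul] at h1
      exact (mul_eq_zero.1 h1).resolve_right (hne a)
    have hrest : ∑ i ∈ s, g i • w i = 0 := by
      rw [Finset.sum_insert has, hga, zero_smul, zero_add] at hsum; exact hsum
    intro i hi
    rcases Finset.mem_insert.1 hi with rfl | hi'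
    · exact hga
    · exact ih g hrest i hi'

private lemma blk_core (q : ℕ) (hq : 0 < q) {B : Type} [LieRing B] [LieAlgebra ℂ B]
    (L : Module.Basis (ℤ × ℕ) ℂ B)
    (hL : ∀ (α β : ℤ) (i j : ℕ),
      ⁅L (α, i), L (β, j)⁆ =
        (((β * ((i : ℤ) + q) - α * ((j : ℤ) + q)) : ℤ) : ℂ) • L (α + β, i + j))
    (F : B) (ε : ℤ) (hε : ε = 1 ∨ ε = -1)
    (ν₀ : ℤ × ℕ) (hν₀ : ν₀ ∈ (L.repr F).support)
    (hν₀pos : toLex ((0 : ℤ), (0 : ℤ)) < toLex (ε * ν₀.1, (ν₀.2 : ℤ)))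
    (hfin : ∀ v : B, FiniteDimensional ℂ
        (Submodule.span ℂ (Set.range fun m : ℕ => ((LieAlgebra.ad ℂ B F) ^ m) v))) :
    False := by
  classical
  set φ : ℤ × ℕ → ℤ ×ₗ ℤ := fun ν => toLex (ε * ν.1, (ν.2 : ℤ)) with hφ
  have hεne : ε ≠ 0 := by rcases hε with h | h <;> simp [h]
  have hφinj : Function.Injective φ := by
    intro a b hab
    simp only [hφ] at hab
    have h1 := toLex.injective hab
    rw [Prod.ext_iff] at h1
    obtain ⟨h2, h3⟩ := h1
    have h4 : a.1 = b.1 := mul_left_cancel₀ hεne h2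
    have h5 : a.2 = b.2 := Int.natCast_inj.1 h3
    exact Prod.ext h4 h5
  have hφadd : ∀ ν τ : ℤ × ℕ, φ (ν.1 + τ.1, ν.2 + τ.2) = φ ν + φ τ := by
    intro ν τ
    simp only [hφ]
    rw [← toLex_add, Prod.mk_add_mk]
    congr 1
    rw [Prod.ext_iff]
    constructor
    · simp [mul_add]
    · push_cast; ring
  obtain ⟨μ, hμs, hμmax⟩ := Finset.exists_max_image (L.repr F).support φ ⟨ν₀, hν₀⟩
  have hμpos : (0 : ℤ ×ₗ ℤ) < φ μ := lt_of_lt_of_le hν₀pos (hμmax ν₀ hν₀)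
  set β : ℤ := if μ.1 = 0 then 1 else 2 * μ.1 with hβ
  set v : B := L (β, 0) with hv
  set ρ : ℕ → ℤ × ℕ := fun m => (β + (m : ℤ) * μ.1, m * μ.2) with hρ
  set w : ℕ → B := fun m => ((LieAlgebra.ad ℂ B F) ^ m) v with hw
  have hρsucc : ∀ m : ℕ, ρ (m + 1) = (μ.1 + (ρ m).1, μ.2 + (ρ m).2) := by
    intro m
    simp only [hρ]
    rw [Prod.ext_iff]
    constructor
    · push_cast; ring
    · push_cast; ring
  have hqZ : (0 : ℤ) < q := by exact_mod_cast hq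
  have hcst : ∀ m : ℕ, ((ρ m).1 * ((μ.2 : ℤ) + q) - μ.1 * (((ρ m).2 : ℤ) + q)) ≠ 0 := by
    intro m
    simp only [hρ]
    by_cases hα : μ.1 = 0
    · rw [hβ, if_pos hα, hα]
      have h2 : ((1 + (m : ℤ) * 0) * ((μ.2 : ℤ) + q) - 0 * (((m * μ.2 : ℕ) : ℤ) + q))
          = (μ.2 : ℤ) + q := by push_cast; ring
      rw [h2]
      have h4 : (0 : ℤ) ≤ (μ.2 : ℤ) := Int.natCast_nonneg _
      linarith
    · rw [hβ, if_neg hα]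
      have h2 : ((2 * μ.1 + (m : ℤ) * μ.1) * ((μ.2 : ℤ) + q) - μ.1 * (((m * μ.2 : ℕ) : ℤ) + q))
          = μ.1 * (2 * (μ.2 : ℤ) + q + (m : ℤ) * q) := by push_cast; ring
      rw [h2]
      apply mul_ne_zero hα
      have h3 : (0 : ℤ) ≤ (m : ℤ) * q := by positivity
      have h4 : (0 : ℤ) ≤ (μ.2 : ℤ) := Int.natCast_nonneg _
      linarith
  have hμρ : ∀ m : ℕ, φ (ρ (m + 1)) = φ μ + φ (ρ m) := fun m => by
    rw [hρsucc m, hφadd]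
  have main : ∀ m : ℕ,
      (∀ τ ∈ (L.repr (w m)).support, φ τ ≤ φ (ρ m)) ∧ L.repr (w m) (ρ m) ≠ 0 := by
    intro m
    induction m with
    | zero =>
      have h0 : w 0 = L (β, 0) := by simp [hw, hv]
      have hρ0 : ρ 0 = (β, 0) := by simp [hρ]
      rw [h0, hρ0]
      constructor
      · intro τ hτ
        rw [Module.Basis.repr_self] at hτ
        have h1 := Finsupp.support_single_subset hτ
        rw [Finset.mem_singleton] at h1
        rw [h1]
      · rw [Module.Basis.repr_self, Finsupp.single_apply, if_pos rfl]
        exact one_ne_zero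
    | succ m ih =>
      have hwsucc : w (m + 1) = ⁅F, w m⁆ := by
        simp only [hw]
        rw [pow_succ', Module.End.mul_apply, LieAlgebra.ad_apply]
      have hρmem : ρ m ∈ (L.repr (w m)).support := Finsupp.mem_support_iff.2 ih.2
      constructor
      · intro τ hτ
        by_contra hle
        push_neg at hle
        apply Finsupp.mem_support_iff.1 hτ
        rw [hwsucc, blk_repr_bracket q L hL]
        apply Finset.sum_eq_zero
        intro ν hν
        apply Finset.sum_eq_zero
        intro σ hσ
        rw [if_neg]
        intro heq
        have h1 : φ τ ≤ φ (ρ (m + 1)) := by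
          rw [← heq, hφadd, hμρ]
          exact add_le_add (hμmax ν hν) (ih.1 σ hσ)
        exact absurd h1 (not_le.2 hle)
      · rw [hwsucc, blk_repr_bracket q L hL]
        have hz1 : ∀ ν ∈ (L.repr F).support, ν ≠ μ →
            (∑ τ ∈ (L.repr (w m)).support,
              if (ν.1 + τ.1, ν.2 + τ.2) = ρ (m + 1) then
                L.repr F ν * (L.repr (w m) τ *
                  (((τ.1 * ((ν.2 : ℤ) + q) - ν.1 * ((τ.2 : ℤ) + q)) : ℤ) : ℂ))
              else 0) = 0 := by
          intro ν hν hνne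
          apply Finset.sum_eq_zero
          intro σ hσ
          rw [if_neg]
          intro heq
          have h1 : φ ν < φ μ := lt_of_le_of_ne (hμmax ν hν) (fun h => hνne (hφinj h))
          have h2 : φ (ρ (m + 1)) = φ ν + φ σ := by rw [← heq, hφadd]
          have h3 : φ ν + φ σ < φ μ + φ (ρ m) :=
            add_lt_add_of_lt_of_le h1 (ih.1 σ hσ)
          exact absurd (hμρ m) (h2.trans_lt h3).ne
        have hz2 : ∀ τ ∈ (L.repr (w m)).support, τ ≠ ρ m →
            (if (μ.1 + τ.1, μ.2 + τ.2) = ρ (m + 1) then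
              L.repr F μ * (L.repr (w m) τ *
                (((τ.1 * ((μ.2 : ℤ) + q) - μ.1 * ((τ.2 : ℤ) + q)) : ℤ) : ℂ))
            else 0) = 0 := by
          intro σ hσ hσne
          rw [if_neg]
          intro heq
          have h1 : φ σ < φ (ρ m) := lt_of_le_of_ne (ih.1 σ hσ) (fun h => hσne (hφinj h))
          have h2 : φ (ρ (m + 1)) = φ μ + φ σ := by rw [← heq, hφadd]
          have h3 : φ μ + φ σ < φ μ + φ (ρ m) := add_lt_add_right h1 _
          exact absurd (hμρ m) (h2.trans_lt h3).ne
        rw [Finset.sum_eq_single_of_mem μ hμs hz1,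
          Finset.sum_eq_single_of_mem (ρ m) hρmem hz2,
          if_pos (hρsucc m).symm]
        exact mul_ne_zero (Finsupp.mem_support_iff.1 hμs)
          (mul_ne_zero ih.2 (Int.cast_ne_zero.2 (hcst m)))
  have hρmono : StrictMono fun m => φ (ρ m) := by
    apply strictMono_nat_of_lt_succ
    intro m
    rw [hμρ m]
    exact lt_add_of_pos_left _ hμpos
  set g : ℕ → B →ₗ[ℂ] ℂ :=
    fun m => (Finsupp.lapply (ρ m)).comp (L.repr.toLinearMap) with hg
  have hli : LinearIndependent ℂ w := by
    apply blk_li w g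
    · intro m; exact (main m).2
    · intro m' m hlt
      show L.repr (w m') (ρ m) = 0
      by_contra hne
      have h1 : φ (ρ m) ≤ φ (ρ m') := (main m').1 _ (Finsupp.mem_support_iff.2 hne)
      exact absurd h1 (not_le.2 (hρmono hlt))
  haveI := hfin v
  have hmem : ∀ m : ℕ, w m ∈ Submodule.span ℂ
      (Set.range fun m : ℕ => ((LieAlgebra.ad ℂ B F) ^ m) v) :=
    fun m => Submodule.subset_span ⟨m, rfl⟩
  have hli' : LinearIndependent ℂ
      (fun m => (⟨w m, hmem m⟩ : Submodule.span ℂ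
        (Set.range fun m : ℕ => ((LieAlgebra.ad ℂ B F) ^ m) v))) := by
    apply LinearIndependent.of_comp (Submodule.span ℂ
      (Set.range fun m : ℕ => ((LieAlgebra.ad ℂ B F) ^ m) v)).subtype
    exact hli
  exact Module.Finite.not_linearIndependent_of_infinite _ hli'

/-- An element `F` of the Block type Lie algebra `B(q)` is ad-locally finite
(i.e. for every `v`, the span of `{(ad_F)^m v : m ∈ ℤ_{≥0}}` is finite dimensional)
if and only if `F` is a scalar multiple of `L_{0,0}`. -/
theorem block_adLocallyFinite_iff (q : ℕ) (hq : 0 < q)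
    {B : Type} [LieRing B] [LieAlgebra ℂ B]
    (L : Module.Basis (ℤ × ℕ) ℂ B)
    (hL : ∀ (α β : ℤ) (i j : ℕ),
      ⁅L (α, i), L (β, j)⁆ =
        (((β * ((i : ℤ) + q) - α * ((j : ℤ) + q)) : ℤ) : ℂ) • L (α + β, i + j))
    (F : B) :
    (∀ v : B, FiniteDimensional ℂ
        (Submodule.span ℂ (Set.range fun m : ℕ => ((LieAlgebra.ad ℂ B F) ^ m) v))) ↔
      ∃ c : ℂ, F = c • L (0, 0) := by
  classical
  constructor
  · intro hfin
    by_cases hone : ∀ ν ∈ (L.repr F).support, ν = ((0 : ℤ), (0 : ℕ))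
    · refine ⟨L.repr F (0, 0), ?_⟩
      have hs : (L.repr F).support ⊆ {((0 : ℤ), (0 : ℕ))} :=
        fun ν hν => Finset.mem_singleton.2 (hone ν hν)
      have h1 := Finsupp.support_subset_singleton.1 hs
      apply L.repr.injective
      rw [map_smul, Module.Basis.repr_self, Finsupp.smul_single, smul_eq_mul, mul_one]
      exact h1
    · exfalso
      push_neg at hone
      obtain ⟨μ0, hμ0s, hμ0ne⟩ := hone
      by_cases hp : ∃ ν ∈ (L.repr F).support, 0 < ν.1
      · obtain ⟨ν₁, hν₁s, hν₁pos⟩ := hp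
        refine blk_core q hq L hL F 1 (Or.inl rfl) ν₁ hν₁s ?_ hfin
        rw [Prod.Lex.lt_iff]
        left
        simpa using hν₁pos
      · rcases lt_trichotomy μ0.1 0 with hneg | hzero | hpos
        · refine blk_core q hq L hL F (-1) (Or.inr rfl) μ0 hμ0s ?_ hfin
          rw [Prod.Lex.lt_iff]
          left
          show (0 : ℤ) < -1 * μ0.1
          linarith
        · refine blk_core q hq L hL F 1 (Or.inl rfl) μ0 hμ0s ?_ hfin
          rw [Prod.Lex.lt_iff]
          right
          refine ⟨by simp [hzero], ?_⟩
          have h2 : μ0.2 ≠ 0 := fun h => hμ0ne (Prod.ext hzero h)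
          show (0 : ℤ) < ((μ0.2 : ℕ) : ℤ)
          exact_mod_cast Nat.pos_of_ne_zero h2
        · exact absurd ⟨μ0, hμ0s, hpos⟩ hp
  · rintro ⟨c, rfl⟩ v
    have hS'fd : FiniteDimensional ℂ
        (Submodule.span ℂ (L '' ((L.repr v).support : Set (ℤ × ℕ)))) :=
      FiniteDimensional.span_of_finite ℂ ((Finset.finite_toSet _).image _)
    have hmap : (Submodule.span ℂ (L '' ((L.repr v).support : Set (ℤ × ℕ)))).map
        (LieAlgebra.ad ℂ B (c • L (0, 0))) ≤
        Submodule.span ℂ (L '' ((L.repr v).support : Set (ℤ × ℕ))) := by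
      rw [Submodule.map_span, Submodule.span_le]
      rintro _ ⟨_, ⟨τ, hτ, rfl⟩, rfl⟩
      show (LieAlgebra.ad ℂ B (c • L (0, 0))) (L τ) ∈ _
      rw [LieAlgebra.ad_apply, smul_lie]
      have hb : ⁅L ((0 : ℤ), (0 : ℕ)), L τ⁆ = ((τ.1 * (q : ℤ) : ℤ) : ℂ) • L τ := by
        have h3 := hL 0 τ.1 0 τ.2
        simpa using h3
      rw [hb]
      exact Submodule.smul_mem _ _ (Submodule.smul_mem _ _
        (Submodule.subset_span ⟨τ, hτ, rfl⟩))
    have hpow : ∀ m : ℕ, ((LieAlgebra.ad ℂ B (c • L (0, 0))) ^ m) v ∈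
        Submodule.span ℂ (L '' ((L.repr v).support : Set (ℤ × ℕ))) := by
      intro m
      induction m with
      | zero => simpa using Module.Basis.mem_span_repr_support L v
      | succ m ih =>
        rw [pow_succ', Module.End.mul_apply]
        exact hmap ⟨_, ih, rfl⟩
    have hle : Submodule.span ℂ
        (Set.range fun m : ℕ => ((LieAlgebra.ad ℂ B (c • L (0, 0))) ^ m) v) ≤
        Submodule.span ℂ (L '' ((L.repr v).support : Set (ℤ × ℕ))) := by
      rw [Submodule.span_le]
      rintro _ ⟨m, rfl⟩
      exact hpow m
    exact Submodule.finiteDimensional_of_le hle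
end

section
/- The element L_{0,0} of B(q) is not ad-locally nilpotent; consequently B(q) contains no nonzero ad-locally nilpotent elements. -/
open Finset

private lemma lex_add_le {a a' b b' : ℤ × ℕ} (h1 : toLex a ≤ toLex a')
    (h2 : toLex b ≤ toLex b') : toLex (a + b) ≤ toLex (a' + b') := by
  rw [Prod.Lex.le_iff] at *
  simp only [Prod.fst_add, Prod.snd_add, ofLex_toLex] at *
  rcases h1 with h | ⟨h, h'⟩ <;> rcases h2 with g | ⟨g, g'⟩ <;> omega

private lemma lex_add_eq {s s₀ t T : ℤ × ℕ} (h1 : toLex s ≤ toLex s₀)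
    (h2 : toLex t ≤ toLex T) (h : s + t = s₀ + T) : s = s₀ ∧ t = T := by
  rw [Prod.Lex.le_iff] at h1 h2
  simp only [ofLex_toLex] at h1 h2
  have e1 : s.1 + t.1 = s₀.1 + T.1 := congrArg Prod.fst h
  have e2 : s.2 + t.2 = s₀.2 + T.2 := congrArg Prod.snd h
  refine ⟨Prod.ext ?_ ?_, Prod.ext ?_ ?_⟩ <;> omega

private lemma sum_lie' {ι : Type*} {B : Type*} [LieRing B] (s : Finset ι)  (f : ι → B) (w : B) :
    ⁅∑ i ∈ s, f i, w⁆ = ∑ i ∈ s, ⁅f i, w⁆ := by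
  classical
  induction s using Finset.induction with
  | empty => simp
  | insert _ _ h ih => rw [Finset.sum_insert h, Finset.sum_insert h, add_lie, ih]

private lemma lie_sum' {ι : Type*} {B : Type*} [LieRing B] (s : Finset ι)  (f : ι → B) (w : B) :
    ⁅w, ∑ i ∈ s, f i⁆ = ∑ i ∈ s, ⁅w, f i⁆ := by
  classical
  induction s using Finset.induction with
  | empty => simp
  | insert _ _ h ih => rw [Finset.sum_insert h, Finset.sum_insert h, lie_add, ih]

section

variable (q : ℕ) {B : Type} [LieRing B] [LieAlgebra ℂ B] (L : Module.Basis (ℤ × ℕ) ℂ B)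
variable (hL : ∀ (α β : ℤ) (i j : ℕ),
      ⁅L (α, i), L (β, j)⁆ =
        (((β * ((i : ℤ) + q) - α * ((j : ℤ) + q)) : ℤ) : ℂ) • L (α + β, i + j))

include hL

private lemma basis_bracket (s t : ℤ × ℕ) :
    ⁅L s, L t⁆ = (((t.1 * ((s.2 : ℤ) + q) - s.1 * ((t.2 : ℤ) + q)) : ℤ) : ℂ) • L (s + t) := by
  have := hL s.1 t.1 s.2 t.2
  rw [show s + t = (s.1 + t.1, s.2 + t.2) from rfl]
  simpa using this

private lemma repr_bracket (F w : B) (X : ℤ × ℕ) :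
    L.repr ⁅F, w⁆ X = ∑ s ∈ (L.repr F).support, ∑ t ∈ (L.repr w).support,
      if s + t = X then
        L.repr F s * L.repr w t *
          (((t.1 * ((s.2 : ℤ) + q) - s.1 * ((t.2 : ℤ) + q)) : ℤ) : ℂ)
      else 0 := by
  conv_lhs => rw [← L.linearCombination_repr F, ← L.linearCombination_repr w]
  rw [Finsupp.linearCombination_apply, Finsupp.linearCombination_apply,
    Finsupp.sum, Finsupp.sum]
  rw [show ⁅∑ s ∈ (L.repr F).support, L.repr F s • L s,
        ∑ t ∈ (L.repr w).support, L.repr w t • L t⁆ =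
      ∑ s ∈ (L.repr F).support, ∑ t ∈ (L.repr w).support,
        (L.repr F s * L.repr w t) • ⁅L s, L t⁆ by
    rw [sum_lie']
    refine Finset.sum_congr rfl fun s _ => ?_
    rw [lie_sum']
    refine Finset.sum_congr rfl fun t _ => ?_
    rw [smul_lie, lie_smul, smul_smul]]
  simp only [basis_bracket q L hL, map_sum, map_smul, Module.Basis.repr_self,
    Finsupp.coe_finset_sum, Finset.sum_apply, Finsupp.coe_smul, Pi.smul_apply,
    Finsupp.single_apply, smul_eq_mul]
  refine Finset.sum_congr rfl fun s _ => Finset.sum_congr rfl fun t _ => ?_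
  split <;> ring

private lemma step (F w : B) (s₀ T : ℤ × ℕ)
    (hF : ∀ s ∈ (L.repr F).support, toLex s ≤ toLex s₀)
    (hw : ∀ t ∈ (L.repr w).support, toLex t ≤ toLex T) :
    (∀ x ∈ (L.repr ⁅F, w⁆).support, toLex x ≤ toLex (s₀ + T)) ∧
    L.repr ⁅F, w⁆ (s₀ + T) = L.repr F s₀ * L.repr w T *
      (((T.1 * ((s₀.2 : ℤ) + q) - s₀.1 * ((T.2 : ℤ) + q)) : ℤ) : ℂ) := by
  constructor
  · intro x hx
    have hne : L.repr ⁅F, w⁆ x ≠ 0 := Finsupp.mem_support_iff.mp hx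
    rw [repr_bracket q L hL] at hne
    obtain ⟨s, hs, hne⟩ := Finset.exists_ne_zero_of_sum_ne_zero hne
    obtain ⟨t, ht, hne⟩ := Finset.exists_ne_zero_of_sum_ne_zero hne
    have hst : s + t = x := by by_contra h; rw [if_neg h] at hne; exact hne rfl
    rw [← hst]
    exact lex_add_le (hF s hs) (hw t ht)
  · rw [repr_bracket q L hL]
    rw [Finset.sum_eq_single s₀]
    · rw [Finset.sum_eq_single T]
      · rw [if_pos rfl]
      · intro t ht hne
        rw [if_neg]
        intro h
        exact hne (lex_add_eq (le_refl _) (hw t ht) h).2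
      · intro hT
        rw [Finsupp.notMem_support_iff.mp hT]
        split <;> ring
    · intro s hs hne
      refine Finset.sum_eq_zero fun t ht => ?_
      rw [if_neg]
      intro h
      exact hne (lex_add_eq (hF s hs) (hw t ht) h).1
    · intro hs₀
      have h0 : L.repr F s₀ = 0 := Finsupp.notMem_support_iff.mp hs₀
      simp [h0]

private lemma iter (F : B) (s₀ : ℤ × ℕ)
    (hF : ∀ s ∈ (L.repr F).support, toLex s ≤ toLex s₀) (v₀ : ℤ × ℕ) (N : ℕ) :
    (∀ x ∈ (L.repr (((LieAlgebra.ad ℂ B F) ^ N) (L v₀))).support,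
        toLex x ≤ toLex (N • s₀ + v₀)) ∧
    L.repr (((LieAlgebra.ad ℂ B F) ^ N) (L v₀)) (N • s₀ + v₀) =
      (L.repr F s₀) ^ N * ∏ m ∈ Finset.range N,
        ((((m • s₀ + v₀).1 * ((s₀.2 : ℤ) + q)
          - s₀.1 * (((m • s₀ + v₀).2 : ℤ) + q)) : ℤ) : ℂ) := by
  induction N with
  | zero =>
    simp only [pow_zero, Module.End.one_apply, zero_smul, zero_add, Module.Basis.repr_self,
      Finset.range_zero, Finset.prod_empty, mul_one]
    constructor
    · intro x hx
      rw [Finsupp.support_single_ne_zero v₀ one_ne_zero] at hx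
      rw [Finset.mem_singleton.mp hx]
    · simp [Finsupp.single_apply]
  | succ n ih =>
    have hkey := step q L hL F (((LieAlgebra.ad ℂ B F) ^ n) (L v₀)) s₀ (n • s₀ + v₀) hF ih.1
    have hrw : ((LieAlgebra.ad ℂ B F) ^ (n + 1)) (L v₀) =
        ⁅F, ((LieAlgebra.ad ℂ B F) ^ n) (L v₀)⁆ := by
      rw [pow_succ']
      rfl
    have hidx : s₀ + (n • s₀ + v₀) = (n + 1) • s₀ + v₀ := by
      rw [succ_nsmul]
      abel
    constructor
    · intro x hx
      rw [hrw] at hx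
      have := hkey.1 x hx
      rwa [hidx] at this
    · rw [hrw, ← hidx, hkey.2, ih.2, Finset.prod_range_succ]
      ring

end

/-- The element `L_{0,0}` of the Block type Lie algebra `B(q)` is not ad-locally
nilpotent; consequently `B(q)` contains no nonzero ad-locally nilpotent elements.
(`F` is ad-locally nilpotent if for every `v` there is `N > 0` with `(ad_F)^N v = 0`.) -/
theorem block_not_adLocallyNilpotent (q : ℕ) (hq : 0 < q)
    {B : Type} [LieRing B] [LieAlgebra ℂ B]
    (L : Module.Basis (ℤ × ℕ) ℂ B)
    (hL : ∀ (α β : ℤ) (i j : ℕ),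
      ⁅L (α, i), L (β, j)⁆ =
        (((β * ((i : ℤ) + q) - α * ((j : ℤ) + q)) : ℤ) : ℂ) • L (α + β, i + j)) :
    (¬ ∀ v : B, ∃ N : ℕ, 0 < N ∧ ((LieAlgebra.ad ℂ B (L (0, 0))) ^ N) v = 0) ∧
    (∀ F : B, F ≠ 0 →
      ¬ ∀ v : B, ∃ N : ℕ, 0 < N ∧ ((LieAlgebra.ad ℂ B F) ^ N) v = 0) := by
  have main : ∀ F : B, F ≠ 0 →
      ¬ ∀ v : B, ∃ N : ℕ, 0 < N ∧ ((LieAlgebra.ad ℂ B F) ^ N) v = 0 := by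
    intro F hF hnil
    have hrepr : L.repr F ≠ 0 := by
      intro h
      exact hF (by simpa using congrArg L.repr.symm h)
    have hsupp : (L.repr F).support.Nonempty := Finsupp.support_nonempty_iff.mpr hrepr
    obtain ⟨s₀, hs₀mem, hs₀max⟩ :=
      Finset.exists_max_image (L.repr F).support (toLex : ℤ × ℕ → ℤ ×ₗ ℕ) hsupp
    have hc : L.repr F s₀ ≠ 0 := Finsupp.mem_support_iff.mp hs₀mem
    set α₀ : ℤ := s₀.1 with hα₀
    set β : ℤ := α₀ * q + (if 0 ≤ α₀ then 1 else -1) with hβ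
    obtain ⟨N, hN, hzero⟩ := hnil (L (β, 0))
    have h := (iter q L hL F s₀ hs₀max (β, 0) N).2
    rw [hzero] at h
    simp only [map_zero, Finsupp.coe_zero, Pi.zero_apply] at h
    have hcN : (L.repr F s₀) ^ N ≠ 0 := pow_ne_zero N hc
    have hprod : ∏ m ∈ Finset.range N,
        (((((m • s₀ + ((β : ℤ), (0 : ℕ))).1 * ((s₀.2 : ℤ) + q)
          - s₀.1 * ((((m • s₀ + ((β : ℤ), (0 : ℕ))).2 : ℕ) : ℤ) + q)) : ℤ) : ℂ)) ≠ 0 := by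
      refine Finset.prod_ne_zero_iff.mpr fun m _ => ?_
      rw [Int.cast_ne_zero]
      have h1 : (m • s₀ + ((β : ℤ), (0 : ℕ))).1 = m * α₀ + β := by
        simp [Prod.fst_add, nsmul_eq_mul, hα₀]
      have h2 : ((m • s₀ + ((β : ℤ), (0 : ℕ))).2 : ℤ) = m * (s₀.2 : ℤ) := by
        simp [Prod.snd_add]
      rw [h1, h2]
      have hq1 : (1 : ℤ) ≤ (q : ℤ) := by exact_mod_cast hq
      have hi : (0 : ℤ) ≤ (s₀.2 : ℤ) := Int.natCast_nonneg _
      have hm : (0 : ℤ) ≤ (m : ℤ) := Int.natCast_nonneg _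
      have hq0 : (0 : ℤ) ≤ (q : ℤ) := by linarith
      rcases le_or_gt 0 α₀ with hα | hα
      · have hβval : β = α₀ * q + 1 := by rw [hβ, if_pos hα]
        have hpos : (m * α₀ + β) * ((s₀.2 : ℤ) + q) - α₀ * (m * (s₀.2 : ℤ) + q) > 0 := by
          rw [hβval]
          nlinarith [mul_nonneg (mul_nonneg hm hα) hq0,
            mul_nonneg (mul_nonneg hα hq0) hi,
            mul_nonneg (mul_nonneg hα hq0) (by linarith : (0:ℤ) ≤ (q:ℤ) - 1)]
        linarith
      · have hα' : (0 : ℤ) ≤ -α₀ := by linarith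
        have hβval : β = α₀ * q - 1 := by
          rw [hβ, if_neg (not_le.mpr hα)]; ring
        have hneg : (m * α₀ + β) * ((s₀.2 : ℤ) + q) - α₀ * (m * (s₀.2 : ℤ) + q) < 0 := by
          rw [hβval]
          nlinarith [mul_nonneg (mul_nonneg hm hα') hq0,
            mul_nonneg (mul_nonneg hα' hq0) hi,
            mul_nonneg (mul_nonneg hα' hq0) (by linarith : (0:ℤ) ≤ (q:ℤ) - 1)]
        linarith
    exact (mul_ne_zero hcN hprod) h.symm
  exact ⟨main (L (0, 0)) (L.ne_zero (0, 0)), main⟩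
end

section
/- Let (L̄_α)_{α∈ℤ} be a family of nonzero elements of B(q) satisfying [L̄_α, L̄_β] = (β − α) L̄_{α+β} for all α, β ∈ ℤ (so that their span is a subalgebra isomorphic to the Witt algebra). If L̄_0 ∈ ℂ·L_{0,0}, then there exists a nonzero integer s₀ such that L̄_α ∈ ℂ·L_{s₀α,0} for all α ∈ ℤ. -/
private lemma sum_lie_fin {B : Type} [LieRing B] [LieAlgebra ℂ B] {ι : Type*}
    (s : Finset ι) (f : ι → B) (y : B) :
    ⁅∑ i ∈ s, f i, y⁆ = ∑ i ∈ s, ⁅f i, y⁆ := by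
  induction s using Finset.cons_induction with
  | empty => simp
  | cons a s ha ih => simp [Finset.sum_cons, add_lie, ih]

private lemma lie_sum_fin {B : Type} [LieRing B] [LieAlgebra ℂ B] {ι : Type*}
    (s : Finset ι) (f : ι → B) (y : B) :
    ⁅y, ∑ i ∈ s, f i⁆ = ∑ i ∈ s, ⁅y, f i⁆ := by
  induction s using Finset.cons_induction with
  | empty => simp
  | cons a s ha ih => simp [Finset.sum_cons, lie_add, ih]

private lemma brack_repr (q : ℕ) {B : Type} [LieRing B] [LieAlgebra ℂ B]
    (L : Module.Basis (ℤ × ℕ) ℂ B)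
    (hL : ∀ (α β : ℤ) (i j : ℕ),
      ⁅L (α, i), L (β, j)⁆ =
        (((β * ((i : ℤ) + q) - α * ((j : ℤ) + q)) : ℤ) : ℂ) • L (α + β, i + j))
    (x y : B) (m : ℤ × ℕ) :
    L.repr ⁅x, y⁆ m = ∑ p ∈ (L.repr x).support, ∑ r ∈ (L.repr y).support,
      L.repr x p * L.repr y r *
        (((r.1 * ((p.2 : ℤ) + q) - p.1 * ((r.2 : ℤ) + q)) : ℤ) : ℂ) *
        (if (p.1 + r.1, p.2 + r.2) = m then 1 else 0) := by
  have hx : ∑ p ∈ (L.repr x).support, L.repr x p • L p = x := by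
    conv_rhs => rw [← L.linearCombination_repr x]
    rw [Finsupp.linearCombination_apply, Finsupp.sum]
  have hy : ∑ r ∈ (L.repr y).support, L.repr y r • L r = y := by
    conv_rhs => rw [← L.linearCombination_repr y]
    rw [Finsupp.linearCombination_apply, Finsupp.sum]
  have key : ⁅x, y⁆ = ∑ p ∈ (L.repr x).support, ∑ r ∈ (L.repr y).support,
      (L.repr x p * L.repr y r *
        (((r.1 * ((p.2 : ℤ) + q) - p.1 * ((r.2 : ℤ) + q)) : ℤ) : ℂ)) •
        L (p.1 + r.1, p.2 + r.2) := by
    conv_lhs => rw [← hx, ← hy]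
    rw [sum_lie_fin]
    refine Finset.sum_congr rfl fun p _ => ?_
    rw [lie_sum_fin]
    refine Finset.sum_congr rfl fun r _ => ?_
    have h := hL p.1 r.1 p.2 r.2
    simp only [Prod.mk.eta] at h
    rw [smul_lie, lie_smul, h, smul_smul, smul_smul]
  rw [key, map_sum, Finsupp.finset_sum_apply]
  refine Finset.sum_congr rfl fun p _ => ?_
  rw [map_sum, Finsupp.finset_sum_apply]
  refine Finset.sum_congr rfl fun r _ => ?_
  rw [map_smul, Module.Basis.repr_self, Finsupp.smul_apply, Finsupp.single_apply, smul_eq_mul]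

/-- Let `(L̄_α)_{α ∈ ℤ}` be a family of nonzero elements of the Block type Lie algebra
`B(q)` satisfying the Witt relations `[L̄_α, L̄_β] = (β − α) L̄_{α+β}`.  If
`L̄_0 ∈ ℂ·L_{0,0}`, then there is a nonzero integer `s₀` with `L̄_α ∈ ℂ·L_{s₀α,0}`
for all `α`. -/
theorem block_witt_subalgebra (q : ℕ) (hq : 0 < q)
    {B : Type} [LieRing B] [LieAlgebra ℂ B]
    (L : Module.Basis (ℤ × ℕ) ℂ B)
    (hL : ∀ (α β : ℤ) (i j : ℕ),
      ⁅L (α, i), L (β, j)⁆ =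
        (((β * ((i : ℤ) + q) - α * ((j : ℤ) + q)) : ℤ) : ℂ) • L (α + β, i + j))
    (Lbar : ℤ → B) (hne : ∀ α : ℤ, Lbar α ≠ 0)
    (hW : ∀ α β : ℤ, ⁅Lbar α, Lbar β⁆ = ((β - α : ℤ) : ℂ) • Lbar (α + β))
    (h0 : ∃ c : ℂ, Lbar 0 = c • L (0, 0)) :
    ∃ s₀ : ℤ, s₀ ≠ 0 ∧ ∀ α : ℤ, ∃ c : ℂ, Lbar α = c • L (s₀ * α, 0) := by
  obtain ⟨c, hc⟩ := h0
  have hcne : c ≠ 0 := by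
    rintro rfl
    exact hne 0 (by simpa using hc)
  have hrepr0 : L.repr (Lbar 0) = Finsupp.single ((0 : ℤ), (0 : ℕ)) c := by
    rw [hc, map_smul, Module.Basis.repr_self, Finsupp.smul_single', mul_one]
  have hreprne : ∀ α : ℤ, L.repr (Lbar α) ≠ 0 := by
    intro α h
    exact hne α (by simpa using (LinearEquiv.map_eq_zero_iff L.repr).mp h)
  -- Step A
  have stepA : ∀ (α : ℤ) (m : ℤ × ℕ),
      (c * q * m.1 - α) * L.repr (Lbar α) m = 0 := by
    intro α m
    have h1 := hW 0 α
    rw [zero_add, sub_zero] at h1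
    have h2 := brack_repr q L hL (Lbar 0) (Lbar α) m
    rw [h1, hrepr0, Finsupp.support_single_ne_zero _ hcne, Finset.sum_singleton] at h2
    simp only [Finsupp.single_eq_same, map_smul, Finsupp.smul_apply, smul_eq_mul,
      Nat.cast_zero, zero_add, zero_mul, sub_zero, Prod.mk.eta, mul_ite, mul_one,
      mul_zero] at h2
    rw [Finset.sum_ite_eq' ((L.repr (Lbar α)).support) m] at h2
    by_cases hm : m ∈ (L.repr (Lbar α)).support
    · rw [if_pos hm] at h2
      push_cast at h2 ⊢
      linear_combination -h2
    · rw [Finsupp.notMem_support_iff.mp hm, mul_zero]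
  -- Step B : find s₀
  obtain ⟨m1, hm1⟩ := Finsupp.support_nonempty_iff.mpr (hreprne 1)
  have hm1ne := Finsupp.mem_support_iff.mp hm1
  have hs : c * q * m1.1 = 1 := by
    have := stepA 1 m1
    have h3 := (mul_eq_zero.mp this).resolve_right hm1ne
    push_cast at h3
    linear_combination h3
  set s₀ := m1.1 with hs₀
  have hs0ne : s₀ ≠ 0 := by
    intro h
    rw [h] at hs
    simp at hs
  -- Step C : support rows
  have hsupp : ∀ (α : ℤ) (p : ℤ × ℕ), L.repr (Lbar α) p ≠ 0 → p.1 = s₀ * α := by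
    intro α p hp
    have h4 := stepA α p
    have h5 := (mul_eq_zero.mp h4).resolve_right hp
    have h6 : (c * q * p.1 : ℂ) = α := by linear_combination h5
    have : ((p.1 : ℂ)) = ((s₀ * α : ℤ) : ℂ) := by
      push_cast
      calc (p.1 : ℂ) = (p.1 : ℂ) * (c * q * s₀) := by rw [mul_comm c (q:ℂ)] at hs ⊢; rw [hs, mul_one]
        _ = (s₀ : ℂ) * (c * q * p.1) := by ring
        _ = s₀ * α := by rw [h6]
    exact_mod_cast this
  -- Step D
  have main : ∀ α : ℤ, α ≠ 0 → ∃ c' : ℂ, Lbar α = c' • L (s₀ * α, 0) := by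
    intro α hα
    set F := L.repr (Lbar α) with hF
    set G := L.repr (Lbar (-α)) with hG
    obtain ⟨pF, hpF⟩ := Finsupp.support_nonempty_iff.mpr (hreprne α)
    obtain ⟨pG, hpG⟩ := Finsupp.support_nonempty_iff.mpr (hreprne (-α))
    have hFim : (F.support.image Prod.snd).Nonempty := ⟨pF.2, Finset.mem_image_of_mem _ hpF⟩
    have hGim : (G.support.image Prod.snd).Nonempty := ⟨pG.2, Finset.mem_image_of_mem _ hpG⟩
    set J := (F.support.image Prod.snd).max' hFim with hJ
    set K := (G.support.image Prod.snd).max' hGim with hK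
    have hJle : ∀ p ∈ F.support, p.2 ≤ J :=
      fun p hp => Finset.le_max' _ _ (Finset.mem_image_of_mem _ hp)
    have hKle : ∀ r ∈ G.support, r.2 ≤ K :=
      fun r hr => Finset.le_max' _ _ (Finset.mem_image_of_mem _ hr)
    have hFrow : ∀ p ∈ F.support, p.1 = s₀ * α :=
      fun p hp => hsupp α p (Finsupp.mem_support_iff.mp hp)
    have hGrow : ∀ r ∈ G.support, r.1 = s₀ * (-α) :=
      fun r hr => hsupp (-α) r (Finsupp.mem_support_iff.mp hr)
    have hJmem : ((s₀ * α, J) : ℤ × ℕ) ∈ F.support := by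
      obtain ⟨p, hp, hp2⟩ := Finset.mem_image.mp ((F.support.image Prod.snd).max'_mem hFim)
      have : p = (s₀ * α, J) := Prod.ext (hFrow p hp) hp2
      rwa [← this]
    have hKmem : ((s₀ * (-α), K) : ℤ × ℕ) ∈ G.support := by
      obtain ⟨r, hr, hr2⟩ := Finset.mem_image.mp ((G.support.image Prod.snd).max'_mem hGim)
      have : r = (s₀ * (-α), K) := Prod.ext (hGrow r hr) hr2
      rwa [← this]
    have haJ : F (s₀ * α, J) ≠ 0 := Finsupp.mem_support_iff.mp hJmem
    have hbK : G (s₀ * (-α), K) ≠ 0 := Finsupp.mem_support_iff.mp hKmem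
    -- bracket relation
    have h1 := hW α (-α)
    rw [add_neg_cancel, hc] at h1
    have hbr := brack_repr q L hL (Lbar α) (Lbar (-α)) (0, J + K)
    rw [h1] at hbr
    -- compute LHS
    have hlhs : L.repr (((-α - α : ℤ) : ℂ) • c • L (0, 0)) ((0 : ℤ), J + K)
        = ((-α - α : ℤ) : ℂ) * c * (if J + K = 0 then 1 else 0) := by
      rw [map_smul, map_smul, Module.Basis.repr_self]
      simp only [Finsupp.smul_apply, Finsupp.single_apply, smul_eq_mul]
      by_cases h : J + K = 0
      · simp [h]
      · simp [h, Ne.symm h, Prod.ext_iff]; exact fun hJ0 hK0 => absurd (by omega : J + K = 0) h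
    -- compute RHS : single surviving term
    have hrhs : (∑ p ∈ F.support, ∑ r ∈ G.support,
        F p * G r * (((r.1 * ((p.2 : ℤ) + q) - p.1 * ((r.2 : ℤ) + q)) : ℤ) : ℂ) *
        (if (p.1 + r.1, p.2 + r.2) = ((0 : ℤ), J + K) then 1 else 0))
        = F (s₀ * α, J) * G (s₀ * (-α), K) *
          (((s₀ * (-α) * ((J : ℤ) + q) - s₀ * α * ((K : ℤ) + q)) : ℤ) : ℂ) := by
      rw [Finset.sum_eq_single_of_mem ((s₀ * α, J) : ℤ × ℕ) hJmem]
      · rw [Finset.sum_eq_single_of_mem ((s₀ * (-α), K) : ℤ × ℕ) hKmem]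
        · have : ((s₀ * α + s₀ * (-α), J + K) : ℤ × ℕ) = ((0 : ℤ), J + K) := by
            simp [Prod.ext_iff]
          rw [if_pos this, mul_one]
        · intro r hr hrne
          have h1r : r.1 = s₀ * (-α) := hGrow r hr
          have h2r : r.2 ≠ K := fun h => hrne (Prod.ext h1r h)
          have h3r : r.2 < K := lt_of_le_of_ne (hKle r hr) h2r
          rw [if_neg, mul_zero]
          intro h
          have := (Prod.ext_iff.mp h).2
          omega
      · intro p hp hpne
        apply Finset.sum_eq_zero
        intro r hr
        have h1p : p.1 = s₀ * α := hFrow p hp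
        have h2p : p.2 ≠ J := fun h => hpne (Prod.ext h1p h)
        have h3p : p.2 < J := lt_of_le_of_ne (hJle p hp) h2p
        rw [if_neg, mul_zero]
        intro h
        have := (Prod.ext_iff.mp h).2
        have := hKle r hr
        omega
    rw [hlhs, hrhs] at hbr
    -- deduce J = 0 and K = 0
    have hJK : J + K = 0 := by
      by_contra hJK
      rw [if_neg hJK, mul_zero] at hbr
      have hcoef : ((s₀ * (-α) * ((J : ℤ) + q) - s₀ * α * ((K : ℤ) + q)) : ℤ) ≠ 0 := by
        have : (s₀ * (-α) * ((J : ℤ) + q) - s₀ * α * ((K : ℤ) + q)) =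
            -(s₀ * α * ((J : ℤ) + K + 2 * q)) := by ring
        rw [this]
        intro h
        have := neg_eq_zero.mp h
        rcases mul_eq_zero.mp this with h' | h'
        · rcases mul_eq_zero.mp h' with h'' | h''
          · exact hs0ne h''
          · exact hα h''
        · omega
      have : F (s₀ * α, J) * G (s₀ * (-α), K) *
          (((s₀ * (-α) * ((J : ℤ) + q) - s₀ * α * ((K : ℤ) + q)) : ℤ) : ℂ) ≠ 0 :=
        mul_ne_zero (mul_ne_zero haJ hbK) (Int.cast_ne_zero.mpr hcoef)
      exact this hbr.symm
    have hJ0 : J = 0 := by omega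
    -- support of F is contained in {(s₀ * α, 0)}
    have hsub : F.support ⊆ {((s₀ * α, 0) : ℤ × ℕ)} := by
      intro p hp
      have h1p : p.1 = s₀ * α := hFrow p hp
      have h2p : p.2 = 0 := by have := hJle p hp; omega
      simp [Finset.mem_singleton, Prod.ext_iff, h1p, h2p]
    have hFeq : F = Finsupp.single ((s₀ * α, 0) : ℤ × ℕ) (F (s₀ * α, 0)) :=
      Finsupp.support_subset_singleton.mp hsub
    refine ⟨F (s₀ * α, 0), L.repr.injective ?_⟩
    rw [map_smul, Module.Basis.repr_self, Finsupp.smul_single', mul_one]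
    exact hF.symm.trans hFeq
  refine ⟨s₀, hs0ne, fun α => ?_⟩
  rcases eq_or_ne α 0 with rfl | hα
  · exact ⟨c, by simpa using hc⟩
  · exact main α hα
end

section
/- For every μ ∈ ℂ* the map L_α ↦ μ^α L_α and for every s ∈ {±1} the map L_α ↦ s L_{sα} are Lie algebra automorphisms of the Witt algebra Vir; moreover every automorphism of Vir has the form L_α ↦ s μ^α L_{sα} for some μ ∈ ℂ* and s ∈ {±1}, so that Aut(Vir) is isomorphic to the semidirect product ℂ* ⋊ ℤ/2ℤ. -/
/-- The action of the order-two group `ℤˣ ≅ ℤ/2ℤ` on `ℂ* = ℂˣ` in which the nontrivial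
element acts by inversion `μ ↦ μ⁻¹`. -/
def wittAct : ℤˣ →* MulAut ℂˣ where
  toFun s := if s = 1 then MulEquiv.refl ℂˣ else MulEquiv.inv ℂˣ
  map_one' := rfl
  map_mul' a b := by
    rcases Int.units_eq_one_or a with ha | ha <;> rcases Int.units_eq_one_or b with hb | hb <;>
      subst ha <;> subst hb <;> ext x <;> simp [MulAut.mul_apply]

/-- The automorphism group of a complex Lie algebra, realized as the subgroup of linear
automorphisms preserving the bracket. -/
def lieAutGroup (B : Type) [LieRing B] [LieAlgebra ℂ B] : Subgroup (B ≃ₗ[ℂ] B) where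
  carrier := {σ | ∀ x y : B, σ ⁅x, y⁆ = ⁅σ x, σ y⁆}
  one_mem' := by intro x y; rfl
  mul_mem' := by
    intro σ τ hσ hτ x y
    show σ (τ ⁅x, y⁆) = ⁅σ (τ x), σ (τ y)⁆
    rw [hτ, hσ]
  inv_mem' := by
    intro σ hσ x y
    apply σ.injective
    have h : ∀ z : B, σ (σ⁻¹ z) = z := fun z => σ.apply_symm_apply z
    rw [hσ, h, h, h]


section WittAux

set_option maxHeartbeats 1000000

variable {W : Type} [LieRing W] [LieAlgebra ℂ W]

theorem lie_hom_of_basis (L : Module.Basis ℤ ℂ W) (f : W →ₗ[ℂ] W)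
    (h : ∀ α β : ℤ, f ⁅L α, L β⁆ = ⁅f (L α), f (L β)⁆) (x y : W) :
    f ⁅x, y⁆ = ⁅f x, f y⁆ := by
  let ad : W →ₗ[ℂ] Module.End ℂ W := (LieAlgebra.ad ℂ W : W →ₗ[ℂ] Module.End ℂ W)
  let F1 : W →ₗ[ℂ] W →ₗ[ℂ] W := LinearMap.compr₂ ad f
  let F2 : W →ₗ[ℂ] W →ₗ[ℂ] W := LinearMap.compl₁₂ ad f f
  have hF : F1 = F2 := by
    apply L.ext; intro α
    apply L.ext; intro β
    simpa [F1, F2, ad, LinearMap.compr₂, LinearMap.compl₁₂, LieAlgebra.ad_apply] using h α β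
  have := congrFun (congrArg (fun G => fun a b => (G a) b) hF) x
  have := congrFun this y
  simpa [F1, F2, ad, LieAlgebra.ad_apply] using this

noncomputable def wittMap (L : Module.Basis ℤ ℂ W) (μ : ℂ) (s : ℤ) : W →ₗ[ℂ] W :=
  L.constr ℂ fun α => ((s : ℂ) * μ ^ α) • L (s * α)

theorem wittMap_apply (L : Module.Basis ℤ ℂ W) (μ : ℂ) (s : ℤ) (α : ℤ) :
    wittMap L μ s (L α) = ((s : ℂ) * μ ^ α) • L (s * α) :=
  Module.Basis.constr_basis L ℂ _ α

noncomputable def wittEquiv (L : Module.Basis ℤ ℂ W) (μ : ℂ) (hμ : μ ≠ 0) (s : ℤ)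
    (hs : s = 1 ∨ s = -1) : W ≃ₗ[ℂ] W := by
  refine LinearEquiv.ofLinear (wittMap L μ s) (wittMap L (μ ^ (-s)) s) ?_ ?_ <;>
  · apply L.ext; intro α
    rcases hs with rfl | rfl <;>
      simp [wittMap_apply, zpow_neg, smul_smul, inv_zpow, zpow_one, mul_assoc] <;>
      first
        | rw [inv_mul_cancel₀ (zpow_ne_zero α hμ), one_smul]
        | rw [mul_inv_cancel₀ (zpow_ne_zero α hμ), one_smul]

theorem wittEquiv_apply (L : Module.Basis ℤ ℂ W) (μ : ℂ) (hμ : μ ≠ 0) (s : ℤ)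
    (hs : s = 1 ∨ s = -1) (α : ℤ) :
    wittEquiv L μ hμ s hs (L α) = ((s : ℂ) * μ ^ α) • L (s * α) := by
  simp [wittEquiv, wittMap_apply]

theorem wittEquiv_mem (L : Module.Basis ℤ ℂ W)
    (hL : ∀ α β : ℤ, ⁅L α, L β⁆ = ((β - α : ℤ) : ℂ) • L (α + β))
    (μ : ℂ) (hμ : μ ≠ 0) (s : ℤ) (hs : s = 1 ∨ s = -1) :
    wittEquiv L μ hμ s hs ∈ lieAutGroup W := by
  intro x y
  refine lie_hom_of_basis L (wittEquiv L μ hμ s hs).toLinearMap (fun α β => ?_) x y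
  show wittEquiv L μ hμ s hs ⁅L α, L β⁆ = ⁅wittEquiv L μ hμ s hs (L α), wittEquiv L μ hμ s hs (L β)⁆
  rw [hL, map_smul, wittEquiv_apply, wittEquiv_apply, wittEquiv_apply, smul_lie, lie_smul, hL,
    smul_smul, smul_smul, smul_smul]
  rw [show s * α + s * β = s * (α + β) by ring]
  congr 1
  rcases hs with rfl | rfl <;> push_cast <;>
    rw [zpow_add₀ hμ] <;> ring

theorem sum_lie_sum' (s t : Finset ℤ) (f g : ℤ → W) :
    ⁅∑ a ∈ s, f a, ∑ b ∈ t, g b⁆ = ∑ a ∈ s, ∑ b ∈ t, ⁅f a, g b⁆ := by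
  let B : W →ₗ[ℂ] Module.End ℂ W := (LieAlgebra.ad ℂ W : W →ₗ[ℂ] Module.End ℂ W)
  have hB : ∀ x y : W, B x y = ⁅x, y⁆ := fun x y => rfl
  calc ⁅∑ a ∈ s, f a, ∑ b ∈ t, g b⁆ = B (∑ a ∈ s, f a) (∑ b ∈ t, g b) := rfl
    _ = ∑ a ∈ s, B (f a) (∑ b ∈ t, g b) := by
        rw [map_sum]; simp [LinearMap.coe_sum]; exact Finset.sum_comm
    _ = ∑ a ∈ s, ∑ b ∈ t, ⁅f a, g b⁆ := by
        refine Finset.sum_congr rfl fun a _ => ?_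
        rw [map_sum]; rfl

theorem coeff_bracket (L : Module.Basis ℤ ℂ W)
    (hL : ∀ α β : ℤ, ⁅L α, L β⁆ = ((β - α : ℤ) : ℂ) • L (α + β))
    (x y : W) (γ : ℤ) :
    L.repr ⁅x, y⁆ γ =
      ∑ α ∈ (L.repr x).support, ∑ β ∈ (L.repr y).support,
        L.repr x α * L.repr y β * ((β - α : ℤ) : ℂ) *
          (if α + β = γ then 1 else 0) := by
  conv_lhs => rw [← L.linearCombination_repr x, ← L.linearCombination_repr y]
  rw [Finsupp.linearCombination_apply, Finsupp.linearCombination_apply,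
    Finsupp.sum, Finsupp.sum, sum_lie_sum']
  simp only [smul_lie, lie_smul, hL]
  simp only [map_sum, map_smul, Finsupp.coe_finset_sum, Finsupp.coe_smul,
    Finset.sum_apply, Pi.smul_apply, Module.Basis.repr_self, smul_eq_mul]
  refine Finset.sum_congr rfl fun α hα => Finset.sum_congr rfl fun β hβ => ?_
  rw [Finsupp.single_apply]
  split <;> ring

section
variable (L : Module.Basis ℤ ℂ W)
    (hL : ∀ α β : ℤ, ⁅L α, L β⁆ = ((β - α : ℤ) : ℂ) • L (α + β))
include hL

theorem coeff_low_zero {x y : W} {a p : ℤ}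
    (hx : ∀ α ∈ (L.repr x).support, a ≤ α) (hy : ∀ β ∈ (L.repr y).support, p ≤ β)
    {γ : ℤ} (hγ : γ < a + p) : L.repr ⁅x, y⁆ γ = 0 := by
  rw [coeff_bracket L hL]
  refine Finset.sum_eq_zero fun α hα => Finset.sum_eq_zero fun β hβ => ?_
  have h1 := hx α hα; have h2 := hy β hβ
  rw [if_neg (by omega)]; ring

theorem coeff_low {x y : W} {a p : ℤ}
    (hx : ∀ α ∈ (L.repr x).support, a ≤ α) (hy : ∀ β ∈ (L.repr y).support, p ≤ β) :
    L.repr ⁅x, y⁆ (a + p) = L.repr x a * L.repr y p * ((p - a : ℤ) : ℂ) := by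
  rw [coeff_bracket L hL]
  rw [Finset.sum_eq_single a]
  · rw [Finset.sum_eq_single p]
    · rw [if_pos rfl, mul_one]
    · intro β hβ hne
      have := hy β hβ
      rw [if_neg (by omega)]; ring
    · intro h
      rw [Finsupp.notMem_support_iff.1 h]; split <;> ring
  · intro α hα hne
    refine Finset.sum_eq_zero fun β hβ => ?_
    have h1 := hx α hα; have h2 := hy β hβ
    rw [if_neg (by omega)]; ring
  · intro h
    rw [Finsupp.notMem_support_iff.1 h]
    refine Finset.sum_eq_zero fun β hβ => ?_; split <;> ring

theorem coeff_high_zero {x y : W} {b q : ℤ}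
    (hx : ∀ α ∈ (L.repr x).support, α ≤ b) (hy : ∀ β ∈ (L.repr y).support, β ≤ q)
    {γ : ℤ} (hγ : b + q < γ) : L.repr ⁅x, y⁆ γ = 0 := by
  rw [coeff_bracket L hL]
  refine Finset.sum_eq_zero fun α hα => Finset.sum_eq_zero fun β hβ => ?_
  have h1 := hx α hα; have h2 := hy β hβ
  rw [if_neg (by omega)]; ring

theorem coeff_high {x y : W} {b q : ℤ}
    (hx : ∀ α ∈ (L.repr x).support, α ≤ b) (hy : ∀ β ∈ (L.repr y).support, β ≤ q) :
    L.repr ⁅x, y⁆ (b + q) = L.repr x b * L.repr y q * ((q - b : ℤ) : ℂ) := by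
  rw [coeff_bracket L hL]
  rw [Finset.sum_eq_single b]
  · rw [Finset.sum_eq_single q]
    · rw [if_pos rfl, mul_one]
    · intro β hβ hne
      have := hy β hβ
      rw [if_neg (by omega)]; ring
    · intro h
      rw [Finsupp.notMem_support_iff.1 h]; split <;> ring
  · intro α hα hne
    refine Finset.sum_eq_zero fun β hβ => ?_
    have h1 := hx α hα; have h2 := hy β hβ
    rw [if_neg (by omega)]; ring
  · intro h
    rw [Finsupp.notMem_support_iff.1 h]
    refine Finset.sum_eq_zero fun β hβ => ?_; split <;> ring

theorem coeff_L0 (y : W) (γ : ℤ) :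
    L.repr ⁅L 0, y⁆ γ = (γ : ℂ) * L.repr y γ := by
  rw [coeff_bracket L hL]
  have hsupp : (L.repr (L 0)).support = {0} := by
    rw [Module.Basis.repr_self]; exact Finsupp.support_single_ne_zero 0 one_ne_zero
  rw [hsupp, Finset.sum_singleton]
  simp only [Module.Basis.repr_self, Finsupp.single_apply, if_pos rfl, zero_add, sub_zero]
  rw [Finset.sum_eq_single γ]
  · by_cases h : γ ∈ (L.repr y).support
    · simp [mul_comm]
    · simp [Finsupp.notMem_support_iff.1 h]
  · intro β hβ hne; rw [if_neg hne]; ring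
  · intro h; rw [Finsupp.notMem_support_iff.1 h]; split <;> ring
end

theorem witt_classify (L : Module.Basis ℤ ℂ W)
    (hL : ∀ α β : ℤ, ⁅L α, L β⁆ = ((β - α : ℤ) : ℂ) • L (α + β))
    (σ : W ≃ₗ[ℂ] W) (hσ : ∀ x y : W, σ ⁅x, y⁆ = ⁅σ x, σ y⁆) :
    ∃ (μ : ℂ) (s : ℤ), μ ≠ 0 ∧ (s = 1 ∨ s = -1) ∧
      ∀ α : ℤ, σ (L α) = ((s : ℂ) * μ ^ α) • L (s * α) := by
  classical
  set e : ℤ → W := fun lam => σ (L lam) with he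
  have hE : ∀ lam, (L.map σ) lam = e lam := fun lam => Module.Basis.map_apply L σ lam
  have he_ne : ∀ lam, e lam ≠ 0 := fun lam => hE lam ▸ (L.map σ).ne_zero lam
  have hrel : ∀ α β : ℤ, ⁅e α, e β⁆ = ((β - α : ℤ) : ℂ) • e (α + β) := by
    intro α β
    rw [he]
    simp only
    rw [← hσ, hL, map_smul]
  set v : W := e 0 with hv
  have heig : ∀ lam : ℤ, ⁅v, e lam⁆ = (lam : ℂ) • e lam := by
    intro lam
    have := hrel 0 lam
    simpa using this
  set c := L.repr v with hc
  set d : ℤ → (ℤ →₀ ℂ) := fun lam => L.repr (e lam) with hd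
  have hd_ne : ∀ lam, d lam ≠ 0 := by
    intro lam h
    exact he_ne lam (by simpa [hd, LinearEquiv.map_eq_zero_iff] using h)
  have hdsupp : ∀ lam, (d lam).support.Nonempty :=
    fun lam => Finsupp.support_nonempty_iff.2 (hd_ne lam)
  have hcsupp : c.support.Nonempty := hdsupp 0
  set a := c.support.min' hcsupp with ha
  set b := c.support.max' hcsupp with hb
  have hca : c a ≠ 0 := Finsupp.mem_support_iff.1 (c.support.min'_mem hcsupp)
  have hcb : c b ≠ 0 := Finsupp.mem_support_iff.1 (c.support.max'_mem hcsupp)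
  have hax : ∀ α ∈ c.support, a ≤ α := fun α h => c.support.min'_le α h
  have hbx : ∀ α ∈ c.support, α ≤ b := fun α h => c.support.le_max' α h
  set p : ℤ → ℤ := fun lam => ((d lam).support.min' (hdsupp lam)) with hp
  set q : ℤ → ℤ := fun lam => ((d lam).support.max' (hdsupp lam)) with hq
  have hdp : ∀ lam, d lam (p lam) ≠ 0 :=
    fun lam => Finsupp.mem_support_iff.1 (Finset.min'_mem _ _)
  have hdq : ∀ lam, d lam (q lam) ≠ 0 :=
    fun lam => Finsupp.mem_support_iff.1 (Finset.max'_mem _ _)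
  have hpx : ∀ lam, ∀ β ∈ (d lam).support, p lam ≤ β :=
    fun lam β h => Finset.min'_le _ β h
  have hqx : ∀ lam, ∀ β ∈ (d lam).support, β ≤ q lam :=
    fun lam β h => Finset.le_max' _ β h
  have hpq : ∀ lam, p lam ≤ q lam := fun lam => Finset.min'_le _ _ (Finset.max'_mem _ _)
  -- the coefficient of ⁅v, e lam⁆ equals lam • coefficient of e lam
  have hbrk : ∀ lam γ : ℤ, L.repr ⁅v, e lam⁆ γ = (lam : ℂ) * d lam γ := by
    intro lam γ
    rw [heig lam, map_smul]
    simp [hd, smul_eq_mul]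
  -- Step A : a ≤ 0
  have ha0 : a ≤ 0 := by
    by_contra h
    push_neg at h
    have h0 : L.repr ⁅v, e 1⁆ (p 1) = 0 :=
      coeff_low_zero L hL hax (hpx 1) (by omega)
    rw [hbrk 1 (p 1)] at h0
    simp at h0
    exact hdp 1 h0
  -- Step B : 0 ≤ b
  have hb0 : 0 ≤ b := by
    by_contra h
    push_neg at h
    have h0 : L.repr ⁅v, e 1⁆ (q 1) = 0 :=
      coeff_high_zero L hL hbx (hqx 1) (by omega)
    rw [hbrk 1 (q 1)] at h0
    simp at h0
    exact hdq 1 h0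
  have hnotmem : ∀ lam γ : ℤ, γ < p lam → d lam γ = 0 := by
    intro lam γ h
    refine Finsupp.notMem_support_iff.1 fun hmem => ?_
    exact absurd (hpx lam γ hmem) (by omega)
  have hnotmem' : ∀ lam γ : ℤ, q lam < γ → d lam γ = 0 := by
    intro lam γ h
    refine Finsupp.notMem_support_iff.1 fun hmem => ?_
    exact absurd (hqx lam γ hmem) (by omega)
  -- if a < 0 then min of support of every e lam equals a
  have hlowfix : a < 0 → ∀ lam : ℤ, p lam = a := by
    intro hlt lam
    have h1 : L.repr ⁅v, e lam⁆ (a + p lam) =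
        c a * d lam (p lam) * ((p lam - a : ℤ) : ℂ) := coeff_low L hL hax (hpx lam)
    rw [hbrk lam (a + p lam), hnotmem lam (a + p lam) (by omega), mul_zero] at h1
    have := mul_eq_zero.1 h1.symm
    rcases this with h2 | h2
    · rcases mul_eq_zero.1 h2 with h3 | h3
      · exact absurd h3 hca
      · exact absurd h3 (hdp lam)
    · push_cast at h2
      have h3 : (p lam : ℂ) = (a : ℂ) := sub_eq_zero.1 h2
      exact_mod_cast h3
  have hhighfix : 0 < b → ∀ lam : ℤ, q lam = b := by
    intro hlt lam
    have h1 : L.repr ⁅v, e lam⁆ (b + q lam) =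
        c b * d lam (q lam) * ((q lam - b : ℤ) : ℂ) := coeff_high L hL hbx (hqx lam)
    rw [hbrk lam (b + q lam), hnotmem' lam (b + q lam) (by omega), mul_zero] at h1
    rcases mul_eq_zero.1 h1.symm with h2 | h2
    · rcases mul_eq_zero.1 h2 with h3 | h3
      · exact absurd h3 hcb
      · exact absurd h3 (hdq lam)
    · push_cast at h2
      have h3 : (q lam : ℂ) = (b : ℂ) := sub_eq_zero.1 h2
      exact_mod_cast h3
  -- Step C : a = 0 or b = 0
  have hab : a = 0 ∨ b = 0 := by
    by_contra h
    push_neg at h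
    have hlt : a < 0 := lt_of_le_of_ne ha0 h.1
    have hgt : 0 < b := lt_of_le_of_ne hb0 (Ne.symm h.2)
    -- all e lam lie in the span of L '' Icc a b
    set S : Submodule ℂ W := Submodule.span ℂ (⇑L '' Set.Icc a b) with hS
    have hfin : FiniteDimensional ℂ S :=
      FiniteDimensional.span_of_finite ℂ ((Set.finite_Icc a b).image _)
    have hmem : ∀ lam : ℤ, e lam ∈ S := by
      intro lam
      have h1 : e lam ∈ Submodule.span ℂ (⇑L '' ((d lam).support : Set ℤ)) := by
        simpa [hd] using L.mem_span_repr_support (e lam)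
      refine Submodule.span_mono (Set.image_mono ?_) h1
      intro β hβ
      have hβ' : β ∈ (d lam).support := hβ
      constructor
      · rw [← hlowfix hlt lam]; exact hpx lam β hβ'
      · rw [← hhighfix hgt lam]; exact hqx lam β hβ'
    have hli : LinearIndependent ℂ fun lam : ℤ => (⟨e lam, hmem lam⟩ : S) := by
      have h1 : LinearIndependent ℂ e := by
        have := (L.map σ).linearIndependent
        simpa [funext hE] using this
      exact h1.of_comp S.subtype
    exact Module.Finite.not_linearIndependent_of_infinite _ hli
  -- Step D : the support of c is exactly {0}
  have habz : a = 0 ∧ b = 0 := by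
    rcases hab with ha' | hb'
    · refine ⟨ha', ?_⟩
      by_contra hbne
      have hgt : 0 < b := lt_of_le_of_ne hb0 (Ne.symm hbne)
      have hqb : ∀ lam : ℤ, q lam = b := hhighfix hgt
      have hc0 : c 0 ≠ 0 := ha' ▸ hca
      have hplam : ∀ lam : ℤ, (c 0) * (p lam : ℂ) = (lam : ℂ) := by
        intro lam
        have h1 : L.repr ⁅v, e lam⁆ (a + p lam) =
            c a * d lam (p lam) * ((p lam - a : ℤ) : ℂ) := coeff_low L hL hax (hpx lam)
        rw [hbrk lam (a + p lam), ha', zero_add] at h1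
        have h2 : (lam : ℂ) * d lam (p lam) = c 0 * (p lam : ℂ) * d lam (p lam) := by
          rw [h1]; push_cast; ring
        exact (mul_right_cancel₀ (hdp lam) h2).symm
      set t : ℤ := p 1 with htdef
      have ht1 : (c 0) * (t : ℂ) = 1 := by simpa using hplam 1
      have ht0 : t ≠ 0 := by
        intro h0
        rw [h0] at ht1
        simp at ht1
      have hpt : ∀ lam : ℤ, p lam = t * lam := by
        intro lam
        have h2 : (c 0) * ((p lam : ℂ) - (t * lam : ℤ)) = 0 := by
          push_cast
          rw [mul_sub]
          have := hplam lam
          have h3 : c 0 * ((t:ℂ) * lam) = lam := by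
            rw [← mul_assoc, ht1, one_mul]
          rw [this, h3, sub_self]
        rcases mul_eq_zero.1 h2 with h3 | h3
        · exact absurd h3 hc0
        · have h4 : ((p lam : ℤ) : ℂ) = ((t * lam : ℤ) : ℂ) := by
            push_cast at h3 ⊢
            linear_combination h3
          exact_mod_cast h4
      have hts : 1 ≤ t * t := by
        rcases lt_or_gt_of_ne ht0 with h | h <;> nlinarith
      have h5 : p (t * (b + 1)) = t * (t * (b + 1)) := hpt (t * (b + 1))
      have h6 : p (t * (b + 1)) ≤ q (t * (b + 1)) := hpq _
      rw [hqb] at h6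
      have h7 : b + 1 ≤ (t * t) * (b + 1) := le_mul_of_one_le_left (by omega) hts
      rw [mul_assoc] at h7
      omega
    · refine ⟨?_, hb'⟩
      by_contra hane
      have hlt : a < 0 := lt_of_le_of_ne ha0 hane
      have hpa : ∀ lam : ℤ, p lam = a := hlowfix hlt
      have hc0 : c 0 ≠ 0 := hb' ▸ hcb
      have hplam : ∀ lam : ℤ, (c 0) * (q lam : ℂ) = (lam : ℂ) := by
        intro lam
        have h1 : L.repr ⁅v, e lam⁆ (b + q lam) =
            c b * d lam (q lam) * ((q lam - b : ℤ) : ℂ) := coeff_high L hL hbx (hqx lam)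
        rw [hbrk lam (b + q lam), hb', zero_add] at h1
        have h2 : (lam : ℂ) * d lam (q lam) = c 0 * (q lam : ℂ) * d lam (q lam) := by
          rw [h1]; push_cast; ring
        exact (mul_right_cancel₀ (hdq lam) h2).symm
      set t : ℤ := q 1 with htdef
      have ht1 : (c 0) * (t : ℂ) = 1 := by simpa using hplam 1
      have ht0 : t ≠ 0 := by
        intro h0
        rw [h0] at ht1
        simp at ht1
      have hpt : ∀ lam : ℤ, q lam = t * lam := by
        intro lam
        have h2 : (c 0) * ((q lam : ℂ) - (t * lam : ℤ)) = 0 := by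
          push_cast
          rw [mul_sub]
          have := hplam lam
          have h3 : c 0 * ((t:ℂ) * lam) = lam := by
            rw [← mul_assoc, ht1, one_mul]
          rw [this, h3, sub_self]
        rcases mul_eq_zero.1 h2 with h3 | h3
        · exact absurd h3 hc0
        · have h4 : ((q lam : ℤ) : ℂ) = ((t * lam : ℤ) : ℂ) := by
            push_cast at h3 ⊢
            linear_combination h3
          exact_mod_cast h4
      have hts : 1 ≤ t * t := by
        rcases lt_or_gt_of_ne ht0 with h | h <;> nlinarith
      have h5 : q (t * (a - 1)) = t * (t * (a - 1)) := hpt (t * (a - 1))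
      have h6 : p (t * (a - 1)) ≤ q (t * (a - 1)) := hpq _
      rw [hpa] at h6
      have h7 : (t * t) * (a - 1) ≤ a - 1 := by
        have := mul_le_mul_of_nonpos_right hts (by omega : a - 1 ≤ 0)
        linarith
      rw [mul_assoc] at h7
      omega
  obtain ⟨ha', hb'⟩ := habz
  have hc0 : c 0 ≠ 0 := ha' ▸ hca
  -- v = c 0 • L 0
  have hcrepr : c = Finsupp.single 0 (c 0) := by
    ext γ
    rcases eq_or_ne γ 0 with rfl | hγ
    · simp
    · have hnot : γ ∉ c.support := by
        intro hmem
        have := hax γ hmem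
        have := hbx γ hmem
        omega
      rw [Finsupp.notMem_support_iff.1 hnot, Finsupp.single_apply, if_neg (Ne.symm hγ)]
  have hvL : v = c 0 • L 0 := by
    apply L.repr.injective
    rw [map_smul, Module.Basis.repr_self, Finsupp.smul_single, smul_eq_mul, mul_one]
    exact hcrepr
  -- Step E : support of each d lam is contained in {β | c 0 * β = lam}
  have hkey : ∀ lam β : ℤ, β ∈ (d lam).support → (c 0) * (β : ℂ) = (lam : ℂ) := by
    intro lam β hmem
    have h1 : L.repr ⁅v, e lam⁆ β = c 0 * ((β : ℂ) * d lam β) := by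
      rw [hvL, smul_lie, map_smul, Finsupp.smul_apply, coeff_L0 L hL (e lam) β, smul_eq_mul]
    rw [hbrk lam β] at h1
    have hdβ : d lam β ≠ 0 := Finsupp.mem_support_iff.1 hmem
    have h2 : (lam : ℂ) * d lam β = (c 0 * β) * d lam β := by rw [h1]; ring
    exact (mul_right_cancel₀ hdβ h2).symm
  obtain ⟨t, htmem⟩ := hdsupp 1
  have ht1 : (c 0) * (t : ℂ) = 1 := by simpa using hkey 1 t htmem
  have ht0 : t ≠ 0 := by
    intro h0
    rw [h0] at ht1
    simp at ht1
  have hsup : ∀ lam β : ℤ, β ∈ (d lam).support → β = t * lam := by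
    intro lam β hmem
    have h1 := hkey lam β hmem
    have h2 : (c 0) * ((β : ℂ) - (t * lam : ℤ)) = 0 := by
      push_cast
      rw [mul_sub, h1]
      have h3 : c 0 * ((t:ℂ) * lam) = lam := by rw [← mul_assoc, ht1, one_mul]
      rw [h3, sub_self]
    rcases mul_eq_zero.1 h2 with h3 | h3
    · exact absurd h3 hc0
    · have h4 : ((β : ℤ) : ℂ) = ((t * lam : ℤ) : ℂ) := by
        push_cast at h3 ⊢
        linear_combination h3
      exact_mod_cast h4
  set dd : ℤ → ℂ := fun lam => d lam (t * lam) with hdd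
  have hddne : ∀ lam, dd lam ≠ 0 := by
    intro lam h0
    obtain ⟨β, hβ⟩ := hdsupp lam
    have := hsup lam β hβ
    rw [this] at hβ
    exact (Finsupp.mem_support_iff.1 hβ) h0
  have heL : ∀ lam : ℤ, e lam = dd lam • L (t * lam) := by
    intro lam
    apply L.repr.injective
    rw [map_smul, Module.Basis.repr_self]
    ext γ
    by_cases hγ : γ = t * lam
    · subst hγ
      simp [hdd, hd]
    · have hnot : γ ∉ (d lam).support := fun hmem => hγ (hsup lam γ hmem)
      rw [show (L.repr (e lam)) γ = d lam γ from rfl, Finsupp.notMem_support_iff.1 hnot]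
      simp [Finsupp.single_apply, Ne.symm hγ]
  -- Step F : t = ± 1
  have htpm : t = 1 ∨ t = -1 := by
    have hex : ∃ lam : ℤ, t * lam = 1 := by
      by_contra hno
      push_neg at hno
      have hφe : ∀ lam : ℤ, L.coord 1 (e lam) = 0 := by
        intro lam
        rw [heL lam, map_smul, Module.Basis.coord_apply, Module.Basis.repr_self,
          Finsupp.single_apply, if_neg (hno lam)]
        simp
      have hsp : Submodule.span ℂ (Set.range e) = ⊤ := by
        have h1 := (L.map σ).span_eq
        rwa [show Set.range (L.map σ) = Set.range e from by
          ext w; constructor <;> rintro ⟨lam, rfl⟩ <;> exact ⟨lam, by rw [hE]⟩] at h1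
      have hle : Submodule.span ℂ (Set.range e) ≤ LinearMap.ker (L.coord 1) := by
        rw [Submodule.span_le]
        rintro w ⟨lam, rfl⟩
        exact hφe lam
      rw [hsp] at hle
      have : L.coord 1 (L 1) = 0 := hle (Submodule.mem_top)
      rw [Module.Basis.coord_apply, Module.Basis.repr_self] at this
      simp at this
    obtain ⟨lam, hlam⟩ := hex
    exact Int.isUnit_iff.1 (IsUnit.of_mul_eq_one lam hlam)
  have ht2 : (t : ℂ) * (t : ℂ) = 1 := by
    rcases htpm with rfl | rfl <;> norm_num
  -- Step G : multiplicativity of the coefficients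
  have hGrel : ∀ α β : ℤ, α ≠ β → (t : ℂ) * dd α * dd β = dd (α + β) := by
    intro α β hne
    have h1 := hrel α β
    rw [heL α, heL β, heL (α + β), smul_lie, lie_smul, hL,
      show t * α + t * β = t * (α + β) by ring] at h1
    have h2 := congrArg (fun w => L.repr w (t * (α + β))) h1
    simp only [map_smul, Module.Basis.repr_self, Finsupp.smul_apply, Finsupp.single_eq_same,
      smul_eq_mul] at h2
    have hβα : ((β - α : ℤ) : ℂ) ≠ 0 := Int.cast_ne_zero.2 (sub_ne_zero.2 (Ne.symm hne))
    apply mul_left_cancel₀ hβα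
    push_cast at h2 ⊢
    linear_combination h2
  set f : ℤ → ℂ := fun n => (t : ℂ) * dd n with hf
  have hfne : ∀ n, f n ≠ 0 := by
    intro n h0
    rcases mul_eq_zero.1 h0 with h | h
    · rw [Int.cast_eq_zero] at h
      exact ht0 h
    · exact hddne n h
  have hf0 : f 0 = 1 := by
    have h1 := hGrel 0 1 (by omega)
    norm_num at h1
    have h2 : (t : ℂ) * dd 0 * dd 1 = 1 * dd 1 := by rw [h1, one_mul]
    have h3 := mul_right_cancel₀ (hddne 1) h2
    simpa [hf] using h3
  have hfmul' : ∀ α β : ℤ, α ≠ β → f (α + β) = f α * f β := by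
    intro α β hne
    have h1 := hGrel α β hne
    simp only [hf]
    linear_combination (-(t : ℂ)) * h1
  have hfmul : ∀ α β : ℤ, f (α + β) = f α * f β := by
    intro α β
    rcases ne_or_eq α β with hne | rfl
    · exact hfmul' α β hne
    · rcases eq_or_ne α 0 with rfl | hα
      · norm_num [hf0]
      · have habs1 : α ≤ |α| := le_abs_self α
        have habs2 : -|α| ≤ α := neg_abs_le α
        set k : ℤ := |α| + 1 with hk
        calc f (α + α) = f ((α - k) + (α + k)) := by rw [show α + α = (α - k) + (α + k) by ring]
          _ = f (α - k) * f (α + k) := hfmul' _ _ (by omega)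
          _ = (f α * f (-k)) * (f α * f k) := by
              rw [show α - k = α + (-k) by ring, hfmul' α (-k) (by omega), hfmul' α k (by omega)]
          _ = (f α * f α) * (f (-k) * f k) := by ring
          _ = f α * f α := by
              rw [← hfmul' (-k) k (by omega), neg_add_cancel, hf0, mul_one]
  have hμ0 : f 1 ≠ 0 := hfne 1
  have hfz : ∀ n : ℤ, f n = f 1 ^ n := by
    intro n
    induction n using Int.induction_on with
    | zero => rw [hf0, zpow_zero]
    | succ m ih => rw [hfmul (m : ℤ) 1, ih, ← zpow_add_one₀ hμ0]
    | pred m ih =>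
        have h1 := hfmul (-(m : ℤ) - 1) 1
        rw [show -(m : ℤ) - 1 + 1 = -(m : ℤ) by ring, ih] at h1
        have h2 : f (-(m : ℤ) - 1) = f 1 ^ (-(m : ℤ)) / f 1 :=
          eq_div_of_mul_eq hμ0 h1.symm
        rw [h2, div_eq_mul_inv, ← zpow_sub_one₀ hμ0]
  refine ⟨f 1, t, hfne 1, htpm, fun α => ?_⟩
  have hcoef : ((t : ℂ) * f 1 ^ α) = dd α := by
    rw [← hfz α]
    simp only [hf]
    rw [← mul_assoc, ht2, one_mul]
  calc σ (L α) = e α := rfl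
    _ = dd α • L (t * α) := heL α
    _ = ((t : ℂ) * f 1 ^ α) • L (t * α) := by rw [hcoef]

theorem witt_iso (L : Module.Basis ℤ ℂ W)
    (hL : ∀ α β : ℤ, ⁅L α, L β⁆ = ((β - α : ℤ) : ℂ) • L (α + β)) :
    Nonempty ((lieAutGroup W) ≃* ℂˣ ⋊[wittAct] ℤˣ) := by
  classical
  have hspm : ∀ s : ℤˣ, ((s : ℤ) = 1 ∨ (s : ℤ) = -1) := by
    intro s
    rcases Int.units_eq_one_or s with h | h <;> rw [h] <;> simp
  set Ψ : ℂˣ ⋊[wittAct] ℤˣ → (lieAutGroup W) := fun x =>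
    ⟨wittEquiv L ((x.left : ℂ) ^ (x.right : ℤ))
      (zpow_ne_zero _ (Units.ne_zero x.left)) ((x.right : ℤ)) (hspm x.right),
      wittEquiv_mem L hL _ _ _ _⟩ with hΨ
  have hΨap : ∀ (x : ℂˣ ⋊[wittAct] ℤˣ) (α : ℤ),
      (Ψ x : W ≃ₗ[ℂ] W) (L α)
        = (((x.right : ℤ) : ℂ) * ((x.left : ℂ) ^ (x.right : ℤ)) ^ α) • L ((x.right : ℤ) * α) :=
    fun x α => wittEquiv_apply L _ (zpow_ne_zero _ (Units.ne_zero x.left)) _ (hspm x.right) α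
  have hmul : ∀ x y : ℂˣ ⋊[wittAct] ℤˣ, Ψ (x * y) = Ψ x * Ψ y := by
    intro x y
    apply Subtype.ext
    apply LinearEquiv.toLinearMap_injective
    apply L.ext
    intro α
    show (Ψ (x * y) : W ≃ₗ[ℂ] W) (L α) = (Ψ x : W ≃ₗ[ℂ] W) ((Ψ y : W ≃ₗ[ℂ] W) (L α))
    rw [hΨap, hΨap, map_smul, hΨap, smul_smul]
    rw [show (x * y).left = x.left * (if x.right = 1 then y.left else y.left⁻¹) from by
        change x.left * (if x.right = 1 then MulEquiv.refl ℂˣ else MulEquiv.inv ℂˣ) y.left = _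
        split <;> rfl,
      show (x * y).right = x.right * y.right from rfl]
    rcases Int.units_eq_one_or x.right with hx | hx <;>
      rcases Int.units_eq_one_or y.right with hy | hy <;>
        simp only [SemidirectProduct.mul_left, SemidirectProduct.mul_right, hx, hy,
          wittAct, MonoidHom.coe_mk, OneHom.coe_mk, if_pos, mul_one, one_mul,
          Units.val_one, Units.val_mul, Units.val_neg, Int.units_ne_iff_eq_neg] <;>
        norm_num <;>
        simp [mul_zpow, inv_zpow, mul_comm, (by decide : (-1 : ℤˣ) ≠ 1)]
  set Φ : ℂˣ ⋊[wittAct] ℤˣ →* (lieAutGroup W) := MonoidHom.mk' Ψ hmul with hΦ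
  have hscal : ∀ (z : ℂ) (i : ℤ), z • L i = L i → z = 1 := by
    intro z i h
    have h2 := congrArg (fun u => L.repr u i) h
    simpa using h2
  have hinj : Function.Injective Φ := by
    rw [injective_iff_map_eq_one]
    intro x hx
    have hap : ∀ α : ℤ, (((x.right : ℤ) : ℂ) * ((x.left : ℂ) ^ (x.right : ℤ)) ^ α)
        • L ((x.right : ℤ) * α) = L α := by
      intro α
      rw [← hΨap x α]
      have : Ψ x = 1 := hx
      rw [this]
      rfl
    have hx1 : x.right = 1 := by
      rcases Int.units_eq_one_or x.right with h | h
      · exact h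
      · exfalso
        have h0 := hap 0
        rw [h, mul_zero] at h0
        simp only [zpow_zero, mul_one, Units.val_neg, Units.val_one] at h0
        have := hscal _ _ h0
        norm_num at this
    have hxl : x.left = 1 := by
      have h1 := hap 1
      rw [hx1] at h1
      simp only [Units.val_one, Int.cast_one, one_mul, zpow_one] at h1
      have := hscal _ _ h1
      ext
      simpa using this
    ext1
    · rw [hxl]; rfl
    · rw [hx1]; rfl
  have hsurj : Function.Surjective Φ := by
    rintro ⟨σ, hσ⟩
    obtain ⟨μ, s, hμ, hs, hform⟩ := witt_classify L hL σ hσ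
    have hsu : s * s = 1 := by rcases hs with rfl | rfl <;> norm_num
    set su : ℤˣ := ⟨s, s, hsu, hsu⟩ with hsud
    set uu : ℂˣ := (Units.mk0 μ hμ) ^ s with huud
    refine ⟨SemidirectProduct.mk uu su, ?_⟩
    apply Subtype.ext
    apply LinearEquiv.toLinearMap_injective
    apply L.ext
    intro α
    show (Ψ _ : W ≃ₗ[ℂ] W) (L α) = σ (L α)
    rw [hΨap, hform α]
    have hleft : ((SemidirectProduct.mk uu su : ℂˣ ⋊[wittAct] ℤˣ).left : ℂ) = (uu : ℂ) := rfl
    have hright : ((SemidirectProduct.mk uu su : ℂˣ ⋊[wittAct] ℤˣ).right : ℤ) = s := rfl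
    rw [hleft, hright]
    have huv : ((uu : ℂ) ^ s) = μ := by
      rw [huud]
      rcases hs with rfl | rfl
      · simp
      · simp [zpow_neg]
    rw [huv]
  exact ⟨(MulEquiv.ofBijective Φ ⟨hinj, hsurj⟩).symm⟩

end WittAux

/-- For the Witt algebra `Vir` (basis `{L_α : α ∈ ℤ}`, bracket
`[L_α, L_β] = (β − α) L_{α+β}`):
(1) for every `μ ∈ ℂ*` the map `L_α ↦ μ^α L_α` is an automorphism;
(2) for every `s ∈ {±1}` the map `L_α ↦ s L_{sα}` is an automorphism;
(3) every automorphism has the form `L_α ↦ s μ^α L_{sα}` with `μ ∈ ℂ*`, `s ∈ {±1}`;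
(4) `Aut(Vir) ≅ ℂ* ⋊ ℤ/2ℤ` (with `ℤ/2ℤ` acting by inversion). -/
theorem witt_automorphisms
    {W : Type} [LieRing W] [LieAlgebra ℂ W]
    (L : Module.Basis ℤ ℂ W)
    (hL : ∀ α β : ℤ, ⁅L α, L β⁆ = ((β - α : ℤ) : ℂ) • L (α + β)) :
    (∀ μ : ℂ, μ ≠ 0 → ∃ σ : W ≃ₗ[ℂ] W, σ ∈ lieAutGroup W ∧
      ∀ α : ℤ, σ (L α) = μ ^ α • L α) ∧
    (∀ s : ℤ, (s = 1 ∨ s = -1) → ∃ σ : W ≃ₗ[ℂ] W, σ ∈ lieAutGroup W ∧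
      ∀ α : ℤ, σ (L α) = (s : ℂ) • L (s * α)) ∧
    (∀ σ : W ≃ₗ[ℂ] W, σ ∈ lieAutGroup W →
      ∃ (μ : ℂ) (s : ℤ), μ ≠ 0 ∧ (s = 1 ∨ s = -1) ∧
        ∀ α : ℤ, σ (L α) = ((s : ℂ) * μ ^ α) • L (s * α)) ∧
    Nonempty ((lieAutGroup W) ≃* ℂˣ ⋊[wittAct] ℤˣ) := by
  refine ⟨?_, ?_, ?_, ?_⟩
  · intro μ hμ
    refine ⟨wittEquiv L μ hμ 1 (Or.inl rfl), wittEquiv_mem L hL μ hμ 1 (Or.inl rfl), fun α => ?_⟩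
    rw [wittEquiv_apply]
    simp
  · intro s hs
    refine ⟨wittEquiv L 1 one_ne_zero s hs, wittEquiv_mem L hL 1 one_ne_zero s hs, fun α => ?_⟩
    rw [wittEquiv_apply]
    simp [one_zpow]
  · intro σ hσ
    exact witt_classify L hL σ hσ
  · exact witt_iso L hL
end

section
/- Let q₁, q₂ be positive integers and τ : B(q₁) → B(q₂) a Lie algebra isomorphism, where {L_{α,i}} and {L'_{α,i}} denote the standard bases of B(q₁) and B(q₂) respectively. Then there exist μ ∈ ℂ* and s ∈ {±1} such that τ(L_{α,0}) = s q₁ q₂^{-1} μ^α L'_{sα,0} for all α ∈ ℤ. -/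
open Finset

namespace BlockIsoAux

/-- structure constant of the Block algebra `B(q)` on basis points. -/
def sc (q : ℕ) (x y : ℤ × ℕ) : ℂ :=
  ((y.1 * ((x.2 : ℤ) + q) - x.1 * ((y.2 : ℤ) + q) : ℤ) : ℂ)

variable {B : Type} [LieRing B] [LieAlgebra ℂ B]

lemma sum_lie' (s : Finset (ℤ × ℕ)) (f : (ℤ × ℕ) → B) (y : B) :
    ⁅∑ i ∈ s, f i, y⁆ = ∑ i ∈ s, ⁅f i, y⁆ := by
  induction s using Finset.cons_induction with
  | empty => simp
  | cons a s ha ih => rw [Finset.sum_cons, Finset.sum_cons, add_lie, ih]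

lemma lie_sum' (s : Finset (ℤ × ℕ)) (f : (ℤ × ℕ) → B) (y : B) :
    ⁅y, ∑ i ∈ s, f i⁆ = ∑ i ∈ s, ⁅y, f i⁆ := by
  induction s using Finset.cons_induction with
  | empty => simp
  | cons a s ha ih => rw [Finset.sum_cons, Finset.sum_cons, lie_add, ih]

variable (q : ℕ) (LL : Module.Basis (ℤ × ℕ) ℂ B)

lemma expand_self (a : B) : a = ∑ x ∈ (LL.repr a).support, (LL.repr a) x • LL x := by
  conv_lhs => rw [← LL.linearCombination_repr a]
  rw [Finsupp.linearCombination_apply, Finsupp.sum]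

lemma single_supp (x : B) (z : ℤ × ℕ)
    (hs : ∀ p ∈ (LL.repr x).support, p = z) :
    x = (LL.repr x) z • LL z := by
  have hsub : (LL.repr x).support ⊆ {z} := fun p hp => by simp [hs p hp]
  conv_lhs => rw [expand_self LL x]
  rw [Finset.sum_subset hsub]
  · rw [Finset.sum_singleton]
  · intro p _ hp
    rw [Finsupp.notMem_support_iff.1 hp, zero_smul]

lemma lie_expand (hb : ∀ x y : ℤ × ℕ, ⁅LL x, LL y⁆ = sc q x y • LL (x + y)) (a b : B) :
    ⁅a, b⁆ = ∑ x ∈ (LL.repr a).support, ∑ y ∈ (LL.repr b).support,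
      ((LL.repr a) x * (LL.repr b) y * sc q x y) • LL (x + y) := by
  conv_lhs => rw [expand_self LL a, expand_self LL b]
  rw [sum_lie']
  refine Finset.sum_congr rfl fun x hx => ?_
  rw [lie_sum']
  refine Finset.sum_congr rfl fun y hy => ?_
  rw [smul_lie, lie_smul, hb, smul_smul, smul_smul, mul_assoc]

lemma repr_lie (hb : ∀ x y : ℤ × ℕ, ⁅LL x, LL y⁆ = sc q x y • LL (x + y)) (a b : B)
    (P : ℤ × ℕ) :
    (LL.repr ⁅a, b⁆) P = ∑ x ∈ (LL.repr a).support, ∑ y ∈ (LL.repr b).support,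
      (if x + y = P then (LL.repr a) x * (LL.repr b) y * sc q x y else 0) := by
  rw [lie_expand q LL hb a b]
  rw [map_sum]
  rw [Finsupp.finset_sum_apply]
  refine Finset.sum_congr rfl fun x hx => ?_
  rw [map_sum, Finsupp.finset_sum_apply]
  refine Finset.sum_congr rfl fun y hy => ?_
  rw [map_smul, LL.repr_self]
  rw [Finsupp.smul_apply, Finsupp.single_apply, smul_eq_mul]
  split <;> simp

lemma coeff_ext (hb : ∀ x y : ℤ × ℕ, ⁅LL x, LL y⁆ = sc q x y • LL (x + y)) (a b : B)
    (xs ys : ℤ × ℕ) (hxm : xs ∈ (LL.repr a).support) (hym : ys ∈ (LL.repr b).support)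
    (uniq : ∀ x ∈ (LL.repr a).support, ∀ y ∈ (LL.repr b).support,
      x + y = xs + ys → x = xs ∧ y = ys) :
    (LL.repr ⁅a, b⁆) (xs + ys) = (LL.repr a) xs * (LL.repr b) ys * sc q xs ys := by
  rw [repr_lie q LL hb a b]
  rw [Finset.sum_eq_single_of_mem xs hxm]
  · rw [Finset.sum_eq_single_of_mem ys hym]
    · simp
    · intro y hy hne
      rw [if_neg]
      intro he
      exact hne (uniq _ hxm _ hy he).2
  · intro x hx hne
    apply Finset.sum_eq_zero
    intro y hy
    rw [if_neg]
    intro he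
    exact hne (uniq _ hx _ hy he).1

end BlockIsoAux

open BlockIsoAux Finset

set_option maxHeartbeats 1600000 in
/-- Let `τ : B(q₁) → B(q₂)` be an isomorphism of the Block type Lie algebras with
standard bases `{L_{α,i}}` and `{L'_{α,i}}`.  Then there exist `μ ∈ ℂ*` and `s ∈ {±1}`
such that `τ(L_{α,0}) = s q₁ q₂⁻¹ μ^α L'_{sα,0}` for all `α ∈ ℤ`. -/
theorem block_iso_on_degree_zero (q₁ q₂ : ℕ) (hq₁ : 0 < q₁) (hq₂ : 0 < q₂)
    {B₁ : Type} [LieRing B₁] [LieAlgebra ℂ B₁]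
    {B₂ : Type} [LieRing B₂] [LieAlgebra ℂ B₂]
    (L : Module.Basis (ℤ × ℕ) ℂ B₁) (L' : Module.Basis (ℤ × ℕ) ℂ B₂)
    (hL : ∀ (α β : ℤ) (i j : ℕ),
      ⁅L (α, i), L (β, j)⁆ =
        (((β * ((i : ℤ) + q₁) - α * ((j : ℤ) + q₁)) : ℤ) : ℂ) • L (α + β, i + j))
    (hL' : ∀ (α β : ℤ) (i j : ℕ),
      ⁅L' (α, i), L' (β, j)⁆ =
        (((β * ((i : ℤ) + q₂) - α * ((j : ℤ) + q₂)) : ℤ) : ℂ) • L' (α + β, i + j))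
    (τ : B₁ ≃ₗ⁅ℂ⁆ B₂) :
    ∃ (μ : ℂ) (s : ℤ), μ ≠ 0 ∧ (s = 1 ∨ s = -1) ∧
      ∀ α : ℤ, τ (L (α, 0)) = ((s : ℂ) * q₁ * (q₂ : ℂ)⁻¹ * μ ^ α) • L' (s * α, 0) := by
  -- bracket on points, in B₂
  have hb2 : ∀ x y : ℤ × ℕ, ⁅L' x, L' y⁆ = sc q₂ x y • L' (x + y) := by
    intro x y
    obtain ⟨a, i⟩ := x
    obtain ⟨b, j⟩ := y
    simpa [sc, Prod.mk_add_mk] using hL' a b i j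
  have τsmul : ∀ (c : ℂ) (x : B₁), τ (c • x) = c • τ x := fun c x =>
    map_smul τ.toLinearEquiv c x
  have τsum : ∀ (t : Finset (ℤ × ℕ)) (f : (ℤ × ℕ) → B₁),
      τ (∑ i ∈ t, f i) = ∑ i ∈ t, τ (f i) := fun t f =>
    map_sum τ.toLinearEquiv f t
  have hq₁' : 1 ≤ (q₁ : ℤ) := by exact_mod_cast hq₁
  have hq₂' : 1 ≤ (q₂ : ℤ) := by exact_mod_cast hq₂
  set h : B₂ := τ (L ((0 : ℤ), (0 : ℕ))) with hhdef
  -- every τ (L p) is an eigenvector of ad h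
  have EIG : ∀ p : ℤ × ℕ, ⁅h, τ (L p)⁆ = ((p.1 * q₁ : ℤ) : ℂ) • τ (L p) := by
    intro p
    obtain ⟨a, i⟩ := p
    have h1 := hL 0 a 0 i
    have h2 : τ ⁅L (0, 0), L (a, i)⁆ = ⁅h, τ (L (a, i))⁆ := LieEquiv.map_lie τ _ _
    rw [h1, τsmul] at h2
    rw [← h2]
    norm_num
  -- realization: every point is in the support of some eigenvector
  have REAL : ∀ P : ℤ × ℕ, ∃ p : ℤ × ℕ, (L'.repr (τ (L p))) P ≠ 0 := by
    intro P
    by_contra hcon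
    push_neg at hcon
    have h0 : L' P = τ (τ.symm (L' P)) := (τ.apply_symm_apply _).symm
    set y := τ.symm (L' P) with hy
    have hexp : L' P = ∑ p ∈ (L.repr y).support, (L.repr y) p • τ (L p) := by
      rw [h0]
      conv_lhs => rw [expand_self L y]
      rw [τsum]
      refine Finset.sum_congr rfl fun p hp => ?_
      rw [τsmul]
    have h2 := congrArg (fun z => (L'.repr z) P) hexp
    simp only [map_sum, Finsupp.finset_sum_apply, map_smul, Finsupp.smul_apply,
      smul_eq_mul, L'.repr_self, Finsupp.single_apply, if_pos rfl] at h2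
    rw [Finset.sum_eq_zero (fun p _ => by rw [hcon p, mul_zero])] at h2
    exact one_ne_zero h2
  -- nonzero images
  have TNE : ∀ p : ℤ × ℕ, τ (L p) ≠ 0 := by
    intro p hz
    have : L p = 0 := by
      have h2 := congrArg τ.symm hz
      rw [show τ.symm 0 = 0 from map_zero τ.symm.toLinearEquiv] at h2
      simpa using h2
    exact L.ne_zero p this
  -- STEP 1: the support of h is contained in column 0
  have col0 : ∀ p ∈ (L'.repr h).support, p.1 = 0 := by
    by_contra hcon
    push_neg at hcon
    obtain ⟨p₀, hp₀mem, hp₀⟩ := hcon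
    set F := L'.repr h with hF
    set ε : ℤ := if 0 < p₀.1 then 1 else -1 with hεdef
    have hεcases : ε = 1 ∨ ε = -1 := by
      rw [hεdef]; split_ifs <;> simp
    have hε2 : ε * ε = 1 := by rcases hεcases with h' | h' <;> rw [h'] <;> ring
    have hεne : ε ≠ 0 := by rcases hεcases with h' | h' <;> rw [h'] <;> norm_num
    have hεp : 1 ≤ ε * p₀.1 := by
      rw [hεdef]; split_ifs with hsgn
      · omega
      · have : p₀.1 < 0 := by omega
        omega
    set S := F.support.filter (fun p => 1 ≤ ε * p.1) with hS
    have hSne : S.Nonempty := ⟨p₀, by simp [hS, Finset.mem_filter, hp₀mem, hεp]⟩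
    obtain ⟨pm, hpmS, hpm⟩ :=
      S.exists_max_image (fun p => (ε * p.1 : ℚ) / ((p.2 : ℚ) + q₂)) hSne
    have hpmF : pm ∈ F.support := (Finset.mem_filter.1 hpmS).1
    have hg0 : 1 ≤ ε * pm.1 := (Finset.mem_filter.1 hpmS).2
    set g0 : ℤ := ε * pm.1 with hg0def
    set l0 : ℤ := (pm.2 : ℤ) + q₂ with hl0def
    have hl0 : 1 ≤ l0 := by
      have : (0 : ℤ) ≤ (pm.2 : ℤ) := Int.ofNat_nonneg _
      omega
    set d : ℕ := Int.gcd g0 l0 with hd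
    have hdpos : 0 < d := Int.gcd_pos_iff.2 (Or.inl (by omega))
    set D : ℤ := (d : ℤ) with hD
    have hD1 : 1 ≤ D := by
      rw [hD]
      exact_mod_cast hdpos
    set d₁ : ℤ := g0 / D with hd₁
    set d₂ : ℤ := l0 / D with hd₂
    have hDd₁ : D * d₁ = g0 := Int.mul_ediv_cancel' (Int.gcd_dvd_left g0 l0)
    have hDd₂ : D * d₂ = l0 := Int.mul_ediv_cancel' (Int.gcd_dvd_right g0 l0)
    have hd₁pos : 1 ≤ d₁ := by nlinarith
    have hd₂pos : 1 ≤ d₂ := by nlinarith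
    have hcop : Int.gcd d₁ d₂ = 1 := Int.gcd_div_gcd_div_gcd hdpos
    clear_value g0 l0 D d₁ d₂
    set w : ℤ × ℕ → ℤ := fun p => ε * p.1 * d₂ - d₁ * (p.2 : ℤ) with hw
    have hwadd : ∀ x y : ℤ × ℕ, w (x + y) = w x + w y := by
      intro x y
      simp only [hw, Prod.fst_add, Prod.snd_add]
      push_cast
      ring
    have KEY1 : ∀ p ∈ F.support, w p ≤ d₁ * q₂ := by
      intro p hp
      by_cases hc : 1 ≤ ε * p.1
      · have hpS : p ∈ S := by simp [hS, Finset.mem_filter, hp, hc]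
        have h1 := hpm p hpS
        have hden1 : (0 : ℚ) < (p.2 : ℚ) + q₂ := by positivity
        have hden2 : (0 : ℚ) < (pm.2 : ℚ) + q₂ := by positivity
        rw [div_le_div_iff₀ hden1 hden2] at h1
        have h2 : (ε * p.1) * l0 ≤ g0 * ((p.2 : ℤ) + q₂) := by
          rw [hg0def, hl0def]
          exact_mod_cast h1
        rw [← hDd₂, ← hDd₁] at h2
        have h3 : D * (ε * p.1 * d₂) ≤ D * (d₁ * ((p.2 : ℤ) + q₂)) := by
          have e1 : D * (ε * p.1 * d₂) = (ε * p.1) * (D * d₂) := by ring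
          have e2 : D * (d₁ * ((p.2 : ℤ) + q₂)) = (D * d₁) * ((p.2 : ℤ) + q₂) := by ring
          rw [e1, e2]; exact h2
        have h4 : ε * p.1 * d₂ ≤ d₁ * ((p.2 : ℤ) + q₂) :=
          le_of_mul_le_mul_left h3 (by omega : (0:ℤ) < D)
        simp only [hw]
        linarith
      · push_neg at hc
        have hc' : ε * p.1 ≤ 0 := by omega
        have h5 : ε * p.1 * d₂ ≤ 0 := mul_nonpos_iff.2 (Or.inr ⟨hc', by omega⟩)
        have h6 : (0 : ℤ) ≤ (p.2 : ℤ) := Int.ofNat_nonneg _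
        simp only [hw]
        nlinarith
    have hwpm : w pm = d₁ * q₂ := by
      have h1 : ε * pm.1 = D * d₁ := by rw [← hg0def]; exact hDd₁.symm
      have h2 : (pm.2 : ℤ) = D * d₂ - q₂ := by
        have h3 := hDd₂
        rw [hl0def] at h3
        omega
      simp only [hw]
      rw [h1, h2]
      ring
    -- CLAIM : every eigenvector of ad h has w-top at most d₁ q₂
    have CLAIM : ∀ (v : B₂) (lam : ℂ), ⁅h, v⁆ = lam • v →
        ∀ p ∈ (L'.repr v).support, w p ≤ d₁ * q₂ := by
      intro v lam heig
      by_contra hcon2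
      push_neg at hcon2
      obtain ⟨pbad, hpbadmem, hpbad⟩ := hcon2
      set Vv := L'.repr v with hVv
      obtain ⟨pT, hpTmem, hpT⟩ := Vv.support.exists_max_image w ⟨pbad, hpbadmem⟩
      set T : ℤ := w pT with hT
      clear_value T
      have hTub : ∀ p ∈ Vv.support, w p ≤ T := hpT
      have hTbig : d₁ * q₂ < T := lt_of_lt_of_le hpbad (hTub pbad hpbadmem)
      set A := Vv.support.filter (fun p => w p = T) with hA
      obtain ⟨ys, hysA, hys⟩ := A.exists_max_image (fun p => ε * p.1)
        ⟨pT, by simp [hA, Finset.mem_filter, hpTmem, hT]⟩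
      have hysmem : ys ∈ Vv.support := (Finset.mem_filter.1 hysA).1
      have hwys : w ys = T := (Finset.mem_filter.1 hysA).2
      set Rs := F.support.filter (fun p => w p = d₁ * q₂) with hRs
      obtain ⟨xs, hxsR, hxs⟩ := Rs.exists_max_image (fun p => ε * p.1)
        ⟨pm, by simp [hRs, Finset.mem_filter, hpmF, hwpm]⟩
      have hxsmem : xs ∈ F.support := (Finset.mem_filter.1 hxsR).1
      have hwxs : w xs = d₁ * q₂ := (Finset.mem_filter.1 hxsR).2
      -- parametrize xs on the extremal ray
      have hwxsu : ε * xs.1 * d₂ - d₁ * (xs.2 : ℤ) = d₁ * q₂ := by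
        have h1 := hwxs
        simp only [hw] at h1
        exact h1
      have hray : ε * xs.1 * d₂ = d₁ * ((xs.2 : ℤ) + q₂) := by linarith
      have hdvd : d₂ ∣ ((xs.2 : ℤ) + q₂) := by
        have h1 : d₂ ∣ ((xs.2 : ℤ) + q₂) * d₁ := ⟨ε * xs.1, by linear_combination -hray⟩
        exact Int.dvd_of_dvd_mul_left_of_gcd_one h1 (by rw [Int.gcd_comm]; exact hcop)
      set n : ℤ := ((xs.2 : ℤ) + q₂) / d₂ with hn'
      have hn : d₂ * n = (xs.2 : ℤ) + q₂ := Int.mul_ediv_cancel' hdvd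
      have hn1 : 1 ≤ n := by nlinarith [Int.ofNat_nonneg xs.2, hq₂', hn, hd₂pos]
      have hxs1 : ε * xs.1 = n * d₁ := by
        have h1 : (ε * xs.1) * d₂ = (n * d₁) * d₂ := by
          rw [mul_comm n d₁]
          nlinarith [hray, hn]
        exact mul_right_cancel₀ (by omega) h1
      clear_value n
      -- uniqueness of the extremal pair
      have uniq : ∀ x ∈ F.support, ∀ y ∈ Vv.support,
          x + y = xs + ys → x = xs ∧ y = ys := by
        intro x hx y hy hsum
        have e1 : w x + w y = w xs + w ys := by rw [← hwadd, ← hwadd, hsum]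
        have e2 : w x ≤ d₁ * q₂ := KEY1 x hx
        have e3 : w y ≤ T := hTub y hy
        have e4 : w x = d₁ * q₂ := by linarith [hwxs, hwys]
        have e5 : w y = T := by linarith [hwxs, hwys]
        have hxR : x ∈ Rs := Finset.mem_filter.2 ⟨hx, e4⟩
        have hyA : y ∈ A := Finset.mem_filter.2 ⟨hy, e5⟩
        have c1 : ε * x.1 ≤ ε * xs.1 := hxs x hxR
        have c2 : ε * y.1 ≤ ε * ys.1 := hys y hyA
        have csum : x.1 + y.1 = xs.1 + ys.1 := by
          rw [← Prod.fst_add, ← Prod.fst_add, hsum]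
        have csum' : ε * x.1 + ε * y.1 = ε * xs.1 + ε * ys.1 := by
          rw [← mul_add, ← mul_add, csum]
        have cx : ε * x.1 = ε * xs.1 := by linarith
        have cy : ε * y.1 = ε * ys.1 := by linarith
        have cx1 : x.1 = xs.1 := mul_left_cancel₀ hεne cx
        have cy1 : y.1 = ys.1 := mul_left_cancel₀ hεne cy
        have rx : (x.2 : ℤ) = (xs.2 : ℤ) := by
          have e4u := e4
          have hwxsu := hwxs
          simp only [hw] at e4u hwxsu
          have ex : ε * x.1 * d₂ = ε * xs.1 * d₂ := by rw [cx1]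
          have e6 : d₁ * (x.2 : ℤ) = d₁ * (xs.2 : ℤ) := by linarith
          exact mul_left_cancel₀ (show d₁ ≠ 0 by omega) e6
        have ry : (y.2 : ℤ) = (ys.2 : ℤ) := by
          have e5u := e5
          have hwysu := hwys
          simp only [hw] at e5u hwysu
          have ey : ε * y.1 * d₂ = ε * ys.1 * d₂ := by rw [cy1]
          have e6 : d₁ * (y.2 : ℤ) = d₁ * (ys.2 : ℤ) := by linarith
          exact mul_left_cancel₀ (show d₁ ≠ 0 by omega) e6
        constructor
        · exact Prod.ext cx1 (by exact_mod_cast rx)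
        · exact Prod.ext cy1 (by exact_mod_cast ry)
      have hco := coeff_ext q₂ L' hb2 h v xs ys hxsmem hysmem uniq
      have hPnot : Vv (xs + ys) = 0 := by
        by_contra hne
        have hmem : xs + ys ∈ Vv.support := Finsupp.mem_support_iff.2 hne
        have h1 := hTub _ hmem
        rw [hwadd] at h1
        rw [hwxs, hwys] at h1
        have : (0:ℤ) < d₁ * q₂ := mul_pos (by omega) (by omega)
        linarith
      rw [heig, map_smul, Finsupp.smul_apply] at hco
      rw [show (L'.repr v) (xs + ys) = Vv (xs + ys) from rfl, hPnot, smul_zero] at hco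
      have hFxs : F xs ≠ 0 := Finsupp.mem_support_iff.1 hxsmem
      have hVys : Vv ys ≠ 0 := Finsupp.mem_support_iff.1 hysmem
      have hwysval : ε * ys.1 * d₂ - d₁ * (ys.2 : ℤ) = T := by
        have h1 := hwys
        simp only [hw] at h1
        exact h1
      have hscval : (ys.1 * ((xs.2 : ℤ) + q₂) - xs.1 * ((ys.2 : ℤ) + q₂))
          = ε * n * (T - d₁ * q₂) := by
        have hxs1' : xs.1 = ε * (n * d₁) := by
          have := congrArg (fun z => ε * z) hxs1
          simpa [← mul_assoc, hε2] using this
        rw [← hn, hxs1', ← hwysval]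
        rcases hεcases with h' | h' <;> rw [h'] <;> ring
      have hscne : sc q₂ xs ys ≠ 0 := by
        rw [sc, Int.cast_ne_zero, hscval]
        have : T - d₁ * q₂ ≠ 0 := by omega
        exact mul_ne_zero (mul_ne_zero hεne (by omega)) this
      exact (mul_ne_zero (mul_ne_zero hFxs hVys) hscne) hco.symm
    -- realization gives a contradiction
    obtain ⟨p, hp⟩ := REAL (ε * (d₁ * q₂ + 1), 0)
    have hmem : ((ε * (d₁ * q₂ + 1), 0) : ℤ × ℕ) ∈ (L'.repr (τ (L p))).support :=
      Finsupp.mem_support_iff.2 hp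
    have hcl := CLAIM (τ (L p)) _ (EIG p) _ hmem
    simp only [hw] at hcl
    push_cast at hcl
    have he : ε * (ε * (d₁ * q₂ + 1)) * d₂ = (d₁ * q₂ + 1) * d₂ := by
      linear_combination ((d₁ * (q₂:ℤ) + 1) * d₂) * hε2
    rw [he] at hcl
    have h0le : (0:ℤ) ≤ d₁ * q₂ := by positivity
    nlinarith [hd₂pos, hcl, h0le]
  -- STEP 2: the support of h is contained in row 0 as well
  have row0 : ∀ p ∈ (L'.repr h).support, p.2 = 0 := by
    by_contra hcon
    push_neg at hcon
    obtain ⟨p₀, hp₀mem, hp₀⟩ := hcon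
    obtain ⟨xs, hxsmem, hxs⟩ :=
      (L'.repr h).support.exists_max_image (fun p => p.2) ⟨p₀, hp₀mem⟩
    have hxs2 : 1 ≤ xs.2 := le_trans (by omega) (hxs p₀ hp₀mem)
    have hxs1 : xs.1 = 0 := col0 xs hxsmem
    obtain ⟨pv, hpv⟩ := REAL ((1 : ℤ), (0 : ℕ))
    have hveq : ⁅h, τ (L pv)⁆ = ((pv.1 * q₁ : ℤ) : ℂ) • τ (L pv) := EIG pv
    have hmem10 : ((1, 0) : ℤ × ℕ) ∈ (L'.repr (τ (L pv))).support :=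
      Finsupp.mem_support_iff.2 hpv
    set A := (L'.repr (τ (L pv))).support.filter (fun r => r.1 = 1) with hA
    obtain ⟨ys, hysA, hys⟩ := A.exists_max_image (fun r => r.2)
      ⟨(1, 0), by simp [hA, Finset.mem_filter, hmem10]⟩
    have hysmem : ys ∈ (L'.repr (τ (L pv))).support := (Finset.mem_filter.1 hysA).1
    have hys1 : ys.1 = 1 := (Finset.mem_filter.1 hysA).2
    have uniq : ∀ x ∈ (L'.repr h).support, ∀ y ∈ (L'.repr (τ (L pv))).support,
        x + y = xs + ys → x = xs ∧ y = ys := by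
      intro x hx y hy hsum
      have cx : x.1 = 0 := col0 x hx
      have csum1 : x.1 + y.1 = xs.1 + ys.1 := by
        rw [← Prod.fst_add, ← Prod.fst_add, hsum]
      have cy : y.1 = 1 := by omega
      have hyA : y ∈ A := Finset.mem_filter.2 ⟨hy, cy⟩
      have r1 : y.2 ≤ ys.2 := hys y hyA
      have r2 : x.2 ≤ xs.2 := hxs x hx
      have csum2 : x.2 + y.2 = xs.2 + ys.2 := by
        rw [← Prod.snd_add, ← Prod.snd_add, hsum]
      constructor
      · exact Prod.ext (by omega) (by omega)
      · exact Prod.ext (by omega) (by omega)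
    have hco := coeff_ext q₂ L' hb2 h (τ (L pv)) xs ys hxsmem hysmem uniq
    have hPnot : (L'.repr (τ (L pv))) (xs + ys) = 0 := by
      by_contra hne
      have hmem : xs + ys ∈ (L'.repr (τ (L pv))).support := Finsupp.mem_support_iff.2 hne
      have hc1 : (xs + ys).1 = 1 := by rw [Prod.fst_add]; omega
      have hyA : xs + ys ∈ A := Finset.mem_filter.2 ⟨hmem, hc1⟩
      have h1 := hys _ hyA
      rw [Prod.snd_add] at h1
      omega
    rw [hveq, map_smul, Finsupp.smul_apply, hPnot, smul_zero] at hco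
    have hFxs : (L'.repr h) xs ≠ 0 := Finsupp.mem_support_iff.1 hxsmem
    have hVys : (L'.repr (τ (L pv))) ys ≠ 0 := Finsupp.mem_support_iff.1 hysmem
    have hscne : sc q₂ xs ys ≠ 0 := by
      simp only [sc]
      rw [Int.cast_ne_zero, hxs1, hys1]
      have hx2 : 1 ≤ xs.2 := hxs2
      omega
    exact (mul_ne_zero (mul_ne_zero hFxs hVys) hscne) hco.symm
  -- h is a nonzero multiple of L' (0,0)
  have hsupp : ∀ p ∈ (L'.repr h).support, p = ((0 : ℤ), (0 : ℕ)) := fun p hp =>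
    Prod.ext (col0 p hp) (row0 p hp)
  set c₀ : ℂ := (L'.repr h) ((0 : ℤ), (0 : ℕ)) with hc₀def
  have hmain : h = c₀ • L' ((0 : ℤ), (0 : ℕ)) := single_supp L' h _ hsupp
  have hc₀ne : c₀ ≠ 0 := by
    intro hz
    have h0 : h = 0 := by rw [hmain, hz, zero_smul]
    have h1 := EIG ((1 : ℤ), (0 : ℕ))
    rw [h0, zero_lie] at h1
    have h2 : (((1 : ℤ) * (q₁ : ℤ) : ℤ) : ℂ) ≠ 0 := by
      rw [Int.cast_ne_zero]
      omega
    exact TNE _ ((smul_eq_zero.1 h1.symm).resolve_left h2)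
  -- STEP 3: coefficientwise action of ad h, column pinning and the sign s
  have AD0 : ∀ (x : B₂) (P : ℤ × ℕ),
      (L'.repr ⁅h, x⁆) P = c₀ * (L'.repr x) P * ((P.1 * q₂ : ℤ) : ℂ) := by
    intro x P
    rw [repr_lie q₂ L' hb2 h x P]
    have hFs : (L'.repr h).support = {((0 : ℤ), (0 : ℕ))} := by
      have e1 : L'.repr h = Finsupp.single ((0 : ℤ), (0 : ℕ)) c₀ := by
        conv_lhs => rw [hmain]
        rw [map_smul, L'.repr_self, Finsupp.smul_single, smul_eq_mul, mul_one]
      rw [e1]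
      exact Finsupp.support_single_ne_zero _ hc₀ne
    rw [hFs, Finset.sum_singleton]
    have hite : ∀ y ∈ (L'.repr x).support,
        (if ((0 : ℤ), (0 : ℕ)) + y = P then
          (L'.repr h) ((0 : ℤ), (0 : ℕ)) * (L'.repr x) y * sc q₂ ((0 : ℤ), (0 : ℕ)) y
         else 0)
        = (if y = P then c₀ * (L'.repr x) y * sc q₂ ((0 : ℤ), (0 : ℕ)) y else 0) := by
      intro y hy
      have e0 : ((0 : ℤ), (0 : ℕ)) + y = y := by rw [Prod.mk_zero_zero, zero_add]
      rw [e0, ← hc₀def]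
    rw [Finset.sum_congr rfl hite, Finset.sum_ite_eq' _ P _]
    have hsc0 : sc q₂ ((0 : ℤ), (0 : ℕ)) P = ((P.1 * q₂ : ℤ) : ℂ) := by
      simp only [sc]
      push_cast
      ring
    by_cases hP : P ∈ (L'.repr x).support
    · rw [if_pos hP, hsc0]
    · rw [if_neg hP, Finsupp.notMem_support_iff.1 hP]
      ring
  have hq₁c : (q₁ : ℂ) ≠ 0 := Nat.cast_ne_zero.2 hq₁.ne'
  have hq₂c : (q₂ : ℂ) ≠ 0 := Nat.cast_ne_zero.2 hq₂.ne'
  have colpin0 : ∀ (pt P : ℤ × ℕ), P ∈ (L'.repr (τ (L pt))).support →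
      c₀ * ((P.1 * q₂ : ℤ) : ℂ) = ((pt.1 * q₁ : ℤ) : ℂ) := by
    intro pt P hP
    have h1 := AD0 (τ (L pt)) P
    rw [EIG pt, map_smul, Finsupp.smul_apply, smul_eq_mul] at h1
    have hne : (L'.repr (τ (L pt))) P ≠ 0 := Finsupp.mem_support_iff.1 hP
    have h2 : (c₀ * ((P.1 * q₂ : ℤ) : ℂ)) * (L'.repr (τ (L pt))) P
        = ((pt.1 * q₁ : ℤ) : ℂ) * (L'.repr (τ (L pt))) P := by
      linear_combination -h1
    exact mul_right_cancel₀ hne h2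
  have hX1ne : L'.repr (τ (L ((1 : ℤ), (0 : ℕ)))) ≠ 0 := by
    rw [Ne, LinearEquiv.map_eq_zero_iff]
    exact TNE _
  obtain ⟨P₁, hP₁⟩ := Finsupp.support_nonempty_iff.2 hX1ne
  set s : ℤ := P₁.1 with hsdef
  have hkey0 := colpin0 ((1 : ℤ), (0 : ℕ)) P₁ hP₁
  have hkey : c₀ * (s : ℂ) * (q₂ : ℂ) = (q₁ : ℂ) := by
    push_cast at hkey0
    linear_combination hkey0
  have colpin : ∀ (pt P : ℤ × ℕ), P ∈ (L'.repr (τ (L pt))).support → P.1 = s * pt.1 := by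
    intro pt P hP
    have h1 := colpin0 pt P hP
    push_cast at h1
    have h2 : (c₀ * (q₂ : ℂ)) * (P.1 : ℂ) = (c₀ * (q₂ : ℂ)) * ((s : ℂ) * (pt.1 : ℂ)) := by
      linear_combination h1 - (pt.1 : ℂ) * hkey
    have h3 := mul_left_cancel₀ (mul_ne_zero hc₀ne hq₂c) h2
    exact_mod_cast h3
  have hs : s = 1 ∨ s = -1 := by
    obtain ⟨pv, hpv⟩ := REAL ((1 : ℤ), (0 : ℕ))
    have h1 : (1 : ℤ) = s * pv.1 :=
      colpin pv ((1 : ℤ), (0 : ℕ)) (Finsupp.mem_support_iff.2 hpv)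
    rcases Int.mul_eq_one_iff_eq_one_or_neg_one.1 h1.symm with ⟨h2, _⟩ | ⟨h2, _⟩
    · exact Or.inl h2
    · exact Or.inr h2
  have hss : (s : ℂ) * (s : ℂ) = 1 := by rcases hs with h' | h' <;> rw [h'] <;> norm_num
  have hsc : (s : ℂ) ≠ 0 := left_ne_zero_of_mul_eq_one hss
  -- STEP 4: purity of τ (L (α,0))
  have rowpin : ∀ α : ℤ, α ≠ 0 → ∀ P ∈ (L'.repr (τ (L (α, (0 : ℕ))))).support, P.2 = 0 := by
    intro α hα
    by_contra hcon
    push_neg at hcon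
    obtain ⟨p₀, hp₀mem, hp₀⟩ := hcon
    have hXY : ⁅τ (L (α, (0 : ℕ))), τ (L (-α, (0 : ℕ)))⁆ = ((-2 * α * q₁ : ℤ) : ℂ) • h := by
      have h1 := hL α (-α) 0 0
      have h2 : τ ⁅L (α, (0 : ℕ)), L (-α, (0 : ℕ))⁆
          = ⁅τ (L (α, (0 : ℕ))), τ (L (-α, (0 : ℕ)))⁆ := LieEquiv.map_lie τ _ _
      rw [h1, τsmul] at h2
      rw [← h2, hhdef]
      have e1 : ((α + -α : ℤ), ((0 : ℕ) + 0 : ℕ)) = ((0 : ℤ), (0 : ℕ)) := by norm_num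
      rw [e1]
      congr 1
      push_cast
      ring
    have hYne : L'.repr (τ (L ((-α : ℤ), (0 : ℕ)))) ≠ 0 := by
      rw [Ne, LinearEquiv.map_eq_zero_iff]
      exact TNE _
    obtain ⟨ys0, hys0⟩ := Finsupp.support_nonempty_iff.2 hYne
    obtain ⟨xs, hxsmem, hxs⟩ :=
      (L'.repr (τ (L (α, (0 : ℕ))))).support.exists_max_image (fun p => p.2) ⟨p₀, hp₀mem⟩
    obtain ⟨ys, hysmem, hys⟩ :=
      (L'.repr (τ (L (-α, (0 : ℕ))))).support.exists_max_image (fun p => p.2) ⟨ys0, hys0⟩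
    have hxs2 : 1 ≤ xs.2 := le_trans (by omega) (hxs p₀ hp₀mem)
    have hcolX : ∀ p ∈ (L'.repr (τ (L (α, (0 : ℕ))))).support, p.1 = s * α :=
      fun p hp => colpin (α, 0) p hp
    have hcolY : ∀ p ∈ (L'.repr (τ (L (-α, (0 : ℕ))))).support, p.1 = s * (-α) :=
      fun p hp => colpin (-α, 0) p hp
    have uniq : ∀ x ∈ (L'.repr (τ (L (α, (0 : ℕ))))).support,
        ∀ y ∈ (L'.repr (τ (L (-α, (0 : ℕ))))).support,
        x + y = xs + ys → x = xs ∧ y = ys := by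
      intro x hx y hy hsum
      have csum2 : x.2 + y.2 = xs.2 + ys.2 := by
        rw [← Prod.snd_add, ← Prod.snd_add, hsum]
      have r1 : x.2 ≤ xs.2 := hxs x hx
      have r2 : y.2 ≤ ys.2 := hys y hy
      constructor
      · exact Prod.ext (by rw [hcolX x hx, hcolX xs hxsmem]) (by omega)
      · exact Prod.ext (by rw [hcolY y hy, hcolY ys hysmem]) (by omega)
    have hco := coeff_ext q₂ L' hb2 (τ (L (α, (0 : ℕ)))) (τ (L (-α, (0 : ℕ)))) xs ys
      hxsmem hysmem uniq
    rw [hXY] at hco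
    have hrh : (L'.repr h) (xs + ys) = 0 := by
      by_contra hne
      have h1 := hsupp _ (Finsupp.mem_support_iff.2 hne)
      have h2 : (xs + ys).2 = 0 := by rw [h1]
      rw [Prod.snd_add] at h2
      omega
    rw [map_smul, Finsupp.smul_apply, hrh, smul_zero] at hco
    have hXxs : (L'.repr (τ (L (α, (0 : ℕ))))) xs ≠ 0 := Finsupp.mem_support_iff.1 hxsmem
    have hYys : (L'.repr (τ (L (-α, (0 : ℕ))))) ys ≠ 0 := Finsupp.mem_support_iff.1 hysmem
    have hscne : sc q₂ xs ys ≠ 0 := by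
      simp only [sc]
      rw [Int.cast_ne_zero, hcolY ys hysmem, hcolX xs hxsmem]
      intro hzero
      have hsα : s * α ≠ 0 := by
        rcases hs with h' | h' <;> rw [h'] <;> omega
      have h1 : s * α * ((xs.2 : ℤ) + (ys.2 : ℤ) + 2 * q₂) = 0 := by
        linear_combination -hzero
      rcases mul_eq_zero.1 h1 with h' | h'
      · exact hsα h'
      · have := Int.ofNat_nonneg xs.2
        have := Int.ofNat_nonneg ys.2
        omega
    exact (mul_ne_zero (mul_ne_zero hXxs hYys) hscne) hco.symm
  -- the pure coefficients
  set Df : ℤ → ℂ := fun a => (L'.repr (τ (L (a, (0 : ℕ))))) (s * a, (0 : ℕ)) with hDfdef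
  have purity : ∀ α : ℤ, τ (L (α, (0 : ℕ))) = Df α • L' (s * α, (0 : ℕ)) := by
    intro α
    by_cases hα : α = 0
    · subst hα
      have e1 : (s * 0, (0 : ℕ)) = ((0 : ℤ), (0 : ℕ)) := by norm_num
      show τ (L ((0 : ℤ), (0 : ℕ)))
          = (L'.repr (τ (L ((0 : ℤ), (0 : ℕ))))) (s * 0, (0 : ℕ)) • L' (s * 0, (0 : ℕ))
      rw [e1, ← hhdef, ← hc₀def]
      exact hmain
    · exact single_supp L' _ _ (fun p hp =>
        Prod.ext (colpin (α, 0) p hp) (rowpin α hα p hp))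
  have hDne : ∀ α : ℤ, Df α ≠ 0 := by
    intro α hz
    have h1 := purity α
    rw [hz, zero_smul] at h1
    exact TNE _ h1
  -- STEP 5: multiplicativity of the coefficients
  have hrel : ∀ a b : ℤ, a ≠ b →
      Df a * Df b * (s : ℂ) * (q₂ : ℂ) = (q₁ : ℂ) * Df (a + b) := by
    intro a b hab
    have h1 := hL a b 0 0
    have h2 : τ ⁅L (a, (0 : ℕ)), L (b, (0 : ℕ))⁆
        = ⁅τ (L (a, (0 : ℕ))), τ (L (b, (0 : ℕ)))⁆ := LieEquiv.map_lie τ _ _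
    rw [h1, τsmul, purity a, purity b, purity (a + b)] at h2
    rw [smul_lie, lie_smul, hb2] at h2
    have hpt : ((s * a, (0 : ℕ)) + (s * b, (0 : ℕ))) = (s * (a + b), (0 : ℕ)) := by
      rw [Prod.mk_add_mk, show s * a + s * b = s * (a + b) from by ring]
    rw [hpt] at h2
    have h3 := congrArg (fun z => (L'.repr z) ((s * (a + b) : ℤ), (0 : ℕ))) h2
    simp only [map_smul, Finsupp.smul_apply, smul_eq_mul, L'.repr_self,
      Finsupp.single_eq_same, mul_one] at h3
    simp only [sc] at h3
    push_cast at h3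
    have hba : (b : ℂ) - a ≠ 0 := by
      rw [sub_ne_zero]
      intro he
      exact hab (by exact_mod_cast he.symm)
    have h4 : ((b : ℂ) - a) * (Df a * Df b * (s : ℂ) * (q₂ : ℂ))
        = ((b : ℂ) - a) * ((q₁ : ℂ) * Df (a + b)) := by
      linear_combination -h3
    exact mul_left_cancel₀ hba h4
  set e : ℤ → ℂ := fun a => Df a * (s : ℂ) * (q₂ : ℂ) / (q₁ : ℂ) with hedef
  have he0 : e 0 = 1 := by
    have hDf0 : Df 0 = c₀ := by
      show (L'.repr (τ (L ((0 : ℤ), (0 : ℕ))))) ((s * 0 : ℤ), (0 : ℕ)) = c₀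
      rw [show ((s * 0 : ℤ), (0 : ℕ)) = ((0 : ℤ), (0 : ℕ)) from by norm_num, ← hhdef]
    simp only [hedef]
    rw [hDf0, hkey]
    exact div_self hq₁c
  have hemul : ∀ a b : ℤ, a ≠ b → e a * e b = e (a + b) := by
    intro a b hab
    have h4 := hrel a b hab
    simp only [hedef]
    field_simp
    linear_combination h4
  have hadd : ∀ a b c : ℤ, a + b = c → a ≠ b → e a * e b = e c := by
    intro a b c hc hab
    rw [← hc]
    exact hemul a b hab
  have hinv : ∀ a : ℤ, e a * e (-a) = 1 := by
    intro a
    by_cases ha : a = 0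
    · subst ha
      rw [neg_zero, he0, mul_one]
    · rw [hadd a (-a) 0 (by ring) (by omega), he0]
  have heene : ∀ a : ℤ, e a ≠ 0 := fun a => left_ne_zero_of_mul_eq_one (hinv a)
  set μ : ℂ := e 1 with hμdef
  have hμne : μ ≠ 0 := heene 1
  have h13 : e 1 * e 3 = e 4 := hadd 1 3 4 (by norm_num) (by norm_num)
  have h14 : e 1 * e 4 = e 5 := hadd 1 4 5 (by norm_num) (by norm_num)
  have h53 : e 5 * e (-3) = e 2 := hadd 5 (-3) 2 (by norm_num) (by norm_num)
  have h33 : e 3 * e (-3) = 1 := hinv 3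
  have he2 : e 2 = μ * μ := by
    calc e 2 = e 5 * e (-3) := h53.symm
    _ = (e 1 * (e 1 * e 3)) * e (-3) := by rw [h13, h14]
    _ = (e 1 * e 1) * (e 3 * e (-3)) := by ring
    _ = μ * μ := by rw [h33, mul_one, ← hμdef]
  have hnat : ∀ n : ℕ, e (n : ℤ) = μ ^ n := by
    intro n
    induction n with
    | zero => simpa using he0
    | succ m ih =>
      cases m with
      | zero =>
        rw [show (((0 : ℕ) + 1 : ℕ) : ℤ) = 1 from by norm_num, pow_one, ← hμdef]
      | succ k =>
        have h1 : e 1 * e ((k + 1 : ℕ) : ℤ) = e ((k + 1 + 1 : ℕ) : ℤ) := by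
          by_cases hk : k = 0
          · subst hk
            rw [show (((0 : ℕ) + 1 + 1 : ℕ) : ℤ) = 2 from by norm_num,
              show (((0 : ℕ) + 1 : ℕ) : ℤ) = 1 from by norm_num, he2, ← hμdef]
          · exact hadd 1 _ _ (by push_cast; ring) (by omega)
        rw [← h1, ih, pow_succ, ← hμdef]
        ring
  have hallz : ∀ a : ℤ, e a = μ ^ a := by
    intro a
    obtain ⟨n, hn | hn⟩ := Int.eq_nat_or_neg a
    · subst hn
      rw [zpow_natCast]
      exact hnat n
    · subst hn
      have h2 : e (-(n : ℤ)) = (e (n : ℤ))⁻¹ := eq_inv_of_mul_eq_one_right (hinv n)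
      rw [h2, hnat n, zpow_neg, zpow_natCast]
  -- assembly
  refine ⟨μ, s, hμne, hs, ?_⟩
  intro α
  have h1 : Df α * (s : ℂ) * (q₂ : ℂ) / (q₁ : ℂ) = μ ^ α := by
    have h2 := hallz α
    simp only [hedef] at h2
    exact h2
  have hzne : μ ^ α ≠ 0 := zpow_ne_zero α hμne
  have hcoef : Df α = (s : ℂ) * q₁ * (q₂ : ℂ)⁻¹ * μ ^ α := by
    field_simp at h1 ⊢
    linear_combination (s : ℂ) * h1 - Df α * (q₂ : ℂ) * hss
  rw [purity α, hcoef]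
end

section
/- The linear map D₀ : B(q) → B(q) determined by D₀(L_{β,j}) = j L_{β,j} for all β ∈ ℤ, j ∈ ℤ_{≥0} is a derivation of B(q), and it is not an inner derivation (i.e., D₀ ≠ ad_u for every u ∈ B(q)). -/
/-- The linear map `D₀` on the Block type Lie algebra `B(q)` determined by
`D₀(L_{β,j}) = j L_{β,j}` is a derivation of `B(q)` and it is not an inner derivation,
i.e. `D₀ ≠ ad_u` for every `u ∈ B(q)`. -/
theorem block_D0_outer_derivation (q : ℕ) (hq : 0 < q)
    {B : Type} [LieRing B] [LieAlgebra ℂ B]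
    (L : Module.Basis (ℤ × ℕ) ℂ B)
    (hL : ∀ (α β : ℤ) (i j : ℕ),
      ⁅L (α, i), L (β, j)⁆ =
        (((β * ((i : ℤ) + q) - α * ((j : ℤ) + q)) : ℤ) : ℂ) • L (α + β, i + j))
    (D₀ : B →ₗ[ℂ] B)
    (hD₀ : ∀ (β : ℤ) (j : ℕ), D₀ (L (β, j)) = (j : ℂ) • L (β, j)) :
    (∀ x y : B, D₀ ⁅x, y⁆ = ⁅D₀ x, y⁆ + ⁅x, D₀ y⁆) ∧
    (∀ u : B, D₀ ≠ (LieAlgebra.ad ℂ B u : B →ₗ[ℂ] B)) := by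
  set Br : B →ₗ[ℂ] B →ₗ[ℂ] B := LinearMap.mk₂ ℂ (fun x y => ⁅x, y⁆) add_lie smul_lie lie_add lie_smul with hBr
  have hBrApp : ∀ x y : B, Br x y = ⁅x, y⁆ := fun x y => rfl
  constructor
  · -- derivation property
    have key : Br.compr₂ D₀ = (Br ∘ₗ D₀) + Br.compl₂ D₀ := by
      apply L.ext; rintro ⟨α, i⟩
      apply L.ext; rintro ⟨β, j⟩
      simp only [LinearMap.compr₂_apply, LinearMap.compl₂_apply, LinearMap.comp_apply,
        LinearMap.add_apply, hBrApp]
      rw [hL, hD₀, hD₀, map_smul, hD₀, lie_smul, smul_lie, hL, smul_smul, ← add_smul]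
      rw [smul_smul]
      refine congrArg (fun c : ℂ => c • L (α + β, i + j)) ?_
      push_cast
      ring
    intro x y
    have := LinearMap.congr_fun (LinearMap.congr_fun key x) y
    simpa [hBrApp] using this
  · intro u h
    -- evaluate both sides against L (0,1) and take the coefficient at (0,1)
    set ψ : B →ₗ[ℂ] ℂ :=
      (Finsupp.lapply ((0 : ℤ), (1 : ℕ))) ∘ₗ (L.repr : B →ₗ[ℂ] (ℤ × ℕ) →₀ ℂ) ∘ₗ
        (Br.flip (L (0, 1))) with hψdef
    have hψ : ∀ p : ℤ × ℕ, ψ (L p) = 0 := by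
      rintro ⟨α, i⟩
      have hb : ψ (L (α, i)) = L.repr ⁅L (α, i), L (0, 1)⁆ (0, 1) := rfl
      rw [hb, hL, map_smul, Module.Basis.repr_self, Finsupp.smul_single, Finsupp.single_apply]
      split
      · next hpair =>
          rcases Prod.mk.inj hpair with ⟨ha, hi⟩
          have hα : α = 0 := by omega
          subst hα
          norm_num
      · rfl
    have hψ0 : ψ = 0 := L.ext (by simpa using hψ)
    have h1 : Br.flip (L (0, 1)) u = L (0, 1) := by
      have hDad : ⁅u, L (0, 1)⁆ = D₀ (L (0, 1)) := by rw [h]; rfl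
      calc Br.flip (L (0, 1)) u = ⁅u, L (0, 1)⁆ := rfl
        _ = D₀ (L (0, 1)) := hDad
        _ = L (0, 1) := by rw [hD₀]; simp
    have : ψ u = 1 := by
      simp only [hψdef, LinearMap.comp_apply, h1, Finsupp.lapply_apply, Module.Basis.repr_self]
      simp
    rw [hψ0] at this
    simp at this
end

section
/- Let α ∈ ℤ and let d be a nonzero derivation of B(q) of degree α. Suppose i ∈ ℤ is the minimal integer such that d(B^{[j]}) ⊆ B^{[i+j]} for all j ∈ ℤ_{≥0}. Then i ≥ 0. -/
variable {B : Type} [LieRing B] [LieAlgebra ℂ B]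

/-- The homogeneous component `B_α = span{L_{α,i} : i ∈ ℤ_{≥0}}` of the grading of the
Block type Lie algebra. -/
def blockGrade (L : Module.Basis (ℤ × ℕ) ℂ B) (α : ℤ) : Submodule ℂ B :=
  Submodule.span ℂ (Set.range fun i : ℕ => L (α, i))

/-- The subspace `B^{[j]} = span{L_{β,k} : β ∈ ℤ, 0 ≤ k ≤ j}` (which is `0` for
`j < 0`). -/
def blockFilt (L : Module.Basis (ℤ × ℕ) ℂ B) (j : ℤ) : Submodule ℂ B :=
  Submodule.span ℂ {x | ∃ (β : ℤ) (k : ℕ), (k : ℤ) ≤ j ∧ x = L (β, k)}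

/-- A linear map `d` has degree `α` if `d ≠ 0` and `d(B_β) ⊆ B_{α+β}` for all `β`. -/
def HasDegree (L : Module.Basis (ℤ × ℕ) ℂ B) (d : B →ₗ[ℂ] B) (α : ℤ) : Prop :=
  d ≠ 0 ∧ ∀ β : ℤ, (blockGrade L β).map d ≤ blockGrade L (α + β)

lemma blockFilt_eq_span_image (L : Module.Basis (ℤ × ℕ) ℂ B) (j : ℤ) :
    blockFilt L j = Submodule.span ℂ (⇑L '' {p : ℤ × ℕ | (p.2 : ℤ) ≤ j}) := by
  unfold blockFilt
  congr 1
  ext x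
  constructor
  · rintro ⟨β, k, hk, rfl⟩
    exact ⟨(β, k), hk, rfl⟩
  · rintro ⟨⟨β, k⟩, hk, rfl⟩
    exact ⟨β, k, hk, rfl⟩

lemma blockGrade_eq_span_image (L : Module.Basis (ℤ × ℕ) ℂ B) (γ : ℤ) :
    blockGrade L γ = Submodule.span ℂ (⇑L '' {p : ℤ × ℕ | p.1 = γ}) := by
  unfold blockGrade
  congr 1
  ext x
  constructor
  · rintro ⟨i, rfl⟩
    exact ⟨(γ, i), rfl, rfl⟩
  · rintro ⟨⟨β, k⟩, hk, rfl⟩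
    cases hk
    exact ⟨k, rfl⟩

lemma blockFilt_neg (L : Module.Basis (ℤ × ℕ) ℂ B) {j : ℤ} (hj : j < 0) :
    blockFilt L j = ⊥ := by
  unfold blockFilt
  convert Submodule.span_empty (R := ℂ) (M := B)
  ext x
  simp only [Set.mem_setOf_eq, Set.mem_empty_iff_false, iff_false, not_exists]
  rintro β k ⟨hk, rfl⟩
  omega

lemma repr_bracket_left (q : ℕ) (L : Module.Basis (ℤ × ℕ) ℂ B)
    (hL : ∀ (α β : ℤ) (i j : ℕ),
      ⁅L (α, i), L (β, j)⁆ =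
        (((β * ((i : ℤ) + q) - α * ((j : ℤ) + q)) : ℤ) : ℂ) • L (α + β, i + j))
    (β δ : ℤ) (m : ℕ) (y : B) :
    L.repr ⁅L (β, 0), y⁆ (β + δ, m)
      = ((δ * q - β * ((m : ℤ) + q) : ℤ) : ℂ) * L.repr y (δ, m) := by
  have h : (Finsupp.lapply (β + δ, m) ∘ₗ (L.repr : B →ₗ[ℂ] ((ℤ × ℕ) →₀ ℂ))
        ∘ₗ (LieAlgebra.ad ℂ B (L (β, 0))))
      = ((δ * q - β * ((m : ℤ) + q) : ℤ) : ℂ) •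
        (Finsupp.lapply (δ, m) ∘ₗ (L.repr : B →ₗ[ℂ] ((ℤ × ℕ) →₀ ℂ))) := by
    apply Module.Basis.ext L
    rintro ⟨ε, n⟩
    simp only [LinearMap.comp_apply, LinearMap.smul_apply, Finsupp.lapply_apply,
      LieAlgebra.ad_apply, LinearEquiv.coe_coe]
    rw [hL]
    simp only [map_smul, Module.Basis.repr_self, Finsupp.smul_apply, Finsupp.single_apply,
      Prod.mk.injEq, Nat.zero_add, smul_eq_mul]
    by_cases h1 : ε = δ
    · subst h1
      by_cases h2 : n = m
      · subst h2
        simp only [and_true, if_pos rfl, add_right_inj, if_pos rfl]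
        push_cast
        ring
      · simp [h2]
    · have : ¬ (β + ε = β + δ) := by omega
      simp [h1, this]
  have h2 := LinearMap.congr_fun h y
  simpa using h2

/-- Let `d` be a nonzero derivation of the Block type Lie algebra `B(q)` of degree
`α`, and let `i` be the minimal integer such that `d(B^{[j]}) ⊆ B^{[i+j]}` for all
`j ∈ ℤ_{≥0}`.  Then `i ≥ 0`. -/
theorem block_derivation_min_shift_nonneg (q : ℕ) (hq : 0 < q)
    (L : Module.Basis (ℤ × ℕ) ℂ B)
    (hL : ∀ (α β : ℤ) (i j : ℕ),
      ⁅L (α, i), L (β, j)⁆ =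
        (((β * ((i : ℤ) + q) - α * ((j : ℤ) + q)) : ℤ) : ℂ) • L (α + β, i + j))
    (d : B →ₗ[ℂ] B) (hd : ∀ x y : B, d ⁅x, y⁆ = ⁅d x, y⁆ + ⁅x, d y⁆)
    (α : ℤ) (hdeg : HasDegree L d α)
    (i : ℤ)
    (hi : ∀ j : ℕ, (blockFilt L j).map d ≤ blockFilt L (i + j))
    (hmin : ∀ i' : ℤ, (∀ j : ℕ, (blockFilt L j).map d ≤ blockFilt L (i' + j)) → i ≤ i') :
    0 ≤ i := by
  by_contra hcon
  push_neg at hcon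
  -- d kills all L (β, 0)
  have d0 : ∀ β : ℤ, d (L (β, 0)) = 0 := by
    intro β
    have hmem : L (β, 0) ∈ blockFilt L ((0 : ℕ) : ℤ) :=
      Submodule.subset_span ⟨β, 0, by simp, rfl⟩
    have := hi 0 ⟨L (β, 0), hmem, rfl⟩
    rwa [blockFilt_neg L (by push_cast; omega), Submodule.mem_bot] at this
  -- existence of a basis vector not killed by d
  have hex : ∃ p : ℤ × ℕ, d (L p) ≠ 0 := by
    by_contra h
    push_neg at h
    exact hdeg.1 (Module.Basis.ext L (fun p => by simp [h p]))
  obtain ⟨⟨γ₀, k⟩, hdL⟩ := hex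
  have hk : k ≠ 0 := by
    rintro rfl
    exact hdL (d0 γ₀)
  -- support control
  have hsupp : ∀ δ : ℤ, (↑(L.repr (d (L (δ, k)))).support : Set (ℤ × ℕ)) ⊆
      {p : ℤ × ℕ | p.1 = α + δ ∧ (p.2 : ℤ) ≤ i + k} := by
    intro δ
    have hgr : d (L (δ, k)) ∈ blockGrade L (α + δ) :=
      hdeg.2 δ ⟨L (δ, k), Submodule.subset_span ⟨k, rfl⟩, rfl⟩
    have hfl : d (L (δ, k)) ∈ blockFilt L (i + k) :=
      hi k ⟨L (δ, k), Submodule.subset_span ⟨δ, k, le_refl _, rfl⟩, rfl⟩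
    rw [blockGrade_eq_span_image, Module.Basis.mem_span_image] at hgr
    rw [blockFilt_eq_span_image, Module.Basis.mem_span_image] at hfl
    intro p hp
    exact ⟨hgr hp, hfl hp⟩
  -- main vanishing result
  have main : ∀ (m : ℕ), m < k → ∀ δ : ℤ, L.repr (d (L (δ, k))) (α + δ, m) = 0 := by
    intro m hm
    set g : ℤ → ℂ := fun δ => L.repr (d (L (δ, k))) (α + δ, m) with hg
    suffices h : ∀ δ : ℤ, g δ = 0 by
      intro δ; exact h δ
    have hE : ∀ β γ : ℤ,
        ((γ : ℂ) * (q : ℂ) - (β : ℂ) * ((k : ℂ) + (q : ℂ))) * g (β + γ)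
          = (((α : ℂ) + (γ : ℂ)) * (q : ℂ) - (β : ℂ) * ((m : ℂ) + (q : ℂ))) * g γ := by
      intro β γ
      have hb : d ⁅L (β, 0), L (γ, k)⁆ = ⁅L (β, 0), d (L (γ, k))⁆ := by
        rw [hd, d0 β, zero_lie, zero_add]
      rw [hL β γ 0 k, map_smul] at hb
      have h2 := congrArg (fun x => L.repr x (β + (α + γ), m)) hb
      simp only [map_smul, Finsupp.smul_apply, smul_eq_mul] at h2
      rw [repr_bracket_left q L hL β (α + γ) m (d (L (γ, k)))] at h2
      have hidx : β + (α + γ) = α + (β + γ) := by ring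
      rw [hidx] at h2
      simp only [Nat.zero_add] at h2
      simp only [hg]
      push_cast at h2 ⊢
      linear_combination h2
    -- scalar algebra
    have hq0 : (q : ℂ) ≠ 0 := Nat.cast_ne_zero.mpr hq.ne'
    have hK : ((k : ℂ) + (q : ℂ)) ≠ 0 := by
      have : ((k + q : ℕ) : ℂ) ≠ 0 := Nat.cast_ne_zero.mpr (by omega)
      push_cast at this
      exact this
    have e1 := hE 1 0
    have e2 := hE (-1) 0
    have e3 := hE 1 (-1)
    have e4 := hE (-1) 1
    norm_num at e1 e2 e3 e4
    have hA : g 0 * ((α : ℂ) * (q : ℂ)) = 0 := by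
      have h2q : (2 : ℂ) * (q : ℂ) ≠ 0 := mul_ne_zero two_ne_zero hq0
      have hx : ((2 : ℂ) * (q : ℂ)) * (g 0 * ((α : ℂ) * (q : ℂ))) = 0 := by
        linear_combination ((k : ℂ) + (q : ℂ)) * e3
          + ((α : ℂ) * (q : ℂ) - (q : ℂ) - ((m : ℂ) + (q : ℂ))) * e2
          + ((k : ℂ) + (q : ℂ)) * e4
          - ((α : ℂ) * (q : ℂ) + (q : ℂ) + ((m : ℂ) + (q : ℂ))) * e1
      exact (mul_eq_zero.mp hx).resolve_left h2q
    have hC : (((k : ℂ) + (q : ℂ)) * (q : ℂ) + ((k : ℂ) + (q : ℂ)) * ((k : ℂ) + (q : ℂ))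
        - (((m : ℂ) + (q : ℂ)) * (q : ℂ) + ((m : ℂ) + (q : ℂ)) * ((m : ℂ) + (q : ℂ)))) ≠ 0 := by
      have h1 : (((k : ℤ) + q) * q + ((k : ℤ) + q) * ((k : ℤ) + q) : ℤ)
          ≠ (((m : ℤ) + q) * q + ((m : ℤ) + q) * ((m : ℤ) + q)) := by
        have h2 : (m : ℤ) < (k : ℤ) := by exact_mod_cast hm
        have h3 : (0 : ℤ) < (q : ℤ) := by exact_mod_cast hq
        have h4 : (0 : ℤ) ≤ (m : ℤ) := Int.natCast_nonneg m
        nlinarith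
      intro h
      apply h1
      have h5 := sub_eq_zero.mp h
      exact_mod_cast h5
    have hg0 : g 0 = 0 := by
      have h2 : g 0 * (((k : ℂ) + (q : ℂ)) * (q : ℂ) + ((k : ℂ) + (q : ℂ)) * ((k : ℂ) + (q : ℂ))
          - (((m : ℂ) + (q : ℂ)) * (q : ℂ) + ((m : ℂ) + (q : ℂ)) * ((m : ℂ) + (q : ℂ)))) = 0 := by
        linear_combination ((k : ℂ) + (q : ℂ)) * e4
          - ((α : ℂ) * (q : ℂ) + (q : ℂ) + ((m : ℂ) + (q : ℂ))) * e1
          - ((α : ℂ) * (q : ℂ) + (q : ℂ)) * hA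
      exact (mul_eq_zero.mp h2).resolve_right hC
    intro δ
    rcases eq_or_ne δ 0 with rfl | hδ
    · exact hg0
    · have e := hE δ 0
      simp only [add_zero] at e
      rw [hg0, mul_zero] at e
      have e' : ((δ : ℂ) * ((k : ℂ) + (q : ℂ))) * g δ = 0 := by linear_combination -e
      exact (mul_eq_zero.mp e').resolve_left
        (mul_ne_zero (Int.cast_ne_zero.mpr hδ) hK)
  -- conclude d (L (γ₀, k)) = 0, contradiction
  apply hdL
  rw [← (L.repr.map_eq_zero_iff)]
  ext p
  obtain ⟨p1, p2⟩ := p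
  by_cases hp : (p1, p2) ∈ (L.repr (d (L (γ₀, k)))).support
  · obtain ⟨hp1, hp2⟩ := hsupp γ₀ hp
    simp only at hp1 hp2
    subst hp1
    have hmk : p2 < k := by omega
    simpa using main p2 hmk γ₀
  · simpa using Finsupp.notMem_support_iff.mp hp
end

section
/- Let d be a nonzero derivation of B(q) of degree 0, and suppose the minimal integer i with d(B^{[j]}) ⊆ B^{[i+j]} for all j ∈ ℤ_{≥0} equals 0. Then d = ad_u + λ D₀ for some u ∈ B(q) and λ ∈ ℂ, where D₀ is the derivation determined by D₀(L_{β,j}) = j L_{β,j}. -/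
variable {B : Type} [LieRing B] [LieAlgebra ℂ B]

/-- Coordinates of elements of a homogeneous component vanish away from that component. -/
lemma blockGrade_repr (L : Module.Basis (ℤ × ℕ) ℂ B) {α : ℤ} {x : B} (hx : x ∈ blockGrade L α)
    {γ : ℤ} (hγ : γ ≠ α) (k : ℕ) : L.repr x (γ, k) = 0 := by
  have hle : blockGrade L α ≤ LinearMap.ker
      ((Finsupp.lapply ((γ, k) : ℤ × ℕ)).comp (L.repr : B →ₗ[ℂ] ((ℤ × ℕ) →₀ ℂ))) := by
    rw [blockGrade, Submodule.span_le]
    rintro _ ⟨i, rfl⟩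
    simp only [SetLike.mem_coe, LinearMap.mem_ker, LinearMap.comp_apply, LinearEquiv.coe_coe,
      Module.Basis.repr_self, Finsupp.lapply_apply, Finsupp.single_apply]
    rw [if_neg (by simp [Prod.ext_iff]; intro h; exact absurd h.symm hγ)]
  exact hle hx

/-- Coordinates of elements of a filtration step vanish above that step. -/
lemma blockFilt_repr (L : Module.Basis (ℤ × ℕ) ℂ B) {j : ℕ} {x : B} (hx : x ∈ blockFilt L j)
    (γ : ℤ) {k : ℕ} (hk : j < k) : L.repr x (γ, k) = 0 := by
  have hle : blockFilt L (j : ℤ) ≤ LinearMap.ker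
      ((Finsupp.lapply ((γ, k) : ℤ × ℕ)).comp (L.repr : B →ₗ[ℂ] ((ℤ × ℕ) →₀ ℂ))) := by
    rw [blockFilt, Submodule.span_le]
    rintro _ ⟨β, k', hk', rfl⟩
    simp only [SetLike.mem_coe, LinearMap.mem_ker, LinearMap.comp_apply, LinearEquiv.coe_coe,
      Module.Basis.repr_self, Finsupp.lapply_apply, Finsupp.single_apply]
    rw [if_neg (by simp [Prod.ext_iff]; intro _ h; omega)]
  exact hle hx

/-- The coordinates of a bracket with a basis vector on the right. -/
lemma repr_lie_aux' (q : ℕ) (L : Module.Basis (ℤ × ℕ) ℂ B)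
    (hL : ∀ (α β : ℤ) (i j : ℕ),
      ⁅L (α, i), L (β, j)⁆ =
        (((β * ((i : ℤ) + q) - α * ((j : ℤ) + q)) : ℤ) : ℂ) • L (α + β, i + j))
    (x : B) (β : ℤ) (j : ℕ) (γ : ℤ) (k : ℕ) :
    L.repr ⁅x, L (β, j)⁆ (γ, k) =
      (if j ≤ k then (((β * ((k - j : ℕ) + q) - (γ - β) * ((j : ℤ) + q)) : ℤ) : ℂ) else 0) *
        L.repr x (γ - β, k - j) := by
  set c : ℂ := (if j ≤ k then (((β * ((k - j : ℕ) + q) - (γ - β) * ((j : ℤ) + q)) : ℤ) : ℂ) else 0) with hc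
  let F : B →ₗ[ℂ] ℂ :=
    (Finsupp.lapply (γ, k)) ∘ₗ (L.repr : B →ₗ[ℂ] ((ℤ × ℕ) →₀ ℂ)) ∘ₗ
      (-(LieAlgebra.ad ℂ B (L (β, j))))
  let G : B →ₗ[ℂ] ℂ :=
    c • ((Finsupp.lapply (γ - β, k - j)) ∘ₗ (L.repr : B →ₗ[ℂ] ((ℤ × ℕ) →₀ ℂ)))
  have hFG : F = G := by
    apply L.ext
    rintro ⟨α, i⟩
    have hbr : ⁅L (β, j), L (α, i)⁆ =
        (((α * ((j : ℤ) + q) - β * ((i : ℤ) + q)) : ℤ) : ℂ) • L (β + α, j + i) := hL β α j i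
    have hF : F (L (α, i)) = -((((α * ((j : ℤ) + q) - β * ((i : ℤ) + q)) : ℤ) : ℂ) *
        (Finsupp.single ((β + α, j + i) : ℤ × ℕ) (1:ℂ)) (γ, k)) := by
      simp only [F, LinearMap.comp_apply, LinearMap.neg_apply, LieAlgebra.ad_apply, map_neg,
        hbr, map_smul, Module.Basis.repr_self, Finsupp.lapply_apply, Finsupp.neg_apply,
        Finsupp.smul_apply, smul_eq_mul, LinearEquiv.coe_coe]
    have hG : G (L (α, i)) = c * (Finsupp.single ((α, i) : ℤ × ℕ) (1:ℂ)) (γ - β, k - j) := by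
      simp [G, Finsupp.lapply_apply]
    rw [hF, hG]
    rw [Finsupp.single_apply, Finsupp.single_apply]
    by_cases h : ((β + α, j + i) : ℤ × ℕ) = (γ, k)
    · rw [Prod.mk.injEq] at h
      have hjk : j ≤ k := by omega
      have hkj : k - j = i := by omega
      have hgb : γ - β = α := by omega
      rw [if_pos (by rw [Prod.mk.injEq]; omega), if_pos (by rw [Prod.mk.injEq]; exact ⟨hgb.symm, hkj.symm⟩)]
      rw [hc, if_pos hjk, hkj, hgb]
      push_cast
      ring
    · rw [if_neg (by rw [Prod.mk.injEq] at h ⊢; tauto)]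
      by_cases h2 : ((γ - β, k - j) : ℤ × ℕ) = (α, i)
      · rw [Prod.mk.injEq] at h h2
        by_cases hjk : j ≤ k
        · exfalso; omega
        · rw [hc, if_neg hjk]; ring
      · rw [if_neg (by rw [Prod.mk.injEq] at h2 ⊢; tauto)]; ring
  have := congrFun (congrArg (fun (f : B →ₗ[ℂ] ℂ) => (f : B → ℂ)) hFG) x
  simp only [F, G, LinearMap.comp_apply, LinearMap.neg_apply, LieAlgebra.ad_apply,
    LinearMap.smul_apply, Finsupp.lapply_apply, smul_eq_mul, map_neg, Finsupp.coe_neg,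
    Pi.neg_apply, neg_neg, neg_lie, lie_neg] at this
  rw [← lie_skew, map_neg, Finsupp.neg_apply]
  simpa using this

/-- Coordinate form of the derivation identity. -/
lemma key_id' (q : ℕ) (L : Module.Basis (ℤ × ℕ) ℂ B)
    (hL : ∀ (α β : ℤ) (i j : ℕ),
      ⁅L (α, i), L (β, j)⁆ =
        (((β * ((i : ℤ) + q) - α * ((j : ℤ) + q)) : ℤ) : ℂ) • L (α + β, i + j))
    (d : B →ₗ[ℂ] B) (hd : ∀ x y : B, d ⁅x, y⁆ = ⁅d x, y⁆ + ⁅x, d y⁆)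
    (α β : ℤ) (i j : ℕ) (γ : ℤ) (k : ℕ) :
    (((β * ((i : ℤ) + q) - α * ((j : ℤ) + q) : ℤ)) : ℂ) * L.repr (d (L (α + β, i + j))) (γ, k)
      = L.repr ⁅d (L (α, i)), L (β, j)⁆ (γ, k) - L.repr ⁅d (L (β, j)), L (α, i)⁆ (γ, k) := by
  have h1 := hd (L (α, i)) (L (β, j))
  rw [hL α β i j, map_smul, ← lie_skew (L (α, i)) (d (L (β, j)))] at h1
  have h2 := congrArg (fun z => L.repr z (γ, k)) h1
  simp only [map_smul, map_add, map_neg, Finsupp.smul_apply, Finsupp.add_apply,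
    Finsupp.neg_apply, smul_eq_mul] at h2
  rw [h2]; ring

/-- Additivity of diagonal coefficients. -/
lemma diag_add (q : ℕ) (L : Module.Basis (ℤ × ℕ) ℂ B)
    (hL : ∀ (α β : ℤ) (i j : ℕ),
      ⁅L (α, i), L (β, j)⁆ =
        (((β * ((i : ℤ) + q) - α * ((j : ℤ) + q)) : ℤ) : ℂ) • L (α + β, i + j))
    (d : B →ₗ[ℂ] B) (hd : ∀ x y : B, d ⁅x, y⁆ = ⁅d x, y⁆ + ⁅x, d y⁆)
    (α β : ℤ) (i j : ℕ) (hne : (β * ((i : ℤ) + q) - α * ((j : ℤ) + q) : ℤ) ≠ 0) :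
    L.repr (d (L (α + β, i + j))) (α + β, i + j)
      = L.repr (d (L (α, i))) (α, i) + L.repr (d (L (β, j))) (β, j) := by
  have h := key_id' q L hL d hd α β i j (α + β) (i + j)
  have t1 : L.repr ⁅d (L (α, i)), L (β, j)⁆ (α + β, i + j)
      = (((β * ((i : ℤ) + q) - α * ((j : ℤ) + q) : ℤ)) : ℂ) * L.repr (d (L (α, i))) (α, i) := by
    rw [repr_lie_aux' q L hL, if_pos (Nat.le_add_left j i), Nat.add_sub_cancel,
      add_sub_cancel_right]
  have t2 : L.repr ⁅d (L (β, j)), L (α, i)⁆ (α + β, i + j)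
      = (((α * ((j : ℤ) + q) - β * ((i : ℤ) + q) : ℤ)) : ℂ) * L.repr (d (L (β, j))) (β, j) := by
    rw [repr_lie_aux' q L hL, if_pos (Nat.le_add_right i j), Nat.add_sub_cancel_left,
      add_sub_cancel_left]
  rw [t1, t2] at h
  have hC : (((β * ((i : ℤ) + q) - α * ((j : ℤ) + q) : ℤ)) : ℂ) ≠ 0 := Int.cast_ne_zero.mpr hne
  apply mul_left_cancel₀ hC
  push_cast at h ⊢
  linear_combination h

/-- Subdiagonal coefficients vanish. -/
lemma offdiag_zero (q : ℕ) (hq : 0 < q) (L : Module.Basis (ℤ × ℕ) ℂ B)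
    (hL : ∀ (α β : ℤ) (i j : ℕ),
      ⁅L (α, i), L (β, j)⁆ =
        (((β * ((i : ℤ) + q) - α * ((j : ℤ) + q)) : ℤ) : ℂ) • L (α + β, i + j))
    (d : B →ₗ[ℂ] B) (hd : ∀ x y : B, d ⁅x, y⁆ = ⁅d x, y⁆ + ⁅x, d y⁆)
    (α : ℤ) (i k : ℕ) (hk : k < i) : L.repr (d (L (α, i))) (α, k) = 0 := by
  have E2 : ∀ a b : ℤ, ((b * ((i : ℤ) + q) - a * q : ℤ) : ℂ) * L.repr (d (L (a + b, i))) (a + b, k)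
      = ((b * ((k : ℤ) + q) - a * q : ℤ) : ℂ) * L.repr (d (L (a, i))) (a, k) := by
    intro a b
    have h := key_id' q L hL d hd a b i 0 (a + b) k
    rw [Nat.add_zero] at h
    have t1 : L.repr ⁅d (L (a, i)), L (b, 0)⁆ (a + b, k)
        = ((b * ((k : ℤ) + q) - a * ((0 : ℤ) + q) : ℤ) : ℂ) * L.repr (d (L (a, i))) (a, k) := by
      rw [repr_lie_aux' q L hL, if_pos (Nat.zero_le k), Nat.sub_zero, add_sub_cancel_right]
      norm_num
    have t2 : L.repr ⁅d (L (b, 0)), L (a, i)⁆ (a + b, k) = 0 := by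
      rw [repr_lie_aux' q L hL, if_neg (by omega), zero_mul]
    rw [t1, t2, sub_zero] at h
    push_cast at h ⊢
    linear_combination h
  have hq1 : (1 : ℤ) ≤ (q : ℤ) := by exact_mod_cast hq
  have hki : (k : ℤ) < (i : ℤ) := by exact_mod_cast hk
  have h1 := E2 0 1
  have h2 := E2 1 (-1)
  norm_num at h1 h2
  set X := L.repr (d (L (0, i))) ((0 : ℤ), k) with hX
  set Y := L.repr (d (L (1, i))) ((1 : ℤ), k) with hY
  have hfac : (((i : ℤ) + q) * ((i : ℤ) + 2 * q) - ((k : ℤ) + q) * ((k : ℤ) + 2 * q)) ≠ 0 := by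
    nlinarith
  have hX0 : X = 0 := by
    have hz : ((((i : ℤ) + q) * ((i : ℤ) + 2 * q) - ((k : ℤ) + q) * ((k : ℤ) + 2 * q) : ℤ) : ℂ)
        * X = 0 := by
      push_cast
      linear_combination (-((i : ℂ) + q)) * h2 + ((k : ℂ) + 2 * q) * h1
    exact (mul_eq_zero.mp hz).resolve_left (Int.cast_ne_zero.mpr hfac)
  by_cases ha : α = 0
  · rw [ha]; exact hX0
  · have h3 := E2 0 α
    rw [zero_add, zero_mul, sub_zero, sub_zero, ← hX] at h3
    rw [hX0, mul_zero] at h3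
    have hne : ((α * ((i : ℤ) + q) : ℤ) : ℂ) ≠ 0 := by
      rw [Int.cast_ne_zero]
      exact mul_ne_zero ha (by omega)
    rcases mul_eq_zero.mp h3 with h | h
    · exact absurd h hne
    · exact h

/-- Let `d` be a nonzero derivation of the Block type Lie algebra `B(q)` of degree
`0`, and suppose the minimal integer `i` with `d(B^{[j]}) ⊆ B^{[i+j]}` for all
`j ∈ ℤ_{≥0}` equals `0`.  Then `d = ad_u + λ D₀` for some `u ∈ B(q)` and
`λ ∈ ℂ`, where `D₀` is the derivation determined by `D₀(L_{β,j}) = j L_{β,j}`. -/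
theorem block_derivation_degree_zero (q : ℕ) (hq : 0 < q)
    (L : Module.Basis (ℤ × ℕ) ℂ B)
    (hL : ∀ (α β : ℤ) (i j : ℕ),
      ⁅L (α, i), L (β, j)⁆ =
        (((β * ((i : ℤ) + q) - α * ((j : ℤ) + q)) : ℤ) : ℂ) • L (α + β, i + j))
    (d : B →ₗ[ℂ] B) (hd : ∀ x y : B, d ⁅x, y⁆ = ⁅d x, y⁆ + ⁅x, d y⁆)
    (hdeg : HasDegree L d 0)
    (hi : ∀ j : ℕ, (blockFilt L j).map d ≤ blockFilt L (0 + j))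
    (hmin : ∀ i' : ℤ, (∀ j : ℕ, (blockFilt L j).map d ≤ blockFilt L (i' + j)) → 0 ≤ i')
    (D₀ : B →ₗ[ℂ] B)
    (hD₀ : ∀ (β : ℤ) (j : ℕ), D₀ (L (β, j)) = (j : ℂ) • L (β, j)) :
    ∃ (u : B) (lam : ℂ), d = (LieAlgebra.ad ℂ B u : B →ₗ[ℂ] B) + lam • D₀ := by
  classical
  have hq1 : (1 : ℤ) ≤ (q : ℤ) := by exact_mod_cast hq
  have supp1 : ∀ (β : ℤ) (j : ℕ) (γ : ℤ) (k : ℕ), γ ≠ β → L.repr (d (L (β, j))) (γ, k) = 0 := by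
    intro β j γ k hγ
    have h1 : L (β, j) ∈ blockGrade L β := Submodule.subset_span ⟨j, rfl⟩
    have h2 : d (L (β, j)) ∈ blockGrade L (0 + β) := hdeg.2 β (Submodule.mem_map_of_mem h1)
    rw [zero_add] at h2
    exact blockGrade_repr L h2 hγ k
  have supp2 : ∀ (β : ℤ) (j : ℕ) (γ : ℤ) (k : ℕ), j < k → L.repr (d (L (β, j))) (γ, k) = 0 := by
    intro β j γ k hk
    have h1 : L (β, j) ∈ blockFilt L (j : ℤ) := Submodule.subset_span ⟨β, j, le_refl _, rfl⟩
    have h2 : d (L (β, j)) ∈ blockFilt L (0 + (j : ℤ)) := hi j (Submodule.mem_map_of_mem h1)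
    rw [zero_add] at h2
    exact blockFilt_repr L h2 γ hk
  set f : ℤ → ℕ → ℂ := fun β j => L.repr (d (L (β, j))) (β, j) with hf
  have hF : ∀ (α β : ℤ) (i j : ℕ), (β * ((i : ℤ) + q) - α * ((j : ℤ) + q) : ℤ) ≠ 0 →
      f (α + β) (i + j) = f α i + f β j := fun α β i j hne => diag_add q L hL d hd α β i j hne
  have hf00 : f 0 0 = 0 := by
    have h00 := hF 1 0 0 0 (by intro hcon; simp at hcon; omega)
    norm_num at h00
    linear_combination h00
  have hm1 : f 0 0 = f (-1) 0 + f 1 0 := by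
    have := hF (-1) 1 0 0 (by intro hcon; simp at hcon; omega)
    norm_num at this
    exact this
  have hfm1 : f (-1) 0 = -(f 1 0) := by linear_combination hf00 - hm1
  have h11 : f 1 1 = f 1 0 + f 0 1 := by
    have := hF 1 0 0 1 (by intro hcon; simp at hcon; omega)
    norm_num at this
    exact this
  have hstep1 : ∀ α : ℤ, f (α + 1) 1 = f α 0 + f 1 1 := by
    intro α
    have hcond : (1 * ((0 : ℤ) + q) - α * ((1 : ℤ) + q) : ℤ) ≠ 0 := by
      intro hcon
      rcases lt_trichotomy α 0 with h | h | h
      · nlinarith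
      · rw [h] at hcon; simp at hcon; omega
      · nlinarith
    have := hF α 1 0 1 hcond
    norm_num at this
    exact this
  have hstepi : ∀ α : ℤ, α ≠ 0 → ∀ i : ℕ, f α (i + 1) = f α i + f 0 1 := by
    intro α hα i
    have hcond : (0 * ((i : ℤ) + q) - α * ((1 : ℤ) + q) : ℤ) ≠ 0 := by
      simp only [zero_mul, zero_sub, neg_ne_zero]
      exact mul_ne_zero hα (by omega)
    have := hF α 0 i 1 hcond
    norm_num at this
    exact this
  have hα : ∀ α : ℤ, f (α + 1) 0 = f α 0 + f 1 0 := by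
    intro α
    by_cases hz : α + 1 = 0
    · have hα1 : α = -1 := by omega
      rw [hz, hα1, hf00, hfm1]; ring
    · have e1 := hstepi (α + 1) hz 0
      norm_num at e1
      have e2 := hstep1 α
      linear_combination e2 - e1 + h11
  have hα0 : ∀ α : ℤ, f α 0 = f 1 0 * α := by
    intro α
    induction α using Int.induction_on with
    | zero => simpa using hf00
    | succ n ih =>
        have := hα n
        push_cast at ih ⊢
        linear_combination this + ih
    | pred n ih =>
        have := hα (-(n : ℤ) - 1)
        rw [show (-(n : ℤ) - 1 + 1) = -(n : ℤ) by ring] at this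
        push_cast at ih ⊢
        linear_combination ih - this
  have hfi : ∀ α : ℤ, α ≠ 0 → ∀ i : ℕ, f α i = f 1 0 * α + f 0 1 * i := by
    intro α hα' i
    induction i with
    | zero => simpa using hα0 α
    | succ n ih =>
        have := hstepi α hα' n
        push_cast at ih ⊢
        linear_combination this + ih
  have hf0 : ∀ i : ℕ, f 0 i = f 0 1 * i := by
    intro i
    have hthis := hF (-1) 1 0 i (by intro hcon; simp at hcon; omega)
    norm_num at hthis
    have h1i := hfi 1 one_ne_zero i
    linear_combination hthis + h1i + hfm1
  have hfall : ∀ (β : ℤ) (j : ℕ), f β j = f 1 0 * β + f 0 1 * j := by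
    intro β j
    by_cases hb : β = 0
    · rw [hb]; push_cast; rw [hf0 j]; ring
    · exact hfi β hb j
  have hdL : ∀ (β : ℤ) (j : ℕ), d (L (β, j)) = (f 1 0 * β + f 0 1 * j) • L (β, j) := by
    intro β j
    apply L.repr.injective
    rw [map_smul, Module.Basis.repr_self]
    ext p
    obtain ⟨γ, k⟩ := p
    rw [Finsupp.smul_apply, Finsupp.single_apply, smul_eq_mul]
    by_cases hγ : γ = β
    · subst hγ
      rcases lt_trichotomy k j with h | h | h
      · rw [offdiag_zero q hq L hL d hd γ j k h,
          if_neg (by rw [Prod.mk.injEq]; rintro ⟨-, h2⟩; omega), mul_zero]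
      · rw [h, if_pos rfl, mul_one]
        exact hfall γ j
      · rw [supp2 γ j γ k h, if_neg (by rw [Prod.mk.injEq]; rintro ⟨-, h2⟩; omega), mul_zero]
    · rw [supp1 β j γ k hγ,
        if_neg (by rw [Prod.mk.injEq]; rintro ⟨h1, -⟩; exact hγ h1.symm), mul_zero]
  refine ⟨(f 1 0 / q) • L (0, 0), f 0 1, ?_⟩
  apply L.ext
  rintro ⟨β, j⟩
  have hqc : (q : ℂ) ≠ 0 := Nat.cast_ne_zero.mpr hq.ne'
  rw [hdL β j, LinearMap.add_apply, LinearMap.smul_apply, hD₀, LieAlgebra.ad_apply, smul_lie,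
    hL 0 β 0 j]
  simp only [zero_add, Nat.add_zero, zero_mul, sub_zero]
  rw [smul_smul, smul_smul, ← add_smul]
  congr 1
  push_cast
  field_simp
  ring
end

section
/- For every derivation d of B(q) of degree α, there exists i ∈ ℤ_{≥0} such that d(B^{[j]}) ⊆ B^{[i+j]} for all j ∈ ℤ_{≥0}. -/
variable {B : Type} [LieRing B] [LieAlgebra ℂ B]

lemma filt_mono (L : Module.Basis (ℤ × ℕ) ℂ B) {a b : ℤ} (h : a ≤ b) :
    blockFilt L a ≤ blockFilt L b := by
  apply Submodule.span_mono
  rintro x ⟨β, k, hk, rfl⟩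
  exact ⟨β, k, hk.trans h, rfl⟩

lemma basis_mem_filt (L : Module.Basis (ℤ × ℕ) ℂ B) {β : ℤ} {k : ℕ} {j : ℤ} (h : (k:ℤ) ≤ j) :
    L (β, k) ∈ blockFilt L j :=
  Submodule.subset_span ⟨β, k, h, rfl⟩

lemma exists_filt (L : Module.Basis (ℤ × ℕ) ℂ B) (x : B) : ∃ n : ℕ, x ∈ blockFilt L ((n:ℤ)) := by
  refine ⟨((L.repr x).support.image fun p => p.2).sup id, ?_⟩
  have h2 : Submodule.span ℂ (⇑L '' ↑(L.repr x).support) ≤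
      blockFilt L (((((L.repr x).support.image fun p => p.2).sup id : ℕ) : ℤ)) := by
    rw [Submodule.span_le]
    rintro y ⟨p, hp, rfl⟩
    exact basis_mem_filt (β := p.1) (k := p.2) L
      (by exact_mod_cast Finset.le_sup (f := id) (Finset.mem_image_of_mem _ hp))
  exact h2 (Module.Basis.mem_span_repr_support L x)

lemma lie_filt (q : ℕ) (L : Module.Basis (ℤ × ℕ) ℂ B)
    (hL : ∀ (α β : ℤ) (i j : ℕ),
      ⁅L (α, i), L (β, j)⁆ =
        (((β * ((i : ℤ) + q) - α * ((j : ℤ) + q)) : ℤ) : ℂ) • L (α + β, i + j))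
    {n : ℤ} (p : ℤ × ℕ) {x : B} (hx : x ∈ blockFilt L n) :
    ⁅L p, x⁆ ∈ blockFilt L (n + p.2) := by
  have hmap : Submodule.map (LieAlgebra.ad ℂ B (L p)) (blockFilt L n) ≤ blockFilt L (n + p.2) := by
    rw [blockFilt, Submodule.map_span, Submodule.span_le]
    rintro y ⟨x, ⟨β, k, hk, rfl⟩, rfl⟩
    simp only [LieAlgebra.ad_apply, SetLike.mem_coe]
    rw [hL p.1 β p.2 k]
    exact Submodule.smul_mem _ _ (basis_mem_filt L (by push_cast; omega))
  exact hmap ⟨x, hx, rfl⟩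

lemma lie_filt_right (q : ℕ) (L : Module.Basis (ℤ × ℕ) ℂ B)
    (hL : ∀ (α β : ℤ) (i j : ℕ),
      ⁅L (α, i), L (β, j)⁆ =
        (((β * ((i : ℤ) + q) - α * ((j : ℤ) + q)) : ℤ) : ℂ) • L (α + β, i + j))
    {n : ℤ} (p : ℤ × ℕ) {x : B} (hx : x ∈ blockFilt L n) :
    ⁅x, L p⁆ ∈ blockFilt L (n + p.2) := by
  rw [← lie_skew]
  exact Submodule.neg_mem _ (lie_filt q L hL p hx)

lemma block_key (q : ℕ) (L : Module.Basis (ℤ × ℕ) ℂ B)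
    (hL : ∀ (α β : ℤ) (i j : ℕ),
      ⁅L (α, i), L (β, j)⁆ =
        (((β * ((i : ℤ) + q) - α * ((j : ℤ) + q)) : ℤ) : ℂ) • L (α + β, i + j))
    (d : B →ₗ[ℂ] B) (hd : ∀ x y : B, d ⁅x, y⁆ = ⁅d x, y⁆ + ⁅x, d y⁆)
    (a b c : ℤ × ℕ) (z : ℤ) (hz : z ≠ 0) (heq : ⁅L a, L b⁆ = ((z : ℤ) : ℂ) • L c)
    (m : ℤ) (ha : d (L a) ∈ blockFilt L (m - b.2)) (hb : d (L b) ∈ blockFilt L (m - a.2)) :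
    d (L c) ∈ blockFilt L m := by
  have hz' : ((z : ℤ) : ℂ) ≠ 0 := Int.cast_ne_zero.mpr hz
  have hc : L c = ((z : ℤ) : ℂ)⁻¹ • ⁅L a, L b⁆ := by
    rw [heq, smul_smul, inv_mul_cancel₀ hz', one_smul]
  rw [hc, map_smul]
  refine Submodule.smul_mem _ _ ?_
  rw [hd]
  refine Submodule.add_mem _ ?_ ?_
  · have h := lie_filt_right q L hL b ha
    rwa [show m - (b.2 : ℤ) + b.2 = m by ring] at h
  · have h := lie_filt q L hL a hb
    rwa [show m - (a.2 : ℤ) + a.2 = m by ring] at h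

/-- For every derivation `d` of the Block type Lie algebra `B(q)` of degree `α`,
there exists `i ∈ ℤ_{≥0}` such that `d(B^{[j]}) ⊆ B^{[i+j]}` for all
`j ∈ ℤ_{≥0}`. -/
theorem block_derivation_filtration_shift (q : ℕ) (hq : 0 < q)
    (L : Module.Basis (ℤ × ℕ) ℂ B)
    (hL : ∀ (α β : ℤ) (i j : ℕ),
      ⁅L (α, i), L (β, j)⁆ =
        (((β * ((i : ℤ) + q) - α * ((j : ℤ) + q)) : ℤ) : ℂ) • L (α + β, i + j))
    (d : B →ₗ[ℂ] B) (hd : ∀ x y : B, d ⁅x, y⁆ = ⁅d x, y⁆ + ⁅x, d y⁆)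
    (α : ℤ) (hdeg : HasDegree L d α) :
    ∃ i : ℕ, ∀ j : ℕ, (blockFilt L j).map d ≤ blockFilt L ((i : ℤ) + j) := by
  obtain ⟨n1, h1⟩ := exists_filt L (d (L (-2, 0)))
  obtain ⟨n2, h2⟩ := exists_filt L (d (L (-1, 0)))
  obtain ⟨n3, h3⟩ := exists_filt L (d (L (0, 0)))
  obtain ⟨n4, h4⟩ := exists_filt L (d (L (1, 0)))
  obtain ⟨n5, h5⟩ := exists_filt L (d (L (2, 0)))
  obtain ⟨n6, h6⟩ := exists_filt L (d (L (0, 1)))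
  set N : ℕ := n1 + n2 + n3 + n4 + n5 + n6 with hNdef
  have hq' : (1 : ℤ) ≤ q := by exact_mod_cast hq
  have hN1 : d (L (-2, 0)) ∈ blockFilt L N := filt_mono L (by push_cast; omega) h1
  have hN2 : d (L (-1, 0)) ∈ blockFilt L N := filt_mono L (by push_cast; omega) h2
  have hN3 : d (L (0, 0)) ∈ blockFilt L N := filt_mono L (by push_cast; omega) h3
  have hN4 : d (L (1, 0)) ∈ blockFilt L N := filt_mono L (by push_cast; omega) h4
  have hN5 : d (L (2, 0)) ∈ blockFilt L N := filt_mono L (by push_cast; omega) h5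
  have hN6 : d (L (0, 1)) ∈ blockFilt L N := filt_mono L (by push_cast; omega) h6
  clear h1 h2 h3 h4 h5 h6
  -- step A upward: all β ≥ 2
  have hup : ∀ b : ℕ, d (L (2 + (b : ℤ), 0)) ∈ blockFilt L N := by
    intro b
    induction b with
    | zero => simpa using hN5
    | succ b ih =>
      have hz : (1 * ((0:ℤ) + q) - (2 + b) * ((0:ℤ) + q)) ≠ 0 := by
        have : (1 * ((0:ℤ) + q) - (2 + b) * ((0:ℤ) + q)) = -((1 + b) * q) := by ring
        rw [this]
        have hb0 : (0:ℤ) ≤ (b:ℤ) := Int.natCast_nonneg b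
        intro h
        nlinarith
      have hkey := block_key q L hL d hd (2 + (b:ℤ), 0) (1, 0) (2 + (b:ℤ) + 1, 0) _ hz
        (hL (2 + (b:ℤ)) 1 0 0) N (by simpa using ih) (by simpa using hN4)
      have hc : (((b + 1 : ℕ)) : ℤ) = (b:ℤ) + 1 := by push_cast; ring
      have h2 : (2 : ℤ) + ((b:ℤ) + 1) = 2 + (b:ℤ) + 1 := by ring
      rw [hc, h2]
      exact hkey
  -- step A downward: all β ≤ -2
  have hdown : ∀ b : ℕ, d (L (-2 - (b : ℤ), 0)) ∈ blockFilt L N := by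
    intro b
    induction b with
    | zero => simpa using hN1
    | succ b ih =>
      have hz : ((-1:ℤ) * ((0:ℤ) + q) - (-2 - b) * ((0:ℤ) + q)) ≠ 0 := by
        have : ((-1:ℤ) * ((0:ℤ) + q) - (-2 - b) * ((0:ℤ) + q)) = (1 + b) * q := by ring
        rw [this]
        have hb0 : (0:ℤ) ≤ (b:ℤ) := Int.natCast_nonneg b
        intro h
        nlinarith
      have hkey := block_key q L hL d hd (-2 - (b:ℤ), 0) (-1, 0) (-2 - (b:ℤ) + -1, 0) _ hz
        (hL (-2 - (b:ℤ)) (-1) 0 0) N (by simpa using ih) (by simpa using hN2)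
      have hc : (((b + 1 : ℕ)) : ℤ) = (b:ℤ) + 1 := by push_cast; ring
      have h2 : (-2 : ℤ) - ((b:ℤ) + 1) = -2 - (b:ℤ) + -1 := by ring
      rw [hc, h2]
      exact hkey
  have hA : ∀ β : ℤ, d (L (β, 0)) ∈ blockFilt L N := by
    intro β
    by_cases hg : 2 ≤ β
    · obtain ⟨b, rfl⟩ : ∃ b : ℕ, β = 2 + (b : ℤ) := ⟨(β - 2).toNat, by omega⟩
      exact hup b
    by_cases hl : β ≤ -2
    · obtain ⟨b, rfl⟩ : ∃ b : ℕ, β = -2 - (b : ℤ) := ⟨(-2 - β).toNat, by omega⟩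
      exact hdown b
    interval_cases β
    · exact hN2
    · exact hN3
    · exact hN4
  -- step B: induction on k
  have hB : ∀ k : ℕ, ∀ β : ℤ, d (L (β, k)) ∈ blockFilt L ((N : ℤ) + k) := by
    intro k
    induction k with
    | zero => intro β; simpa using hA β
    | succ k ih =>
      have hne : ∀ β : ℤ, β ≠ 0 → d (L (β, k + 1)) ∈ blockFilt L ((N : ℤ) + (k + 1)) := by
        intro β hβ
        have hz : (β * ((1:ℤ) + q) - 0 * ((k:ℤ) + q)) ≠ 0 := by
          have : (β * ((1:ℤ) + q) - 0 * ((k:ℤ) + q)) = β * (1 + q) := by ring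
          rw [this]
          exact mul_ne_zero hβ (by omega)
        have hkey := block_key q L hL d hd (0, 1) (β, k) (0 + β, 1 + k) _ hz
          (hL 0 β 1 k) ((N : ℤ) + (k + 1))
          (filt_mono L (by push_cast; omega) hN6)
          (by
            refine filt_mono L ?_ (ih β)
            push_cast; omega)
        have h0 : (0 : ℤ) + β = β := by ring
        have h1 : 1 + k = k + 1 := by omega
        rwa [h0, h1] at hkey
      intro β
      by_cases hβ : β = 0
      · subst hβ
        have hz : ((1:ℤ) * ((0:ℤ) + q) - (-1) * (((k + 1 : ℕ) : ℤ) + q)) ≠ 0 := by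
          push_cast; omega
        have hkey := block_key q L hL d hd (-1, 0) (1, k + 1) (-1 + 1, 0 + (k + 1)) _ hz
          (hL (-1) 1 0 (k + 1)) ((N : ℤ) + (k + 1))
          (by
            refine filt_mono L ?_ (hA (-1))
            push_cast; omega)
          (by simpa using hne 1 one_ne_zero)
        have h0 : (-1 : ℤ) + 1 = 0 := by ring
        have h1 : 0 + (k + 1) = k + 1 := by omega
        rwa [h0, h1] at hkey
      · exact hne β hβ
  refine ⟨N, fun j => ?_⟩
  rw [blockFilt, Submodule.map_span, Submodule.span_le]
  rintro y ⟨x, ⟨β, k, hk, rfl⟩, rfl⟩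
  exact filt_mono L (by push_cast at hk ⊢; omega) (hB k β)
end

section
/- For every derivation d of B(q) there exists a family (d_α)_{α∈ℤ} of derivations of B(q), where each d_α is either zero or of degree α, such that d_α = 0 for all but finitely many α and d = Σ_{α∈ℤ} d_α. -/
variable {B : Type} [LieRing B] [LieAlgebra ℂ B]

namespace BlockAux

/-- Projection onto the homogeneous component of degree `γ`. -/
noncomputable def Pj (L : Module.Basis (ℤ × ℕ) ℂ B) (γ : ℤ) : B →ₗ[ℂ] B :=
  L.constr ℂ (fun p => if p.1 = γ then L p else 0)

lemma Pj_basis (L : Module.Basis (ℤ × ℕ) ℂ B) (γ β : ℤ) (i : ℕ) :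
    Pj L γ (L (β, i)) = if β = γ then L (β, i) else 0 := by
  simp [Pj, Module.Basis.constr_basis]

lemma Pj_mem (L : Module.Basis (ℤ × ℕ) ℂ B) (γ : ℤ) (z : B) : Pj L γ z ∈ blockGrade L γ := by
  rw [Pj, Module.Basis.constr_apply, Finsupp.sum]
  refine Submodule.sum_mem _ fun p _ => Submodule.smul_mem _ _ ?_
  obtain ⟨a, b⟩ := p
  by_cases h : a = γ
  · subst h
    simp only [if_pos rfl]
    exact Submodule.subset_span ⟨b, rfl⟩
  · simp only [h, if_false]
    exact Submodule.zero_mem _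

lemma Pj_eq_zero (L : Module.Basis (ℤ × ℕ) ℂ B) (γ : ℤ) (z : B)
    (h : γ ∉ (L.repr z).support.image Prod.fst) : Pj L γ z = 0 := by
  rw [Pj, Module.Basis.constr_apply, Finsupp.sum]
  refine Finset.sum_eq_zero fun p hp => ?_
  have : p.1 ≠ γ := fun he => h (Finset.mem_image.2 ⟨p, hp, he⟩)
  simp [this]

lemma sum_Pj (L : Module.Basis (ℤ × ℕ) ℂ B) (z : B) (T : Finset ℤ)
    (h : ∀ γ ∉ T, Pj L γ z = 0) : ∑ γ ∈ T, Pj L γ z = z := by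
  classical
  set U : Finset ℤ := (L.repr z).support.image Prod.fst with hU
  have hTU : ∑ γ ∈ T, Pj L γ z = ∑ γ ∈ T ∪ U, Pj L γ z :=
    Finset.sum_subset Finset.subset_union_left fun γ _ hγ => h γ hγ
  have hUU : ∑ γ ∈ U, Pj L γ z = ∑ γ ∈ T ∪ U, Pj L γ z :=
    Finset.sum_subset Finset.subset_union_right fun γ _ hγ => Pj_eq_zero L γ z hγ
  rw [hTU, ← hUU]
  -- now show the full sum over U recovers z
  have hexp : ∀ γ, Pj L γ z = ∑ p ∈ (L.repr z).support, (L.repr z) p • (if p.1 = γ then L p else 0) := by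
    intro γ; rw [Pj, Module.Basis.constr_apply, Finsupp.sum]
  calc ∑ γ ∈ U, Pj L γ z
      = ∑ γ ∈ U, ∑ p ∈ (L.repr z).support, (L.repr z) p • (if p.1 = γ then L p else 0) := by
        simp only [hexp]
    _ = ∑ p ∈ (L.repr z).support, ∑ γ ∈ U, (if p.1 = γ then (L.repr z) p • L p else 0) := by
        rw [Finset.sum_comm]; congr 1; ext p; congr 1; ext γ
        by_cases h : p.1 = γ <;> simp [h]
    _ = ∑ p ∈ (L.repr z).support, (L.repr z) p • L p := by
        refine Finset.sum_congr rfl fun p hp => ?_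
        rw [Finset.sum_ite_eq U p.1 (fun _ => (L.repr z) p • L p),
          if_pos (Finset.mem_image.2 ⟨p, hp, rfl⟩)]
    _ = z := by
        have := L.linearCombination_repr z
        rwa [Finsupp.linearCombination_apply, Finsupp.sum] at this

/-- Right multiplication (bracket) by `y` as a linear map. -/
noncomputable def rb (y : B) : B →ₗ[ℂ] B where
  toFun z := ⁅z, y⁆
  map_add' a b := add_lie a b y
  map_smul' c a := smul_lie c a y

/-- Left multiplication (bracket) by `x` as a linear map. -/
noncomputable def lb (x : B) : B →ₗ[ℂ] B where
  toFun z := ⁅x, z⁆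
  map_add' a b := lie_add x a b
  map_smul' c a := lie_smul c x a

variable (q : ℕ)

lemma Pj_lie_right (L : Module.Basis (ℤ × ℕ) ℂ B)
    (hL : ∀ (α β : ℤ) (i j : ℕ),
      ⁅L (α, i), L (β, j)⁆ =
        (((β * ((i : ℤ) + q) - α * ((j : ℤ) + q)) : ℤ) : ℂ) • L (α + β, i + j))
    (δ γ : ℤ) (j : ℕ) (z : B) :
    Pj L δ ⁅z, L (γ, j)⁆ = ⁅Pj L (δ - γ) z, L (γ, j)⁆ := by
  have key : (Pj L δ) ∘ₗ rb (L (γ, j)) = rb (L (γ, j)) ∘ₗ Pj L (δ - γ) := by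
    refine L.ext fun p => ?_
    obtain ⟨β, i⟩ := p
    simp only [LinearMap.comp_apply, rb, LinearMap.coe_mk, AddHom.coe_mk, Pj_basis]
    rw [hL β γ i j, map_smul, Pj_basis]
    by_cases h : β = δ - γ
    · rw [if_pos h, if_pos (by omega), hL β γ i j]
    · rw [if_neg h, if_neg (by omega), smul_zero, zero_lie]
  exact LinearMap.congr_fun key z

lemma Pj_lie_left (L : Module.Basis (ℤ × ℕ) ℂ B)
    (hL : ∀ (α β : ℤ) (i j : ℕ),
      ⁅L (α, i), L (β, j)⁆ =
        (((β * ((i : ℤ) + q) - α * ((j : ℤ) + q)) : ℤ) : ℂ) • L (α + β, i + j))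
    (δ β : ℤ) (i : ℕ) (z : B) :
    Pj L δ ⁅L (β, i), z⁆ = ⁅L (β, i), Pj L (δ - β) z⁆ := by
  have key : (Pj L δ) ∘ₗ lb (L (β, i)) = lb (L (β, i)) ∘ₗ Pj L (δ - β) := by
    refine L.ext fun p => ?_
    obtain ⟨γ, j⟩ := p
    simp only [LinearMap.comp_apply, lb, LinearMap.coe_mk, AddHom.coe_mk, Pj_basis]
    rw [hL β γ i j, map_smul, Pj_basis]
    by_cases h : γ = δ - β
    · rw [if_pos h, if_pos (by omega), hL β γ i j]
    · rw [if_neg h, if_neg (by omega), smul_zero, lie_zero]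
  exact LinearMap.congr_fun key z

lemma lie00_Pj (L : Module.Basis (ℤ × ℕ) ℂ B)
    (hL : ∀ (α β : ℤ) (i j : ℕ),
      ⁅L (α, i), L (β, j)⁆ =
        (((β * ((i : ℤ) + q) - α * ((j : ℤ) + q)) : ℤ) : ℂ) • L (α + β, i + j))
    (γ : ℤ) (z : B) :
    ⁅L (0, 0), Pj L γ z⁆ = ((γ * q : ℤ) : ℂ) • Pj L γ z := by
  have key : lb (L ((0 : ℤ), (0 : ℕ))) ∘ₗ Pj L γ = ((γ * q : ℤ) : ℂ) • Pj L γ := by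
    refine L.ext fun p => ?_
    obtain ⟨β, i⟩ := p
    simp only [LinearMap.comp_apply, lb, LinearMap.coe_mk, AddHom.coe_mk,
      LinearMap.smul_apply, Pj_basis]
    by_cases h : β = γ
    · subst h
      rw [if_pos rfl, hL 0 β 0 i]
      norm_num
    · rw [if_neg h, lie_zero, smul_zero]
  exact LinearMap.congr_fun key z

end BlockAux

open BlockAux in
/-- For every derivation `d` of the Block type Lie algebra `B(q)` there is a family
`(d_α)_{α ∈ ℤ}` of derivations, each either zero or of degree `α`, such that
`d_α = 0` for all but finitely many `α` and `d = Σ_α d_α`. -/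
theorem block_derivation_decomposition (q : ℕ) (hq : 0 < q)
    (L : Module.Basis (ℤ × ℕ) ℂ B)
    (hL : ∀ (α β : ℤ) (i j : ℕ),
      ⁅L (α, i), L (β, j)⁆ =
        (((β * ((i : ℤ) + q) - α * ((j : ℤ) + q)) : ℤ) : ℂ) • L (α + β, i + j))
    (d : B →ₗ[ℂ] B) (hd : ∀ x y : B, d ⁅x, y⁆ = ⁅d x, y⁆ + ⁅x, d y⁆) :
    ∃ D : ℤ → (B →ₗ[ℂ] B),
      (∀ α : ℤ, ∀ x y : B, D α ⁅x, y⁆ = ⁅D α x, y⁆ + ⁅x, D α y⁆) ∧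
      (∀ α : ℤ, D α = 0 ∨ HasDegree L (D α) α) ∧
      ∃ S : Finset ℤ, (∀ α ∉ S, D α = 0) ∧ d = ∑ α ∈ S, D α := by
  classical
  set w : B := d (L (0, 0)) with hw
  set S : Finset ℤ := insert 0 ((L.repr w).support.image Prod.fst) with hS
  set D : ℤ → B →ₗ[ℂ] B :=
    fun α => L.constr ℂ (fun p => Pj L (α + p.1) (d (L p))) with hD
  have hDb : ∀ (α β : ℤ) (i : ℕ), D α (L (β, i)) = Pj L (α + β) (d (L (β, i))) := by
    intro α β i
    simp [hD, Module.Basis.constr_basis]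
  -- Key vanishing: components of d outside the support of d(L₀₀) vanish.
  have hvan : ∀ α : ℤ, α ≠ 0 → Pj L α w = 0 →
      ∀ (β : ℤ) (i : ℕ), Pj L (α + β) (d (L (β, i))) = 0 := by
    intro α hα hwα β i
    rw [hw] at hwα
    have h1 : d ⁅L ((0 : ℤ), (0 : ℕ)), L (β, i)⁆
        = ⁅d (L (0, 0)), L (β, i)⁆ + ⁅L (0, 0), d (L (β, i))⁆ := hd _ _
    have h2 := congrArg (Pj L (α + β)) h1
    rw [map_add, Pj_lie_right q L hL (α + β) β i,
      Pj_lie_left q L hL (α + β) 0 0,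
      show α + β - β = α by ring, hwα, zero_lie, zero_add,
      lie00_Pj q L hL (α + β - 0),
      show α + β - 0 = α + β by ring] at h2
    have h1' : Pj L (α + β) (d ⁅L ((0 : ℤ), (0 : ℕ)), L (β, i)⁆)
        = (((β * q : ℤ)) : ℂ) • Pj L (α + β) (d (L (β, i))) := by
      rw [hL 0 β 0 i, map_smul, map_smul]
      norm_num
    rw [h1'] at h2
    set v := Pj L (α + β) (d (L (β, i))) with hv
    have h3 : ((((β * q : ℤ)) : ℂ) - (((α + β) * q : ℤ) : ℂ)) • v = 0 := by
      rw [sub_smul, h2, sub_self]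
    have hc : ((((β * q : ℤ)) : ℂ) - (((α + β) * q : ℤ) : ℂ)) = -((α : ℂ) * q) := by
      push_cast; ring
    rw [hc] at h3
    have hne : -((α : ℂ) * (q : ℂ)) ≠ 0 := by
      refine neg_ne_zero.2 (mul_ne_zero ?_ ?_)
      · exact_mod_cast hα
      · exact_mod_cast hq.ne'
    rcases smul_eq_zero.1 h3 with h | h
    · exact absurd h hne
    · exact h
  have hvanS : ∀ α ∉ S, ∀ (β : ℤ) (i : ℕ), Pj L (α + β) (d (L (β, i))) = 0 := by
    intro α hα β i
    have hα0 : α ≠ 0 := fun h => hα (by simp [hS, h])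
    have hαim : α ∉ (L.repr w).support.image Prod.fst :=
      fun h => hα (by simp [hS, h])
    exact hvan α hα0 (Pj_eq_zero L α w hαim) β i
  refine ⟨D, ?_, ?_, S, ?_, ?_⟩
  · -- each D α is a derivation
    intro α x y
    set br : B →ₗ[ℂ] B →ₗ[ℂ] B :=
      LinearMap.mk₂ ℂ (fun x y => ⁅x, y⁆) add_lie smul_lie lie_add lie_smul with hbr
    have key : br.compr₂ (D α) = br ∘ₗ D α + br.compl₂ (D α) := by
      refine LinearMap.ext_basis L L fun p r => ?_
      obtain ⟨β, i⟩ := p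
      obtain ⟨γ, j⟩ := r
      simp only [LinearMap.compr₂_apply, LinearMap.add_apply, LinearMap.comp_apply,
        LinearMap.compl₂_apply, hbr, LinearMap.mk₂_apply]
      rw [hL β γ i j, map_smul, hDb α (β + γ) (i + j), hDb α β i, hDb α γ j]
      rw [show α + β = α + β + γ - γ by ring, ← Pj_lie_right q L hL (α + β + γ) γ j]
      rw [show α + γ = α + β + γ - β by ring, ← Pj_lie_left q L hL (α + β + γ) β i]
      rw [← map_add, ← hd, hL β γ i j, map_smul, map_smul]
      rw [show α + β + γ = α + (β + γ) by ring]
    have := congrArg (fun F : B →ₗ[ℂ] B →ₗ[ℂ] B => F x y) key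
    simpa only [LinearMap.compr₂_apply, LinearMap.add_apply, LinearMap.comp_apply,
      LinearMap.compl₂_apply, hbr, LinearMap.mk₂_apply] using this
  · -- each D α is zero or of degree α
    intro α
    by_cases h0 : D α = 0
    · exact Or.inl h0
    · refine Or.inr ⟨h0, fun β => ?_⟩
      rw [blockGrade, Submodule.map_span, Submodule.span_le]
      rintro _ ⟨_, ⟨i, rfl⟩, rfl⟩
      rw [SetLike.mem_coe, hDb α β i]
      exact Pj_mem L (α + β) _
  · -- D α = 0 outside S
    intro α hα
    refine L.ext fun p => ?_
    obtain ⟨β, i⟩ := p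
    rw [hDb α β i, hvanS α hα β i, LinearMap.zero_apply]
  · -- d = ∑ α ∈ S, D α
    refine L.ext fun p => ?_
    obtain ⟨β, i⟩ := p
    rw [LinearMap.coe_sum, Finset.sum_apply]
    have hsum : ∑ α ∈ S, D α (L (β, i)) = ∑ γ ∈ S.image (· + β), Pj L γ (d (L (β, i))) := by
      rw [Finset.sum_image (by intro a _ b _ h; exact add_right_cancel h)]
      exact Finset.sum_congr rfl fun α _ => hDb α β i
    rw [hsum, sum_Pj L (d (L (β, i))) (S.image (· + β)) ?_]
    intro γ hγ
    have : γ - β ∉ S := by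
      intro h
      exact hγ (Finset.mem_image.2 ⟨γ - β, h, by ring⟩)
    have := hvanS (γ - β) this β i
    rwa [show γ - β + β = γ by ring] at this
end
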